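/- arXiv:1712.03758 — 8 statements merged into one kernel-verified Lean document; each statement's English description precedes it below -/
import Mathlib

section
/- With N = r q_k + q_{k-1} + s as in the three distance theorem setup, define N_A = N + 1 - q_k, N_B = s + 1, N_C = q_k - s - 1, δ_A = |D_k|, δ_B = |D_{k+1}| + (a_{k+1} - r)|D_k|, δ_C = δ_A + δ_B. Then N_A δ_A + N_B δ_B + N_C δ_C = 1. -/
/-- With the three distance theorem data, N_A δ_A + N_B δ_B + N_C δ_C = 1, where
N_A = N + 1 - q_k, N_B = s + 1, N_C = q_k - s - 1, δ_A = |D_k|,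
δ_B = |D_{k+1}| + (a_{k+1} - r)|D_k|, δ_C = δ_A + δ_B. -/
theorem stmt_7
    (α : ℝ) (hirr : Irrational α)
    (a p q : ℤ → ℤ) (β : ℕ → ℝ)
    (hβ0 : β 0 = α)
    (hβ : ∀ k : ℕ, β (k + 1) = 1 / (β k - ⌊β k⌋))
    (ha : ∀ k : ℕ, a (k : ℤ) = ⌊β k⌋)
    (hqm : q (-1) = 0) (hq0 : q 0 = 1)
    (hpm : p (-1) = 1) (hp0 : p 0 = a 0)
    (hqrec : ∀ k : ℤ, 0 ≤ k → q (k + 1) = a (k + 1) * q k + q (k - 1))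
    (hprec : ∀ k : ℤ, 0 ≤ k → p (k + 1) = a (k + 1) * p k + p (k - 1))
    (D : ℤ → ℝ) (hD : ∀ k : ℤ, D k = (q k : ℝ) * α - (p k : ℝ))
    (k : ℕ) (r s N : ℤ)
    (hr : 1 ≤ r ∧ r ≤ a ((k : ℤ) + 1)) (hs : 0 ≤ s ∧ s ≤ q (k : ℤ) - 1)
    (hN : N = r * q (k : ℤ) + q ((k : ℤ) - 1) + s) :
    ((N : ℝ) + 1 - (q (k : ℤ) : ℝ)) * |D (k : ℤ)| +
      ((s : ℝ) + 1) * (|D ((k : ℤ) + 1)| + ((a ((k : ℤ) + 1) : ℝ) - (r : ℝ)) * |D (k : ℤ)|) +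
      ((q (k : ℤ) : ℝ) - (s : ℝ) - 1) *
        (|D (k : ℤ)| + (|D ((k : ℤ) + 1)| + ((a ((k : ℤ) + 1) : ℝ) - (r : ℝ)) * |D (k : ℤ)|)) = 1 := by

  -- irrationality of each β k
  have hβirr : ∀ k : ℕ, Irrational (β k) := by
    intro k
    induction k with
    | zero => rwa [hβ0]
    | succ n ih =>
      rw [hβ n, one_div]
      exact (Irrational.sub_intCast ih _).inv
  have hfrac : ∀ k : ℕ, 0 < β k - ⌊β k⌋ := by
    intro k
    have h := (hβirr k).ne_int ⌊β k⌋
    have h2 := Int.fract_nonneg (β k)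
    rw [Int.fract] at h2
    rcases lt_or_eq_of_le h2 with h' | h'
    · exact h'
    · exact absurd (by linarith) h
  have hfrlt : ∀ k : ℕ, β k - ⌊β k⌋ < 1 := by
    intro k
    have := Int.fract_lt_one (β k)
    rwa [Int.fract] at this
  have hβgt : ∀ k : ℕ, 1 < β (k + 1) := by
    intro k
    rw [hβ k]
    exact one_lt_one_div (hfrac k) (hfrlt k)
  have hcast : ∀ n : ℕ, ((n + 1 : ℕ) : ℤ) = (n : ℤ) + 1 := by intro n; push_cast; ring
  have ha1 : ∀ n : ℕ, 1 ≤ a ((n : ℤ) + 1) := by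
    intro n
    rw [← hcast n, ha (n + 1)]
    exact Int.le_floor.2 (by exact_mod_cast (hβgt n).le)
  have hDm1 : D (-1) = -1 := by
    rw [hD, hqm, hpm]; push_cast; ring
  have hD0 : D 0 = β 0 - ⌊β 0⌋ := by
    have h0 := ha 0
    simp only [Nat.cast_zero] at h0
    rw [hD, hq0, hp0, h0, hβ0]
    push_cast; ring
  have hDrec : ∀ n : ℕ, D ((n : ℤ) + 1) = (a ((n : ℤ) + 1) : ℝ) * D (n : ℤ) + D ((n : ℤ) - 1) := by
    intro n
    rw [hD, hD, hD, hqrec _ (Int.natCast_nonneg n), hprec _ (Int.natCast_nonneg n)]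
    push_cast; ring
  have hkey : ∀ n : ℕ, β (n + 1) * D (n : ℤ) = - D ((n : ℤ) - 1) := by
    intro n
    induction n with
    | zero =>
      rw [show ((0 : ℕ) : ℤ) - 1 = -1 by norm_num, hDm1, hβ 0]
      rw [show ((0 : ℕ) : ℤ) = (0 : ℤ) by norm_num, hD0]
      rw [one_div, neg_neg, inv_mul_cancel₀ (ne_of_gt (hfrac 0))]
    | succ n ih =>
      have hA : (a ((n : ℤ) + 1) : ℝ) = (⌊β (n + 1)⌋ : ℝ) := by
        rw [← hcast n, ha (n + 1)]
      have h2 : D ((n : ℤ) + 1) = ((⌊β (n + 1)⌋ : ℝ) - β (n + 1)) * D (n : ℤ) := by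
        rw [hDrec n, hA]; linear_combination ih
      simp only [hcast, show ((n : ℤ) + 1) - 1 = (n : ℤ) from by ring]
      rw [h2, hβ (n + 1)]
      have hne := ne_of_gt (hfrac (n + 1))
      rw [one_div, show ((⌊β (n + 1)⌋ : ℝ) - β (n + 1)) * D (n : ℤ)
          = -((β (n + 1) - ⌊β (n + 1)⌋) * D (n : ℤ)) from by ring,
        mul_neg, ← mul_assoc, inv_mul_cancel₀ hne, one_mul]
  have hsign : ∀ n : ℕ, 0 < (-1 : ℝ) ^ n * D (n : ℤ) := by
    intro n
    induction n with
    | zero =>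
      simp only [pow_zero, Nat.cast_zero, one_mul]
      rw [hD0]; exact hfrac 0
    | succ n ih =>
      have hb : 0 < β (n + 1 + 1) := lt_trans one_pos (hβgt (n + 1))
      have hk := hkey (n + 1)
      simp only [hcast, show ((n : ℤ) + 1) - 1 = (n : ℤ) from by ring] at hk
      have hd : D ((n : ℤ) + 1) = - D (n : ℤ) / β (n + 1 + 1) := by
        rw [eq_div_iff hb.ne']; linear_combination hk
      have heq : (-1 : ℝ) ^ (n + 1) * D ((n : ℤ) + 1) = ((-1 : ℝ) ^ n * D (n : ℤ)) / β (n + 1 + 1) := by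
        rw [hd, pow_succ]; ring
      simp only [hcast]
      rw [heq]
      exact div_pos ih hb
  have hdet : ∀ n : ℕ, q (n : ℤ) * p ((n : ℤ) - 1) - q ((n : ℤ) - 1) * p (n : ℤ) = (-1) ^ n := by
    intro n
    induction n with
    | zero => simp [hq0, hqm, hpm]
    | succ n ih =>
      simp only [hcast, show ((n : ℤ) + 1) - 1 = (n : ℤ) from by ring]
      rw [hqrec _ (Int.natCast_nonneg n), hprec _ (Int.natCast_nonneg n)]
      rw [pow_succ]
      linear_combination (-1 : ℤ) * ih
  -- assemble
  have hx : |D (k : ℤ)| = (-1 : ℝ) ^ k * D (k : ℤ) := by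
    have h := hsign k
    rw [← abs_of_pos h, abs_mul, abs_pow, abs_neg, abs_one, one_pow, one_mul]
  have hy : |D ((k : ℤ) + 1)| = (-1 : ℝ) ^ (k + 1) * D ((k : ℤ) + 1) := by
    have h := hsign (k + 1)
    simp only [hcast] at h
    rw [← abs_of_pos h, abs_mul, abs_pow, abs_neg, abs_one, one_pow, one_mul]
  have hdet' : (q (k : ℤ) : ℝ) * (p ((k : ℤ) - 1) : ℝ) - (q ((k : ℤ) - 1) : ℝ) * (p (k : ℤ) : ℝ)
      = (-1 : ℝ) ^ k := by exact_mod_cast hdet k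
  have hE : (-1 : ℝ) ^ k * (-1 : ℝ) ^ k = 1 := by
    rw [← pow_add]; exact Even.neg_one_pow ⟨k, rfl⟩
  have hN' : (N : ℝ) = (r : ℝ) * (q (k : ℤ) : ℝ) + (q ((k : ℤ) - 1) : ℝ) + (s : ℝ) := by
    rw [hN]; push_cast; ring
  rw [hx, hy, hN', hDrec k, hD (k : ℤ), hD ((k : ℤ) - 1)]
  linear_combination ((-1 : ℝ) ^ k) * hdet' + hE
end

section
/- Let α be irrational, k ≥ 0, and r, s with 1 ≤ r ≤ a_{k+1}, 0 ≤ s ≤ q_k - 1, N = r q_k + q_{k-1} + s. If n is an integer with 0 ≤ n ≤ N such that n + (-1)^k q_k ∉ [0, N] and n + (-1)^{k-1}(q_{k-1} + r q_k) ∉ [0, N], then 0 ≤ n + (-1)^{k-1}(q_{k-1} + (r-1) q_k) ≤ N. -/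
/-- If 0 ≤ n ≤ N and n lies in neither A nor B (in the three distance theorem setup),
then 0 ≤ n + (-1)^{k-1}(q_{k-1} + (r-1) q_k) ≤ N. -/
theorem stmt_8
    (α : ℝ) (hirr : Irrational α)
    (a p q : ℤ → ℤ) (β : ℕ → ℝ)
    (hβ0 : β 0 = α)
    (hβ : ∀ k : ℕ, β (k + 1) = 1 / (β k - ⌊β k⌋))
    (ha : ∀ k : ℕ, a (k : ℤ) = ⌊β k⌋)
    (hqm : q (-1) = 0) (hq0 : q 0 = 1)
    (hpm : p (-1) = 1) (hp0 : p 0 = a 0)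
    (hqrec : ∀ k : ℤ, 0 ≤ k → q (k + 1) = a (k + 1) * q k + q (k - 1))
    (hprec : ∀ k : ℤ, 0 ≤ k → p (k + 1) = a (k + 1) * p k + p (k - 1))
    (D : ℤ → ℝ) (hD : ∀ k : ℤ, D k = (q k : ℝ) * α - (p k : ℝ))
    (k : ℕ) (r s N : ℤ)
    (hr : 1 ≤ r ∧ r ≤ a ((k : ℤ) + 1)) (hs : 0 ≤ s ∧ s ≤ q (k : ℤ) - 1)
    (hN : N = r * q (k : ℤ) + q ((k : ℤ) - 1) + s) :
    ∀ n : ℤ, 0 ≤ n → n ≤ N →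
      ¬(0 ≤ n + (-1) ^ k * q (k : ℤ) ∧ n + (-1) ^ k * q (k : ℤ) ≤ N) →
      ¬(0 ≤ n + (-1) ^ (k + 1) * (q ((k : ℤ) - 1) + r * q (k : ℤ)) ∧
          n + (-1) ^ (k + 1) * (q ((k : ℤ) - 1) + r * q (k : ℤ)) ≤ N) →
      0 ≤ n + (-1) ^ (k + 1) * (q ((k : ℤ) - 1) + (r - 1) * q (k : ℤ)) ∧
        n + (-1) ^ (k + 1) * (q ((k : ℤ) - 1) + (r - 1) * q (k : ℤ)) ≤ N := by
  -- β m is irrational for all m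
  have hβirr : ∀ m : ℕ, Irrational (β m) := by
    intro m
    induction m with
    | zero => rwa [hβ0]
    | succ m ih =>
      rw [hβ m, one_div]
      exact ((ih.sub_intCast _)).inv
  -- a (m+1) ≥ 1 for all m : ℕ
  have haone : ∀ m : ℕ, 1 ≤ a ((m : ℤ) + 1) := by
    intro m
    have h1 : (m : ℤ) + 1 = ((m + 1 : ℕ) : ℤ) := by push_cast; ring
    rw [h1, ha (m + 1)]
    have hfr : Int.fract (β m) ≠ 0 := by
      have := (hβirr m).ne_int ⌊β m⌋
      rw [Int.fract]
      intro h
      exact this (by linarith)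
    have h0 : 0 < Int.fract (β m) := lt_of_le_of_ne (Int.fract_nonneg _) (Ne.symm hfr)
    have h1' : Int.fract (β m) < 1 := Int.fract_lt_one _
    have : (1 : ℝ) ≤ β (m + 1) := by
      rw [hβ m]
      rw [show β m - (⌊β m⌋ : ℝ) = Int.fract (β m) from rfl]
      rw [le_div_iff₀ h0]; linarith
    exact Int.le_floor.mpr (by exact_mod_cast this)
  -- q values: 0 ≤ q (m-1) and 1 ≤ q m
  have hqpos : ∀ m : ℕ, 0 ≤ q ((m : ℤ) - 1) ∧ 1 ≤ q (m : ℤ) := by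
    intro m
    induction m with
    | zero => simpa [hqm, hq0] using le_refl (0:ℤ)
    | succ m ih =>
      have hrec := hqrec m (by positivity)
      have ha1 := haone m
      constructor
      · have : (((m : ℕ) + 1 : ℕ) : ℤ) - 1 = (m : ℤ) := by push_cast; ring
        rw [this]; linarith [ih.2]
      · have : (((m : ℕ) + 1 : ℕ) : ℤ) = (m : ℤ) + 1 := by push_cast; ring
        rw [this, hrec]
        nlinarith [ih.1, ih.2]
  obtain ⟨hq1, hq2⟩ := hqpos k
  obtain ⟨hr1, hr2⟩ := hr
  obtain ⟨hs1, hs2⟩ := hs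
  have hrq : 0 ≤ (r - 1) * q (k : ℤ) := mul_nonneg (by linarith) (by linarith)
  have hexp : (r - 1) * q (k : ℤ) = r * q (k : ℤ) - q (k : ℤ) := by ring
  intro n hn0 hnN hA hB
  push_neg at hA hB
  rcases Nat.even_or_odd k with hk | hk
  · have e1 : ((-1 : ℤ)) ^ k = 1 := hk.neg_one_pow
    have e2 : ((-1 : ℤ)) ^ (k + 1) = -1 := by
      rw [pow_succ, e1]; ring
    rw [e1] at hA; rw [e2] at hB ⊢
    have hAn : N < n + 1 * q (k : ℤ) := hA (by linarith)
    constructor <;> nlinarith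
  · have e1 : ((-1 : ℤ)) ^ k = -1 := hk.neg_one_pow
    have e2 : ((-1 : ℤ)) ^ (k + 1) = 1 := by
      rw [pow_succ, e1]; ring
    rw [e1] at hA; rw [e2] at hB ⊢
    have hAn : n + (-1) * q (k : ℤ) < 0 := by
      by_contra h
      push_neg at h
      have := hA h
      nlinarith
    constructor <;> nlinarith
end

section
/- Let α be irrational, k ≥ 0, 1 ≤ r ≤ a_{k+1}, and δ_B = |D_{k+1}| + (a_{k+1} - r)|D_k|. If 0 < δ_B < 1, then the fractional part of (-1)^{k-1}(q_{k-1} + r q_k) α equals δ_B. -/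
/-- If 1 ≤ r ≤ a_{k+1} and δ_B = |D_{k+1}| + (a_{k+1} - r)|D_k| satisfies 0 < δ_B < 1,
then the fractional part of (-1)^{k-1}(q_{k-1} + r q_k) α equals δ_B. -/
theorem stmt_10
    (α : ℝ) (hirr : Irrational α)
    (a p q : ℤ → ℤ) (β : ℕ → ℝ)
    (hβ0 : β 0 = α)
    (hβ : ∀ k : ℕ, β (k + 1) = 1 / (β k - ⌊β k⌋))
    (ha : ∀ k : ℕ, a (k : ℤ) = ⌊β k⌋)
    (hqm : q (-1) = 0) (hq0 : q 0 = 1)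
    (hpm : p (-1) = 1) (hp0 : p 0 = a 0)
    (hqrec : ∀ k : ℤ, 0 ≤ k → q (k + 1) = a (k + 1) * q k + q (k - 1))
    (hprec : ∀ k : ℤ, 0 ≤ k → p (k + 1) = a (k + 1) * p k + p (k - 1))
    (D : ℤ → ℝ) (hD : ∀ k : ℤ, D k = (q k : ℝ) * α - (p k : ℝ))
    (k : ℕ) (r : ℤ) (hr : 1 ≤ r ∧ r ≤ a ((k : ℤ) + 1))
    (hδ : 0 < |D ((k : ℤ) + 1)| + ((a ((k : ℤ) + 1) : ℝ) - (r : ℝ)) * |D (k : ℤ)| ∧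
          |D ((k : ℤ) + 1)| + ((a ((k : ℤ) + 1) : ℝ) - (r : ℝ)) * |D (k : ℤ)| < 1) :
    Int.fract ((-1 : ℝ) ^ (k + 1) * ((q ((k : ℤ) - 1) : ℝ) + (r : ℝ) * (q (k : ℤ) : ℝ)) * α) =
      |D ((k : ℤ) + 1)| + ((a ((k : ℤ) + 1) : ℝ) - (r : ℝ)) * |D (k : ℤ)| := by
  obtain ⟨hδ0, hδ1⟩ := hδ
  -- every β k is irrational
  have hβirr : ∀ j : ℕ, Irrational (β j) := by
    intro j
    induction j with
    | zero => rwa [hβ0]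
    | succ n ih =>
      rw [hβ n, one_div]
      exact ((ih.sub_intCast ⌊β n⌋)).inv
  -- fractional parts are nonzero
  have hfrac_pos : ∀ j : ℕ, 0 < β j - ⌊β j⌋ := by
    intro j
    have h1 : (0:ℝ) ≤ β j - ⌊β j⌋ := by
      have := Int.floor_le (β j); linarith
    rcases lt_or_eq_of_le h1 with h | h
    · exact h
    · exfalso
      exact (hβirr j).ne_int ⌊β j⌋ (by linarith)
  have hfrac_lt : ∀ j : ℕ, β j - ⌊β j⌋ < 1 := by
    intro j
    have := Int.lt_floor_add_one (β j); linarith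
  -- β (j+1) > 1
  have hβgt : ∀ j : ℕ, 1 < β (j + 1) := by
    intro j
    rw [hβ j]
    exact (one_lt_div (hfrac_pos j)).mpr (hfrac_lt j)
  -- recurrence for D
  have hDrec : ∀ j : ℕ, D ((j:ℤ) + 1) = (a ((j:ℤ) + 1) : ℝ) * D (j:ℤ) + D ((j:ℤ) - 1) := by
    intro j
    rw [hD, hD, hD, hqrec j (by positivity), hprec j (by positivity)]
    push_cast
    ring
  -- key relation: D (j-1) = -β (j+1) * D j
  have hrel : ∀ j : ℕ, D ((j:ℤ) - 1) = -β (j + 1) * D (j:ℤ) := by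
    intro j
    induction j with
    | zero =>
      simp only [Nat.cast_zero]
      have hm : (0:ℤ) - 1 = -1 := by norm_num
      have h0 : a 0 = ⌊α⌋ := by have := ha 0; simpa [hβ0] using this
      have hD0 : D 0 = α - ⌊α⌋ := by
        rw [hD 0, hq0, hp0, h0]; push_cast; ring
      have hDm : D (-1) = -1 := by
        rw [hD (-1), hqm, hpm]; norm_num
      have hne : α - (⌊α⌋:ℝ) ≠ 0 := by
        have := hfrac_pos 0
        rw [hβ0] at this
        exact ne_of_gt this
      rw [hm, hDm, hD0, hβ 0, hβ0, one_div, neg_mul, inv_mul_cancel₀ hne]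
    | succ n ih =>
      have hc : ((n + 1 : ℕ) : ℤ) - 1 = (n : ℤ) := by push_cast; ring
      have hc2 : ((n + 1 : ℕ) : ℤ) = (n : ℤ) + 1 := by push_cast; ring
      rw [hc, hc2]
      have han : (a ((n:ℤ) + 1) : ℝ) = (⌊β (n + 1)⌋ : ℝ) := by
        have := ha (n + 1)
        push_cast at this ⊢
        rw [this]
      have hstep : D ((n:ℤ) + 1) = -(β (n + 1) - ⌊β (n + 1)⌋) * D (n:ℤ) := by
        rw [hDrec n, ih, han]; ring
      have hne : β (n + 1) - (⌊β (n + 1)⌋:ℝ) ≠ 0 := ne_of_gt (hfrac_pos (n + 1))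
      rw [hstep, hβ (n + 1), one_div]
      have e : -(β (n + 1) - (⌊β (n + 1)⌋:ℝ))⁻¹ * (-(β (n + 1) - (⌊β (n + 1)⌋:ℝ)) * D (n:ℤ)) =
          ((β (n + 1) - (⌊β (n + 1)⌋:ℝ))⁻¹ * (β (n + 1) - (⌊β (n + 1)⌋:ℝ))) * D (n:ℤ) := by ring
      rw [e, inv_mul_cancel₀ hne, one_mul]
  -- signs alternate
  have hsign : ∀ j : ℕ, 0 < (-1:ℝ)^j * D (j:ℤ) := by
    intro j
    induction j with
    | zero =>
      have h0 : a 0 = ⌊α⌋ := by have := ha 0; simpa [hβ0] using this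
      have hD0 : D 0 = α - ⌊α⌋ := by
        rw [hD 0, hq0, hp0, h0]; push_cast; ring
      have := hfrac_pos 0
      rw [hβ0] at this
      simpa [hD0] using this
    | succ n ih =>
      have hc : ((n + 1 : ℕ) : ℤ) - 1 = (n : ℤ) := by push_cast; ring
      have hrn := hrel (n + 1)
      rw [hc] at hrn
      have hβpos : 0 < β (n + 1 + 1) := lt_trans one_pos (hβgt (n + 1))
      have hDn1 : D (((n + 1 : ℕ)):ℤ) = -D (n:ℤ) / β (n + 1 + 1) := by
        rw [eq_div_iff (ne_of_gt hβpos)]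
        rw [hrn]; ring
      rw [hDn1]
      have e : (-1:ℝ)^(n+1) * (-D (n:ℤ) / β (n + 1 + 1)) = ((-1:ℝ)^n * D (n:ℤ)) / β (n + 1 + 1) := by
        rw [pow_succ]; ring
      rw [e]
      exact div_pos ih hβpos
  -- absolute values
  have habs : ∀ j : ℕ, |D (j:ℤ)| = (-1:ℝ)^j * D (j:ℤ) := by
    intro j
    rw [← abs_of_pos (hsign j), abs_mul, abs_pow, abs_neg, abs_one, one_pow, one_mul]
  have habs1 : |D ((k:ℤ) + 1)| = (-1:ℝ)^(k+1) * D ((k:ℤ) + 1) := by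
    have := habs (k + 1)
    push_cast at this
    exact this
  -- main computation
  have hmain : (-1 : ℝ) ^ (k + 1) * ((q ((k : ℤ) - 1) : ℝ) + (r : ℝ) * (q (k : ℤ) : ℝ)) * α =
      (|D ((k : ℤ) + 1)| + ((a ((k : ℤ) + 1) : ℝ) - (r : ℝ)) * |D (k : ℤ)|) +
      (((-1)^(k+1) * (p ((k:ℤ) - 1) + r * p (k:ℤ)) : ℤ) : ℝ) := by
    have hq1 : (q ((k:ℤ) - 1) : ℝ) * α = D ((k:ℤ) - 1) + (p ((k:ℤ) - 1) : ℝ) := by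
      rw [hD]; ring
    have hq2 : (q (k:ℤ) : ℝ) * α = D (k:ℤ) + (p (k:ℤ) : ℝ) := by
      rw [hD]; ring
    have hDm1 : D ((k:ℤ) - 1) = D ((k:ℤ) + 1) - (a ((k:ℤ) + 1) : ℝ) * D (k:ℤ) := by
      have := hDrec k; linarith
    have e1 : ((-1:ℝ))^(k+1) = -(-1:ℝ)^k := by rw [pow_succ]; ring
    rw [habs1, habs k]
    push_cast
    calc (-1 : ℝ) ^ (k + 1) * ((q ((k : ℤ) - 1) : ℝ) + (r : ℝ) * (q (k : ℤ) : ℝ)) * α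
        = (-1:ℝ)^(k+1) * ((q ((k:ℤ) - 1) : ℝ) * α + (r:ℝ) * ((q (k:ℤ) : ℝ) * α)) := by ring
      _ = (-1:ℝ)^(k+1) * ((D ((k:ℤ) - 1) + (p ((k:ℤ) - 1) : ℝ)) + (r:ℝ) * (D (k:ℤ) + (p (k:ℤ) : ℝ))) := by
          rw [hq1, hq2]
      _ = _ := by rw [hDm1, e1]; ring
  rw [hmain, Int.fract_add_intCast]
  exact Int.fract_eq_self.mpr ⟨le_of_lt hδ0, hδ1⟩
end

section
/- Three Distance Theorem (recursive ordering): With the setup of the three distance theorem, define n_0 = 0 and n_{i+1} = n_i + Δ_i where Δ_i = (-1)^k q_k if n_i ∈ A, Δ_i = (-1)^{k-1}(q_{k-1} + r q_k) if n_i ∈ B, and Δ_i = (-1)^{k-1}(q_{k-1} + (r-1) q_k) if n_i ∈ C. Then all n_i lie in [0, N], (n_1, ..., n_N) is a permutation of (1, ..., N), and 0 < {n_1 α} < {n_2 α} < ... < {n_N α} < 1. -/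
private lemma fract_shift (α : ℝ) (x m u : ℤ) :
    Int.fract (((x + m : ℤ) : ℝ) * α) = Int.fract (Int.fract ((x:ℝ) * α) + ((m:ℝ) * α - (u:ℝ))) := by
  have h1 : ((x + m : ℤ) : ℝ) * α = (((x:ℝ)*α + ((m:ℝ)*α - (u:ℝ))) + (u:ℝ)) := by push_cast; ring
  rw [h1, Int.fract_add_intCast]
  conv_lhs => rw [← Int.floor_add_fract ((x:ℝ)*α)]
  rw [add_assoc, Int.fract_intCast_add]



/-- Three distance theorem (recursive ordering): with n_0 = 0 and
n_{i+1} = n_i + Δ_i, where Δ_i is (-1)^k q_k, (-1)^{k-1}(q_{k-1}+r q_k) or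
(-1)^{k-1}(q_{k-1}+(r-1)q_k) according to whether n_i belongs to A, B or C,
all n_i lie in [0, N], (n_1, ..., n_N) is a permutation of (1, ..., N), and
0 < {n_1 α} < {n_2 α} < ... < {n_N α} < 1. -/
theorem stmt_12
    (α : ℝ) (hirr : Irrational α)
    (a p q : ℤ → ℤ) (β : ℕ → ℝ)
    (hβ0 : β 0 = α)
    (hβ : ∀ k : ℕ, β (k + 1) = 1 / (β k - ⌊β k⌋))
    (ha : ∀ k : ℕ, a (k : ℤ) = ⌊β k⌋)
    (hqm : q (-1) = 0) (hq0 : q 0 = 1)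
    (hpm : p (-1) = 1) (hp0 : p 0 = a 0)
    (hqrec : ∀ k : ℤ, 0 ≤ k → q (k + 1) = a (k + 1) * q k + q (k - 1))
    (hprec : ∀ k : ℤ, 0 ≤ k → p (k + 1) = a (k + 1) * p k + p (k - 1))
    (D : ℤ → ℝ) (hD : ∀ k : ℤ, D k = (q k : ℝ) * α - (p k : ℝ))
    (N : ℕ) (hN1 : 1 ≤ N) (k : ℕ) (r s : ℤ)
    (hk : q (k : ℤ) + q ((k : ℤ) - 1) ≤ (N : ℤ) ∧ (N : ℤ) < q ((k : ℤ) + 1) + q (k : ℤ))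
    (hr : 1 ≤ r ∧ r ≤ a ((k : ℤ) + 1)) (hs : 0 ≤ s ∧ s ≤ q (k : ℤ) - 1)
    (hN : (N : ℤ) = r * q (k : ℤ) + q ((k : ℤ) - 1) + s)
    (n : ℕ → ℤ) (hn0 : n 0 = 0)
    (hrec : ∀ i : ℕ, i < N → n (i + 1) = n i +
      (if 0 ≤ n i + (-1) ^ k * q (k : ℤ) ∧ n i + (-1) ^ k * q (k : ℤ) ≤ (N : ℤ) then
        (-1) ^ k * q (k : ℤ)
      else if 0 ≤ n i + (-1) ^ (k + 1) * (q ((k : ℤ) - 1) + r * q (k : ℤ)) ∧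
          n i + (-1) ^ (k + 1) * (q ((k : ℤ) - 1) + r * q (k : ℤ)) ≤ (N : ℤ) then
        (-1) ^ (k + 1) * (q ((k : ℤ) - 1) + r * q (k : ℤ))
      else (-1) ^ (k + 1) * (q ((k : ℤ) - 1) + (r - 1) * q (k : ℤ)))) :
    (∀ i : ℕ, i ≤ N → 0 ≤ n i ∧ n i ≤ (N : ℤ)) ∧
      (Finset.Icc 1 N).image n = Finset.Icc (1 : ℤ) (N : ℤ) ∧
      0 < Int.fract ((n 1 : ℝ) * α) ∧
      (∀ i : ℕ, 1 ≤ i → i < N → Int.fract ((n i : ℝ) * α) < Int.fract ((n (i + 1) : ℝ) * α)) ∧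
      Int.fract ((n N : ℝ) * α) < 1 := by

  have hirrβ : ∀ j : ℕ, Irrational (β j) := by
    intro j; induction j with
    | zero => rwa [hβ0]
    | succ j ih => rw [hβ j, one_div]; exact (ih.sub_intCast ⌊β j⌋).inv
  have hfracβ : ∀ j : ℕ, 0 < β j - ⌊β j⌋ ∧ β j - ⌊β j⌋ < 1 := by
    intro j
    constructor
    · rcases (Int.fract_nonneg (β j)).lt_or_eq with h'|h'
      · exact h'
      · exact absurd h'.symm ((hirrβ j).sub_intCast ⌊β j⌋).ne_zero
    · exact Int.fract_lt_one (β j)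
  have hβgt : ∀ j : ℕ, 1 < β (j+1) := by
    intro j
    rw [hβ j]
    rw [lt_div_iff₀ (hfracβ j).1]
    linarith [(hfracβ j).2]
  have haβ : ∀ j : ℕ, a ((j:ℤ)+1) = ⌊β (j+1)⌋ := by
    intro j; have := ha (j+1); push_cast at this; exact this
  have ha1 : ∀ j : ℕ, 1 ≤ a ((j:ℤ)+1) := by
    intro j; rw [haβ j]; exact Int.le_floor.mpr (by exact_mod_cast (hβgt j).le)
  have hq1 : ∀ j : ℕ, 0 ≤ q ((j:ℤ)-1) ∧ 1 ≤ q (j:ℤ) := by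
    intro j; induction j with
    | zero => norm_num [hqm, hq0]
    | succ j ih =>
      have e : ((j+1:ℕ):ℤ) = (j:ℤ)+1 := by push_cast; ring
      have e2 : (j:ℤ)+1-1 = (j:ℤ) := by ring
      rw [e, e2, hqrec (j:ℤ) (by positivity)]
      refine ⟨by linarith [ih.2], ?_⟩
      nlinarith [ha1 j, ih.1, ih.2]
  have hDm : D (-1) = -1 := by rw [hD, hqm, hpm]; norm_num
  have hD0 : D 0 = α - (⌊α⌋:ℝ) := by
    have h0 : a 0 = ⌊α⌋ := by have := ha 0; rw [hβ0] at this; exact_mod_cast this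
    rw [hD, hq0, hp0, h0]; push_cast; ring
  have hDrec : ∀ j : ℕ, D ((j:ℤ)+1) = (a ((j:ℤ)+1) : ℝ) * D (j:ℤ) + D ((j:ℤ)-1) := by
    intro j
    rw [hD, hD, hD, hqrec _ (by positivity), hprec _ (by positivity)]
    push_cast; ring
  have hfα : 0 < α - (⌊α⌋:ℝ) ∧ α - (⌊α⌋:ℝ) < 1 := by
    have := hfracβ 0; rw [hβ0] at this; exact this
  have hQ : ∀ j : ℕ, β (j+1) * D (j:ℤ) = - D ((j:ℤ)-1) := by
    intro j; induction j with
    | zero =>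
      have : ((0:ℕ):ℤ) = 0 := by norm_num
      rw [this]
      norm_num [hDm, hD0, hβ 0, hβ0]
      rw [inv_mul_eq_div]
      exact div_self (ne_of_gt hfα.1)
    | succ j ih =>
      have e : ((j+1:ℕ):ℤ) = (j:ℤ)+1 := by push_cast; ring
      have e2 : (j:ℤ)+1-1 = (j:ℤ) := by ring
      rw [e, e2, hDrec j, haβ j, hβ (j+1)]
      have hne : β (j+1) - (⌊β (j+1)⌋:ℝ) ≠ 0 := ne_of_gt (hfracβ (j+1)).1
      rw [one_div, inv_mul_eq_div, div_eq_iff hne]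
      linear_combination ih
  have hS : ∀ j : ℕ, 0 < (-1:ℝ)^j * D (j:ℤ) := by
    intro j; induction j with
    | zero => simpa [hD0] using hfα.1
    | succ j ih =>
      have hq' := hQ (j+1)
      have e : ((j+1:ℕ):ℤ) = (j:ℤ)+1 := by push_cast; ring
      have e2 : (j:ℤ)+1-1 = (j:ℤ) := by ring
      rw [e, e2] at hq'
      have hb : (0:ℝ) < β (j+1+1) := lt_trans one_pos (hβgt (j+1))
      have hDj1 : D ((j:ℤ)+1) = - D (j:ℤ) / β (j+1+1) := by
        field_simp
        linarith [hq']
      rw [e, hDj1]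
      have hrw : (-1:ℝ)^(j+1) * (- D (j:ℤ) / β (j+1+1)) = ((-1)^j * D (j:ℤ)) / β (j+1+1) := by
        ring
      rw [hrw]
      exact div_pos ih hb
  have hdet : ∀ j : ℕ, p (j:ℤ) * q ((j:ℤ)-1) - p ((j:ℤ)-1) * q (j:ℤ) = (-1:ℤ)^(j+1) := by
    intro j; induction j with
    | zero => norm_num [hqm, hq0, hpm]
    | succ j ih =>
      have e : ((j+1:ℕ):ℤ) = (j:ℤ)+1 := by push_cast; ring
      have e2 : (j:ℤ)+1-1 = (j:ℤ) := by ring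
      rw [e, e2, hqrec _ (by positivity), hprec _ (by positivity)]
      have : (-1:ℤ)^(j+1+1) = -(-1:ℤ)^(j+1) := by ring
      rw [this]
      linear_combination (-1 : ℤ) * ih

  -- δ values
  set δ : ℝ := (-1:ℝ)^k * D (k:ℤ) with hδdef
  set δ' : ℝ := (-1:ℝ)^(k+1) * D ((k:ℤ)-1) with hδ'def
  set δn : ℝ := (-1:ℝ)^(k+1) * D ((k:ℤ)+1) with hδndef
  set gB : ℝ := δ' - r * δ with hgBdef
  set gC : ℝ := δ' - (r-1) * δ with hgCdef
  have hδpos : 0 < δ := hS k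
  have hδnpos : 0 < δn := by
    have := hS (k+1)
    have e : ((k+1:ℕ):ℤ) = (k:ℤ)+1 := by push_cast; ring
    rwa [e] at this
  have hδ'pos : 0 < δ' := by
    rw [hδ'def]
    cases k with
    | zero => norm_num [hDm]
    | succ j =>
      have e : ((j+1:ℕ):ℤ)-1 = (j:ℤ) := by push_cast; ring
      rw [e]
      have : (-1:ℝ)^(j+1+1) = (-1:ℝ)^j := by
        rw [pow_succ, pow_succ]; ring
      rw [this]
      exact hS j
  have hDreck : D ((k:ℤ)+1) = (a ((k:ℤ)+1) : ℝ) * D (k:ℤ) + D ((k:ℤ)-1) := hDrec k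
  have hrecδ : δ' = (a ((k:ℤ)+1) : ℝ) * δ + δn := by
    rw [hδ'def, hδdef, hδndef]
    have e : (-1:ℝ)^(k+1) = -(-1:ℝ)^k := by ring
    rw [e]
    linear_combination ((-1:ℝ)^k) * hDreck
  have harR : (r:ℝ) ≤ (a ((k:ℤ)+1) : ℝ) := by exact_mod_cast hr.2
  have hgBpos : 0 < gB := by
    rw [hgBdef]
    nlinarith [mul_nonneg (sub_nonneg.mpr harR) hδpos.le]
  have hgCpos : 0 < gC := by rw [hgCdef]; nlinarith [hgBpos]
  have hdetR : (p (k:ℤ) : ℝ) * (q ((k:ℤ)-1):ℝ) - (p ((k:ℤ)-1):ℝ) * (q (k:ℤ):ℝ) = (-1:ℝ)^(k+1) := by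
    exact_mod_cast hdet k
  have he : (-1:ℝ)^k * (-1:ℝ)^k = 1 := by
    rw [← pow_add]; exact Even.neg_one_pow ⟨k, rfl⟩
  have hsum1 : (q ((k:ℤ)-1) : ℝ) * δ + (q (k:ℤ) : ℝ) * δ' = 1 := by
    rw [hδdef, hδ'def, hD, hD]
    have e : (-1:ℝ)^(k+1) = -(-1:ℝ)^k := by ring
    rw [e] at hdetR ⊢
    linear_combination (-(-1:ℝ)^k) * hdetR + he
  -- gap lemmas
  have hmA : ∀ x : ℤ, Int.fract (((x + (-1:ℤ)^k * q (k:ℤ) : ℤ) : ℝ) * α)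
      = Int.fract (Int.fract ((x:ℝ) * α) + δ) := by
    intro x
    rw [fract_shift α x _ ((-1:ℤ)^k * p (k:ℤ))]
    congr 2
    rw [hδdef, hD]
    push_cast
    ring
  have hmB : ∀ x : ℤ, Int.fract (((x + (-1:ℤ)^(k+1) * (q ((k:ℤ)-1) + r * q (k:ℤ)) : ℤ) : ℝ) * α)
      = Int.fract (Int.fract ((x:ℝ) * α) + gB) := by
    intro x
    rw [fract_shift α x _ ((-1:ℤ)^(k+1) * (p ((k:ℤ)-1) + r * p (k:ℤ)))]
    congr 2
    rw [hgBdef, hδdef, hδ'def, hD, hD]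
    push_cast
    ring
  have hmC : ∀ x : ℤ, Int.fract (((x + (-1:ℤ)^(k+1) * (q ((k:ℤ)-1) + (r-1) * q (k:ℤ)) : ℤ) : ℝ) * α)
      = Int.fract (Int.fract ((x:ℝ) * α) + gC) := by
    intro x
    rw [fract_shift α x _ ((-1:ℤ)^(k+1) * (p ((k:ℤ)-1) + (r-1) * p (k:ℤ)))]
    congr 2
    rw [hgCdef, hδdef, hδ'def, hD, hD]
    push_cast
    ring

  -- the gap function
  set g : ℤ → ℝ := fun m =>
    if 0 ≤ m + (-1)^k * q (k:ℤ) ∧ m + (-1)^k * q (k:ℤ) ≤ (N:ℤ) then δ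
    else if 0 ≤ m + (-1)^(k+1) * (q ((k:ℤ)-1) + r * q (k:ℤ)) ∧
        m + (-1)^(k+1) * (q ((k:ℤ)-1) + r * q (k:ℤ)) ≤ (N:ℤ) then gB
    else gC with hgdef
  have hgA : ∀ x : ℤ, (0 ≤ x + (-1)^k * q (k:ℤ) ∧ x + (-1)^k * q (k:ℤ) ≤ (N:ℤ)) → g x = δ := by
    intro x hx; rw [hgdef]; exact if_pos hx
  have hgB2 : ∀ x : ℤ, ¬(0 ≤ x + (-1)^k * q (k:ℤ) ∧ x + (-1)^k * q (k:ℤ) ≤ (N:ℤ)) →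
      (0 ≤ x + (-1)^(k+1) * (q ((k:ℤ)-1) + r * q (k:ℤ)) ∧
        x + (-1)^(k+1) * (q ((k:ℤ)-1) + r * q (k:ℤ)) ≤ (N:ℤ)) → g x = gB := by
    intro x hx1 hx2; rw [hgdef]; simp only; rw [if_neg hx1, if_pos hx2]
  have hgC2 : ∀ x : ℤ, ¬(0 ≤ x + (-1)^k * q (k:ℤ) ∧ x + (-1)^k * q (k:ℤ) ≤ (N:ℤ)) →
      ¬(0 ≤ x + (-1)^(k+1) * (q ((k:ℤ)-1) + r * q (k:ℤ)) ∧
        x + (-1)^(k+1) * (q ((k:ℤ)-1) + r * q (k:ℤ)) ≤ (N:ℤ)) → g x = gC := by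
    intro x hx1 hx2; rw [hgdef]; simp only; rw [if_neg hx1, if_neg hx2]
  have hgpos : ∀ x : ℤ, 0 < g x := by
    intro x; rw [hgdef]; simp only; split_ifs
    · exact hδpos
    · exact hgBpos
    · exact hgCpos
  -- integer facts for omega
  have hQ1 : 1 ≤ q (k:ℤ) := (hq1 k).2
  have hQ'0 : 0 ≤ q ((k:ℤ)-1) := (hq1 k).1
  have hrq : q (k:ℤ) ≤ r * q (k:ℤ) := le_mul_of_one_le_left (by linarith) hr.1
  have hpk : ((-1:ℤ)^k = 1 ∧ (-1:ℤ)^(k+1) = -1) ∨ ((-1:ℤ)^k = -1 ∧ (-1:ℤ)^(k+1) = 1) := by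
    rcases Nat.even_or_odd k with h | h
    · exact Or.inl ⟨h.neg_one_pow, (h.add_one).neg_one_pow⟩
    · exact Or.inr ⟨h.neg_one_pow, (h.add_one).neg_one_pow⟩
  -- disjointness of A and B conditions on [0,N]
  have hdisj : ∀ x : ℤ, 0 ≤ x → x ≤ (N:ℤ) →
      (0 ≤ x + (-1)^k * q (k:ℤ) ∧ x + (-1)^k * q (k:ℤ) ≤ (N:ℤ)) →
      (0 ≤ x + (-1)^(k+1) * (q ((k:ℤ)-1) + r * q (k:ℤ)) ∧
        x + (-1)^(k+1) * (q ((k:ℤ)-1) + r * q (k:ℤ)) ≤ (N:ℤ)) → False := by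
    intro x h0 h1 h2 h3
    rcases hpk with ⟨e1, e2⟩ | ⟨e1, e2⟩ <;> rw [e1] at h2 <;> rw [e2] at h3 <;>
      [skip; skip] <;> omega
  -- C branch bounds
  have hCbound : ∀ x : ℤ, 0 ≤ x → x ≤ (N:ℤ) →
      ¬(0 ≤ x + (-1)^k * q (k:ℤ) ∧ x + (-1)^k * q (k:ℤ) ≤ (N:ℤ)) →
      ¬(0 ≤ x + (-1)^(k+1) * (q ((k:ℤ)-1) + r * q (k:ℤ)) ∧
        x + (-1)^(k+1) * (q ((k:ℤ)-1) + r * q (k:ℤ)) ≤ (N:ℤ)) →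
      0 ≤ x + (-1)^(k+1) * (q ((k:ℤ)-1) + (r-1) * q (k:ℤ)) ∧
        x + (-1)^(k+1) * (q ((k:ℤ)-1) + (r-1) * q (k:ℤ)) ≤ (N:ℤ) := by
    intro x h0 h1 h2 h3
    have hexp : (r-1) * q (k:ℤ) = r * q (k:ℤ) - q (k:ℤ) := by ring
    rw [hexp]
    rcases hpk with ⟨e1, e2⟩ | ⟨e1, e2⟩ <;> rw [e1] at h2 <;> rw [e2] at h3 ⊢ <;> omega
  -- sum of g over Icc 0 N equals 1
  have hsumg : ∑ m ∈ Finset.Icc (0:ℤ) (N:ℤ), g m = 1 := by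
    have hsplit : ∀ m ∈ Finset.Icc (0:ℤ) (N:ℤ), g m =
        (if 0 ≤ m + (-1)^(k+1) * (q ((k:ℤ)-1) + r * q (k:ℤ)) ∧
            m + (-1)^(k+1) * (q ((k:ℤ)-1) + r * q (k:ℤ)) ≤ (N:ℤ) then 0 else δ) +
        (if 0 ≤ m + (-1)^k * q (k:ℤ) ∧ m + (-1)^k * q (k:ℤ) ≤ (N:ℤ) then 0 else gB) := by
      intro m hm
      rw [Finset.mem_Icc] at hm
      by_cases hA : 0 ≤ m + (-1)^k * q (k:ℤ) ∧ m + (-1)^k * q (k:ℤ) ≤ (N:ℤ)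
      · by_cases hB : 0 ≤ m + (-1)^(k+1) * (q ((k:ℤ)-1) + r * q (k:ℤ)) ∧
            m + (-1)^(k+1) * (q ((k:ℤ)-1) + r * q (k:ℤ)) ≤ (N:ℤ)
        · exact absurd hB (fun hB => hdisj m hm.1 hm.2 hA hB)
        · rw [hgA m hA, if_neg hB, if_pos hA]; ring
      · by_cases hB : 0 ≤ m + (-1)^(k+1) * (q ((k:ℤ)-1) + r * q (k:ℤ)) ∧
            m + (-1)^(k+1) * (q ((k:ℤ)-1) + r * q (k:ℤ)) ≤ (N:ℤ)
        · rw [hgB2 m hA hB, if_pos hB, if_neg hA]; ring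
        · rw [hgC2 m hA hB, if_neg hB, if_neg hA, hgCdef, hgBdef]; ring
    rw [Finset.sum_congr rfl hsplit, Finset.sum_add_distrib]
    have hcount : ∀ (P : ℤ → Prop) [DecidablePred P] (c : ℝ) (t : ℕ),
        ((Finset.Icc (0:ℤ) (N:ℤ)).filter (fun m => ¬ P m)).card = t →
        ∑ m ∈ Finset.Icc (0:ℤ) (N:ℤ), (if P m then (0:ℝ) else c) = t * c := by
      intro P _ c t ht
      have : ∀ m ∈ Finset.Icc (0:ℤ) (N:ℤ), (if P m then (0:ℝ) else c) = (if ¬ P m then c else 0) := by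
        intro m _; by_cases h : P m <;> simp [h]
      rw [Finset.sum_congr rfl this, ← Finset.sum_filter, Finset.sum_const, ht, nsmul_eq_mul]
    have hfB : ((Finset.Icc (0:ℤ) (N:ℤ)).filter (fun m =>
        ¬ (0 ≤ m + (-1)^(k+1) * (q ((k:ℤ)-1) + r * q (k:ℤ)) ∧
          m + (-1)^(k+1) * (q ((k:ℤ)-1) + r * q (k:ℤ)) ≤ (N:ℤ)))).card = ((N:ℤ) - s).toNat := by
      rcases hpk with ⟨e1, e2⟩ | ⟨e1, e2⟩
      · have : (Finset.Icc (0:ℤ) (N:ℤ)).filter (fun m =>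
            ¬ (0 ≤ m + (-1)^(k+1) * (q ((k:ℤ)-1) + r * q (k:ℤ)) ∧
              m + (-1)^(k+1) * (q ((k:ℤ)-1) + r * q (k:ℤ)) ≤ (N:ℤ))) =
            Finset.Icc (0:ℤ) (q ((k:ℤ)-1) + r * q (k:ℤ) - 1) := by
          ext m
          simp only [Finset.mem_filter, Finset.mem_Icc, e2]
          omega
        rw [this, Int.card_Icc]
        omega
      · have : (Finset.Icc (0:ℤ) (N:ℤ)).filter (fun m =>
            ¬ (0 ≤ m + (-1)^(k+1) * (q ((k:ℤ)-1) + r * q (k:ℤ)) ∧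
              m + (-1)^(k+1) * (q ((k:ℤ)-1) + r * q (k:ℤ)) ≤ (N:ℤ))) =
            Finset.Icc (s+1) (N:ℤ) := by
          ext m
          simp only [Finset.mem_filter, Finset.mem_Icc, e2]
          omega
        rw [this, Int.card_Icc]
        omega
    have hfA : ((Finset.Icc (0:ℤ) (N:ℤ)).filter (fun m =>
        ¬ (0 ≤ m + (-1)^k * q (k:ℤ) ∧ m + (-1)^k * q (k:ℤ) ≤ (N:ℤ)))).card = (q (k:ℤ)).toNat := by
      rcases hpk with ⟨e1, e2⟩ | ⟨e1, e2⟩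
      · have : (Finset.Icc (0:ℤ) (N:ℤ)).filter (fun m =>
            ¬ (0 ≤ m + (-1)^k * q (k:ℤ) ∧ m + (-1)^k * q (k:ℤ) ≤ (N:ℤ))) =
            Finset.Icc ((N:ℤ) - q (k:ℤ) + 1) (N:ℤ) := by
          ext m
          simp only [Finset.mem_filter, Finset.mem_Icc, e1]
          omega
        rw [this, Int.card_Icc]
        omega
      · have : (Finset.Icc (0:ℤ) (N:ℤ)).filter (fun m =>
            ¬ (0 ≤ m + (-1)^k * q (k:ℤ) ∧ m + (-1)^k * q (k:ℤ) ≤ (N:ℤ))) =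
            Finset.Icc (0:ℤ) (q (k:ℤ) - 1) := by
          ext m
          simp only [Finset.mem_filter, Finset.mem_Icc, e1]
          omega
        rw [this, Int.card_Icc]
        omega
    rw [hcount _ _ _ hfB, hcount _ _ _ hfA]
    have c1 : ((((N:ℤ) - s).toNat : ℕ) : ℝ) = (N:ℝ) - (s:ℝ) := by
      have h1 : (0:ℤ) ≤ (N:ℤ) - s := by omega
      exact_mod_cast congrArg (fun z : ℤ => (z:ℝ)) (Int.toNat_of_nonneg h1)
    have c2 : (((q (k:ℤ)).toNat : ℕ) : ℝ) = ((q (k:ℤ)) : ℝ) := by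
      have h1 : (0:ℤ) ≤ q (k:ℤ) := by omega
      exact_mod_cast congrArg (fun z : ℤ => (z:ℝ)) (Int.toNat_of_nonneg h1)
    have hNR : (N:ℝ) = (r:ℝ) * (q (k:ℤ):ℝ) + (q ((k:ℤ)-1):ℝ) + (s:ℝ) := by exact_mod_cast hN
    rw [c1, c2, hgBdef]
    linear_combination hsum1 + δ * hNR

  -- main induction
  have key : ∀ i : ℕ, i ≤ N → ∀ j : ℕ, j ≤ i →
      (0 ≤ n j ∧ n j ≤ (N:ℤ)) ∧ Int.fract ((n j : ℝ) * α) = ∑ l ∈ Finset.range j, g (n l) := by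
    intro i
    induction i with
    | zero =>
      intro _ j hj
      have hj0 : j = 0 := Nat.le_zero.mp hj
      subst hj0
      refine ⟨⟨by rw [hn0], by rw [hn0]; exact_mod_cast Nat.zero_le N⟩, ?_⟩
      rw [hn0]
      norm_num
    | succ i ih =>
      intro hi j hj
      have hiN : i < N := Nat.lt_of_lt_of_le (Nat.lt_succ_self i) hi
      have IH := ih (Nat.le_of_lt hiN)
      rcases Nat.lt_or_ge j (i+1) with hj' | hj'
      · exact IH j (Nat.lt_succ_iff.mp hj')
      have hj2 : j = i+1 := le_antisymm hj hj'
      subst hj2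
      obtain ⟨⟨hm0, hmN⟩, hfm⟩ := IH i le_rfl
      -- injectivity on range (i+1)
      have hmono : ∀ x y : ℕ, x < y → y ≤ i → Int.fract ((n x:ℝ)*α) < Int.fract ((n y:ℝ)*α) := by
        intro x y hxy hyi
        rw [(IH x (le_trans (Nat.le_of_lt hxy) hyi)).2, (IH y hyi).2]
        exact Finset.sum_lt_sum_of_subset (Finset.range_subset_range.mpr (Nat.le_of_lt hxy))
          (Finset.mem_range.mpr hxy) (by simp) (hgpos _) (fun l _ _ => (hgpos _).le)
      have hinj : ∀ x ∈ Finset.range (i+1), ∀ y ∈ Finset.range (i+1), n x = n y → x = y := by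
        intro x hx y hy hxy
        by_contra hne
        rcases Nat.lt_or_ge x y with h | h
        · have := hmono x y h (Nat.lt_succ_iff.mp (Finset.mem_range.mp hy))
          rw [hxy] at this; exact lt_irrefl _ this
        · have := hmono y x (lt_of_le_of_ne h (Ne.symm hne)) (Nat.lt_succ_iff.mp (Finset.mem_range.mp hx))
          rw [hxy] at this; exact lt_irrefl _ this
      -- partial sums are < 1
      have hsumlt : ∑ l ∈ Finset.range (i+1), g (n l) < 1 := by
        rw [← hsumg]
        have himg : (Finset.range (i+1)).image n ⊆ Finset.Icc (0:ℤ) (N:ℤ) := by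
          intro m' hm'
          rw [Finset.mem_image] at hm'
          obtain ⟨l, hl, rfl⟩ := hm'
          exact Finset.mem_Icc.mpr (IH l (Nat.lt_succ_iff.mp (Finset.mem_range.mp hl))).1
        have hcard : ((Finset.range (i+1)).image n).card = i+1 := by
          rw [Finset.card_image_of_injOn (fun x hx y hy => hinj x hx y hy), Finset.card_range]
        have hnefin : (Finset.range (i+1)).image n ≠ Finset.Icc (0:ℤ) (N:ℤ) := by
          intro hEq
          have := congrArg Finset.card hEq
          rw [hcard, Int.card_Icc] at this
          omega
        obtain ⟨w, hw, hwn⟩ := Finset.exists_of_ssubset (ssubset_of_subset_of_ne himg hnefin)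
        calc ∑ l ∈ Finset.range (i+1), g (n l)
            = ∑ m' ∈ (Finset.range (i+1)).image n, g m' := (Finset.sum_image hinj).symm
          _ < ∑ m' ∈ Finset.Icc (0:ℤ) (N:ℤ), g m' :=
              Finset.sum_lt_sum_of_subset himg hw hwn (hgpos w) (fun l _ _ => (hgpos _).le)
      have hfm1 : Int.fract ((n i : ℝ) * α) + g (n i) = ∑ l ∈ Finset.range (i+1), g (n l) := by
        rw [Finset.sum_range_succ, hfm]
      have hlow : (0:ℝ) ≤ Int.fract ((n i : ℝ) * α) + g (n i) :=
        add_nonneg (Int.fract_nonneg _) (hgpos _).le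
      have hhigh : Int.fract ((n i : ℝ) * α) + g (n i) < 1 := by rw [hfm1]; exact hsumlt
      have hrec' := hrec i hiN
      by_cases hA : 0 ≤ n i + (-1)^k * q (k:ℤ) ∧ n i + (-1)^k * q (k:ℤ) ≤ (N:ℤ)
      · rw [if_pos hA] at hrec'
        have hgm : g (n i) = δ := hgA (n i) hA
        refine ⟨by rw [hrec']; exact hA, ?_⟩
        rw [hrec', hmA (n i)]
        rw [hgm] at hlow hhigh
        rw [Int.fract_eq_self.mpr ⟨hlow, hhigh⟩, ← hgm, hfm1]
      · rw [if_neg hA] at hrec'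
        by_cases hB : 0 ≤ n i + (-1)^(k+1) * (q ((k:ℤ)-1) + r * q (k:ℤ)) ∧
            n i + (-1)^(k+1) * (q ((k:ℤ)-1) + r * q (k:ℤ)) ≤ (N:ℤ)
        · rw [if_pos hB] at hrec'
          have hgm : g (n i) = gB := hgB2 (n i) hA hB
          refine ⟨by rw [hrec']; exact hB, ?_⟩
          rw [hrec', hmB (n i)]
          rw [hgm] at hlow hhigh
          rw [Int.fract_eq_self.mpr ⟨hlow, hhigh⟩, ← hgm, hfm1]
        · rw [if_neg hB] at hrec'
          have hgm : g (n i) = gC := hgC2 (n i) hA hB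
          refine ⟨by rw [hrec']; exact hCbound (n i) hm0 hmN hA hB, ?_⟩
          rw [hrec', hmC (n i)]
          rw [hgm] at hlow hhigh
          rw [Int.fract_eq_self.mpr ⟨hlow, hhigh⟩, ← hgm, hfm1]
  -- conclusions
  have hbounds : ∀ i : ℕ, i ≤ N → 0 ≤ n i ∧ n i ≤ (N:ℤ) := fun i hi => (key N le_rfl i hi).1
  have hfract : ∀ i : ℕ, i ≤ N → Int.fract ((n i : ℝ) * α) = ∑ l ∈ Finset.range i, g (n l) :=
    fun i hi => (key N le_rfl i hi).2
  have hmonoN : ∀ x y : ℕ, x < y → y ≤ N → Int.fract ((n x:ℝ)*α) < Int.fract ((n y:ℝ)*α) := by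
    intro x y hxy hyN
    rw [hfract x (le_trans (Nat.le_of_lt hxy) hyN), hfract y hyN]
    exact Finset.sum_lt_sum_of_subset (Finset.range_subset_range.mpr (Nat.le_of_lt hxy))
      (Finset.mem_range.mpr hxy) (by simp) (hgpos _) (fun l _ _ => (hgpos _).le)
  have hfzero : Int.fract ((n 0 : ℝ) * α) = 0 := by rw [hn0]; norm_num
  have hpos1 : ∀ i : ℕ, 1 ≤ i → i ≤ N → 0 < Int.fract ((n i : ℝ) * α) := by
    intro i h1 h2
    calc (0:ℝ) = Int.fract ((n 0 : ℝ) * α) := hfzero.symm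
      _ < Int.fract ((n i : ℝ) * α) := hmonoN 0 i h1 h2
  refine ⟨hbounds, ?_, hpos1 1 le_rfl hN1, fun i h1 h2 => hmonoN i (i+1) (Nat.lt_succ_self i) h2, Int.fract_lt_one _⟩
  -- image statement
  have hsub : (Finset.Icc 1 N).image n ⊆ Finset.Icc (1:ℤ) (N:ℤ) := by
    intro m' hm'
    rw [Finset.mem_image] at hm'
    obtain ⟨i, hi, rfl⟩ := hm'
    rw [Finset.mem_Icc] at hi
    have hb := hbounds i hi.2
    rw [Finset.mem_Icc]
    refine ⟨?_, hb.2⟩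
    rcases hb.1.lt_or_eq with h | h
    · omega
    · exfalso
      have : Int.fract ((n i : ℝ) * α) = 0 := by rw [← h]; norm_num
      exact absurd this (ne_of_gt (hpos1 i hi.1 hi.2))
  have hinjN : ∀ x ∈ Finset.Icc 1 N, ∀ y ∈ Finset.Icc 1 N, n x = n y → x = y := by
    intro x hx y hy hxy
    rw [Finset.mem_Icc] at hx hy
    by_contra hne
    rcases Nat.lt_or_ge x y with h | h
    · have := hmonoN x y h hy.2
      rw [hxy] at this; exact lt_irrefl _ this
    · have := hmonoN y x (by omega) hx.2
      rw [hxy] at this; exact lt_irrefl _ this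
  have hcard2 : (Finset.Icc (1:ℤ) (N:ℤ)).card ≤ ((Finset.Icc 1 N).image n).card := by
    rw [Finset.card_image_of_injOn (fun x hx y hy => hinjN x hx y hy), Nat.card_Icc, Int.card_Icc]
    omega
  exact Finset.eq_of_subset_of_card_le hsub hcard2
end

section
/- Cyclicity of the three-distance ordering: with the recursively defined sequence n_0 = 0, n_{i+1} = n_i + Δ_i from the three distance theorem extended to all i ≥ 0, one has n_{N+1} = 0, and more generally n_i = n_j if and only if i ≡ j (mod N+1). -/
theorem keyA (P Q s N : ℤ) (hP : 1 ≤ P) (hQ : 1 ≤ Q)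
    (hcop : IsCoprime P Q) (hs0 : 0 ≤ s) (hsP : s ≤ P - 1)
    (hNQ : N = Q + s) (hPN : P ≤ N)
    (m : ℕ → ℤ) (hm0 : 0 ≤ m 0 ∧ m 0 ≤ N)
    (hmrec : ∀ i, m (i + 1) = m i + (if 0 ≤ m i + P ∧ m i + P ≤ N then P
      else if 0 ≤ m i - Q ∧ m i - Q ≤ N then -Q else P - Q)) :
    ∀ i j : ℕ, m i = m j ↔ (i : ℤ) % (N + 1) = (j : ℤ) % (N + 1) := by
  have hN0 : 0 ≤ N := le_trans (le_trans zero_le_one hP) hPN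
  -- range invariant
  have hrange : ∀ i, 0 ≤ m i ∧ m i ≤ N := by
    intro i
    induction i with
    | zero => exact hm0
    | succ i ih => rw [hmrec i]; split_ifs <;> omega
  -- step injectivity
  have hinj : ∀ i j, m (i + 1) = m (j + 1) → m i = m j := by
    intro i j h
    have ri := hrange i; have rj := hrange j
    rw [hmrec i, hmrec j] at h
    split_ifs at h <;> omega
  have hback : ∀ d i j, m (i + d) = m (j + d) → m i = m j := by
    intro d
    induction d with
    | zero => intro i j h; simpa using h
    | succ d ih =>
      intro i j h
      have e1 : i + (d + 1) = (i + d) + 1 := by omega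
      have e2 : j + (d + 1) = (j + d) + 1 := by omega
      rw [e1, e2] at h
      exact ih i j (hinj _ _ h)
  -- existence of a return time
  have hex : ∃ L, 0 < L ∧ m L = m 0 := by
    obtain ⟨x, hx, y, hy, hxy, hmxy⟩ :=
      Finset.exists_ne_map_eq_of_card_lt_of_maps_to
        (s := Finset.range (N.toNat + 2)) (t := Finset.Icc (0 : ℤ) N)
        (by rw [Finset.card_range, Int.card_Icc]; omega)
        (fun i _ => by
          simp only [Finset.mem_coe, Finset.mem_Icc]; exact ⟨(hrange i).1, (hrange i).2⟩)
    rcases Nat.lt_or_ge x y with hlt | hge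
    · refine ⟨y - x, by omega, ?_⟩
      apply hback x
      have : y - x + x = y := by omega
      rw [this, Nat.zero_add]
      exact hmxy.symm
    · have hlt : y < x := by omega
      refine ⟨x - y, by omega, ?_⟩
      apply hback y
      have : x - y + y = x := by omega
      rw [this, Nat.zero_add]
      exact hmxy
  set L := Nat.find hex with hLdef
  obtain ⟨hL0, hLm⟩ : 0 < L ∧ m L = m 0 := Nat.find_spec hex
  -- periodicity
  have hper : ∀ i, m (i + L) = m i := by
    intro i
    induction i with
    | zero => simpa using hLm
    | succ i ih =>
      have e : i + 1 + L = (i + L) + 1 := by omega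
      rw [e, hmrec (i + L), ih, ← hmrec i]
  have hperiter : ∀ t i, m (i + L * t) = m i := by
    intro t
    induction t with
    | zero => intro i; simp
    | succ t ih =>
      intro i
      have e : i + L * (t + 1) = (i + L * t) + L := by ring
      rw [e, hper, ih]
  have hmmod : ∀ i, m i = m (i % L) := by
    intro i
    conv_lhs => rw [← Nat.mod_add_div' i L]
    rw [mul_comm]
    exact hperiter (i / L) (i % L)
  -- distinctness within one period
  have hdist : ∀ i j, i < L → j < L → m i = m j → i = j := by
    have key : ∀ i j, i < j → j < L → m i = m j → False := by
      intro i j hij hjL h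
      have h0 : m ((j - i) + i) = m (0 + i) := by
        rw [Nat.sub_add_cancel (le_of_lt hij), Nat.zero_add]
        exact h.symm
      have h1 : m (j - i) = m 0 := hback i _ _ h0
      exact Nat.find_min hex (m := j - i) (by omega) ⟨by omega, h1⟩
    intro i j hi hj h
    rcases Nat.lt_trichotomy i j with hlt | heq | hgt
    · exact absurd h (fun hh => key i j hlt hj hh)
    · exact heq
    · exact absurd h (fun hh => key j i hgt hi hh.symm)
  -- counting
  classical
  set A := (Finset.range L).filter (fun i => m i < Q) with hAdef
  set B := (Finset.range L).filter (fun i => N - P < m i) with hBdef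
  have hsum0 : ∑ i ∈ Finset.range L,
      ((if m i < Q then P else 0) + (if N - P < m i then -Q else 0)) = 0 := by
    have h1 : ∀ i ∈ Finset.range L,
        ((if m i < Q then P else 0) + (if N - P < m i then -Q else 0))
          = m (i + 1) - m i := by
      intro i _
      have := hrange i
      rw [hmrec i]
      split_ifs <;> omega
    rw [Finset.sum_congr rfl h1, Finset.sum_range_sub, hLm, sub_self]
  rw [Finset.sum_add_distrib] at hsum0
  have hsA : ∑ i ∈ Finset.range L, (if m i < Q then P else 0) = (A.card : ℤ) * P := by
    rw [← Finset.sum_filter, Finset.sum_const, nsmul_eq_mul]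
  have hsB : ∑ i ∈ Finset.range L, (if N - P < m i then -Q else 0) = (B.card : ℤ) * (-Q) := by
    rw [← Finset.sum_filter, Finset.sum_const, nsmul_eq_mul]
  rw [hsA, hsB] at hsum0
  have heq : (A.card : ℤ) * P = (B.card : ℤ) * Q := by linarith
  -- injectivity on the filters
  have hinjA : Set.InjOn m ↑A := by
    intro i hi j hj h
    simp only [hAdef, Finset.coe_filter, Set.mem_setOf_eq, Finset.mem_range] at hi hj
    exact hdist i j hi.1 hj.1 h
  have hinjB : Set.InjOn m ↑B := by
    intro i hi j hj h
    simp only [hBdef, Finset.coe_filter, Set.mem_setOf_eq, Finset.mem_range] at hi hj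
    exact hdist i j hi.1 hj.1 h
  have hinjL : Set.InjOn m ↑(Finset.range L) := by
    intro i hi j hj h
    simp only [Finset.coe_range, Set.mem_Iio] at hi hj
    exact hdist i j hi hj h
  have hAle : (A.card : ℤ) ≤ Q := by
    have h1 : A.card ≤ (Finset.Icc (0 : ℤ) (Q - 1)).card := by
      apply Finset.card_le_card_of_injOn m ?_ hinjA
      intro i hi
      simp only [hAdef, Finset.mem_coe, Finset.mem_filter, Finset.mem_range] at hi
      have := hrange i
      simp only [Finset.mem_coe, Finset.mem_Icc]
      omega
    rw [Int.card_Icc] at h1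
    omega
  have hBle : (B.card : ℤ) ≤ P := by
    have h1 : B.card ≤ (Finset.Icc (N - P + 1) N).card := by
      apply Finset.card_le_card_of_injOn m ?_ hinjB
      intro i hi
      simp only [hBdef, Finset.mem_coe, Finset.mem_filter, Finset.mem_range] at hi
      have := hrange i
      simp only [Finset.mem_coe, Finset.mem_Icc]
      omega
    rw [Int.card_Icc] at h1
    omega
  have h0AB : 0 ∈ A ∨ 0 ∈ B := by
    have := hrange 0
    by_cases h : m 0 < Q
    · left; simp only [hAdef, Finset.mem_filter, Finset.mem_range]; exact ⟨hL0, h⟩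
    · right; simp only [hBdef, Finset.mem_filter, Finset.mem_range]
      exact ⟨hL0, by omega⟩
  have hApos : 0 < A.card := by
    rcases h0AB with h | h
    · exact Finset.card_pos.mpr ⟨0, h⟩
    · have hB : 0 < B.card := Finset.card_pos.mpr ⟨0, h⟩
      rcases Nat.eq_zero_or_pos A.card with h0 | h0
      · exfalso
        rw [h0] at heq
        have hpos : (0:ℤ) < (B.card : ℤ) * Q :=
          mul_pos (by exact_mod_cast hB) (by linarith)
        push_cast at heq
        linarith
      · exact h0
  have hQdvd : Q ∣ (A.card : ℤ) := by
    apply hcop.symm.dvd_of_dvd_mul_right (y := (A.card : ℤ))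
    rw [heq]
    exact Dvd.intro_left _ rfl
  have hAQ : (A.card : ℤ) = Q := by
    have := Int.le_of_dvd (by exact_mod_cast hApos) hQdvd
    omega
  have hBP : (B.card : ℤ) = P := by
    have h1 : (B.card : ℤ) * Q = P * Q := by rw [← heq, hAQ]; ring
    exact mul_right_cancel₀ (by omega) h1
  -- surjectivity onto [0, N]
  have himA : A.image m = Finset.Icc (0 : ℤ) (Q - 1) := by
    apply Finset.eq_of_subset_of_card_le
    · intro v hv
      obtain ⟨i, hi, rfl⟩ := Finset.mem_image.mp hv
      simp only [hAdef, Finset.mem_filter, Finset.mem_range] at hi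
      have := hrange i
      simp only [Finset.mem_Icc]
      omega
    · rw [Finset.card_image_of_injOn hinjA, Int.card_Icc]
      omega
  have himB : B.image m = Finset.Icc (N - P + 1) N := by
    apply Finset.eq_of_subset_of_card_le
    · intro v hv
      obtain ⟨i, hi, rfl⟩ := Finset.mem_image.mp hv
      simp only [hBdef, Finset.mem_filter, Finset.mem_range] at hi
      have := hrange i
      simp only [Finset.mem_Icc]
      omega
    · rw [Finset.card_image_of_injOn hinjB, Int.card_Icc]
      omega
  have hcover : Finset.Icc (0 : ℤ) N ⊆ (Finset.range L).image m := by
    intro v hv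
    simp only [Finset.mem_Icc] at hv
    by_cases hvQ : v < Q
    · have : v ∈ A.image m := by rw [himA]; simp only [Finset.mem_Icc]; omega
      exact Finset.image_subset_image (Finset.filter_subset _ _) this
    · have : v ∈ B.image m := by rw [himB]; simp only [Finset.mem_Icc]; omega
      exact Finset.image_subset_image (Finset.filter_subset _ _) this
  have himg : (Finset.range L).image m = Finset.Icc (0 : ℤ) N := by
    apply subset_antisymm ?_ hcover
    intro v hv
    obtain ⟨i, _, rfl⟩ := Finset.mem_image.mp hv
    have := hrange i
    simp only [Finset.mem_Icc]
    omega
  have hLN : (L : ℤ) = N + 1 := by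
    have h2 : ((Finset.range L).image m).card = L := by
      rw [Finset.card_image_of_injOn hinjL, Finset.card_range]
    rw [himg, Int.card_Icc] at h2
    omega
  -- conclusion
  have hcast : ∀ t : ℕ, (t : ℤ) % (N + 1) = ((t % L : ℕ) : ℤ) := by
    intro t
    rw [← hLN, Int.natCast_mod]
  intro i j
  constructor
  · intro h
    rw [hcast i, hcast j]
    have h2 : m (i % L) = m (j % L) := by rw [← hmmod, ← hmmod]; exact h
    have := hdist (i % L) (j % L) (Nat.mod_lt _ hL0) (Nat.mod_lt _ hL0) h2
    exact_mod_cast this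
  · intro h
    rw [hcast i, hcast j] at h
    have h2 : i % L = j % L := by exact_mod_cast h
    rw [hmmod i, hmmod j, h2]

theorem qfactsA (α : ℝ) (hirr : Irrational α)
    (a q : ℤ → ℤ) (β : ℕ → ℝ)
    (hβ0 : β 0 = α)
    (hβ : ∀ k : ℕ, β (k + 1) = 1 / (β k - ⌊β k⌋))
    (ha : ∀ k : ℕ, a (k : ℤ) = ⌊β k⌋)
    (hqm : q (-1) = 0) (hq0 : q 0 = 1)
    (hqrec : ∀ k : ℤ, 0 ≤ k → q (k + 1) = a (k + 1) * q k + q (k - 1)) :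
    ∀ j : ℕ, 1 ≤ q (j : ℤ) ∧ 0 ≤ q ((j : ℤ) - 1) ∧ IsCoprime (q (j : ℤ)) (q ((j : ℤ) - 1)) := by
  have hβirr : ∀ j : ℕ, Irrational (β j) := by
    intro j
    induction j with
    | zero => rw [hβ0]; exact hirr
    | succ j ih =>
      rw [hβ j, one_div]
      exact (ih.sub_intCast ⌊β j⌋).inv
  have hfrac : ∀ j : ℕ, 0 < β j - ⌊β j⌋ ∧ β j - ⌊β j⌋ < 1 := by
    intro j
    have h1 : β j ≠ (⌊β j⌋ : ℝ) := (hβirr j).ne_int ⌊β j⌋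
    have h2 := Int.floor_le (β j)
    have h3 := Int.lt_floor_add_one (β j)
    constructor
    · rcases lt_or_eq_of_le h2 with h | h
      · linarith
      · exact absurd h.symm h1
    · linarith
  have hage : ∀ j : ℕ, 1 ≤ a ((j : ℤ) + 1) := by
    intro j
    have h1 : (1 : ℝ) ≤ β (j + 1) := by
      rw [hβ j]
      exact one_le_one_div (hfrac j).1 (le_of_lt (hfrac j).2)
    have h2 : a (((j + 1 : ℕ) : ℤ)) = ⌊β (j + 1)⌋ := ha (j + 1)
    have h3 : (((j + 1 : ℕ)) : ℤ) = (j : ℤ) + 1 := by push_cast; ring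
    rw [h3] at h2
    rw [h2]
    exact Int.le_floor.mpr (by exact_mod_cast h1)
  intro j
  induction j with
  | zero =>
    refine ⟨by rw [Nat.cast_zero, hq0], ?_, ?_⟩
    · rw [show ((0 : ℕ) : ℤ) - 1 = -1 by ring, hqm]
    · rw [Nat.cast_zero, hq0, show (0:ℤ) - 1 = -1 by ring, hqm]
      exact isCoprime_one_left
  | succ j ih =>
    obtain ⟨ih1, ih2, ih3⟩ := ih
    have hrec := hqrec (j : ℤ) (by positivity)
    have hc1 : (((j + 1 : ℕ)) : ℤ) = (j : ℤ) + 1 := by push_cast; ring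
    have hc2 : (((j + 1 : ℕ)) : ℤ) - 1 = (j : ℤ) := by push_cast; ring
    have hmul : 1 ≤ a ((j : ℤ) + 1) * q (j : ℤ) := by
      have := mul_le_mul (hage j) ih1 zero_le_one (le_trans zero_le_one (hage j))
      linarith
    refine ⟨?_, ?_, ?_⟩
    · rw [hc1, hrec]; omega
    · rw [hc2]; omega
    · rw [hc2, hc1, hrec]
      have h4 : IsCoprime (q ((j:ℤ) - 1) + a ((j:ℤ) + 1) * q (j:ℤ)) (q (j:ℤ)) :=
        ih3.symm.add_mul_right_left (a ((j:ℤ) + 1))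
      rw [add_comm] at h4
      exact h4



/-- Cyclicity of the three-distance ordering: the recursively defined sequence
n_0 = 0, n_{i+1} = n_i + Δ_i, extended to all i ≥ 0, satisfies n_{N+1} = 0 and
more generally n_i = n_j if and only if i ≡ j (mod N+1). -/
theorem stmt_13
    (α : ℝ) (hirr : Irrational α)
    (a p q : ℤ → ℤ) (β : ℕ → ℝ)
    (hβ0 : β 0 = α)
    (hβ : ∀ k : ℕ, β (k + 1) = 1 / (β k - ⌊β k⌋))
    (ha : ∀ k : ℕ, a (k : ℤ) = ⌊β k⌋)
    (hqm : q (-1) = 0) (hq0 : q 0 = 1)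
    (hpm : p (-1) = 1) (hp0 : p 0 = a 0)
    (hqrec : ∀ k : ℤ, 0 ≤ k → q (k + 1) = a (k + 1) * q k + q (k - 1))
    (hprec : ∀ k : ℤ, 0 ≤ k → p (k + 1) = a (k + 1) * p k + p (k - 1))
    (D : ℤ → ℝ) (hD : ∀ k : ℤ, D k = (q k : ℝ) * α - (p k : ℝ))
    (N : ℕ) (hN1 : 1 ≤ N) (k : ℕ) (r s : ℤ)
    (hk : q (k : ℤ) + q ((k : ℤ) - 1) ≤ (N : ℤ) ∧ (N : ℤ) < q ((k : ℤ) + 1) + q (k : ℤ))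
    (hr : 1 ≤ r ∧ r ≤ a ((k : ℤ) + 1)) (hs : 0 ≤ s ∧ s ≤ q (k : ℤ) - 1)
    (hN : (N : ℤ) = r * q (k : ℤ) + q ((k : ℤ) - 1) + s)
    (n : ℕ → ℤ) (hn0 : n 0 = 0)
    (hrec : ∀ i : ℕ, n (i + 1) = n i +
      (if 0 ≤ n i + (-1) ^ k * q (k : ℤ) ∧ n i + (-1) ^ k * q (k : ℤ) ≤ (N : ℤ) then
        (-1) ^ k * q (k : ℤ)
      else if 0 ≤ n i + (-1) ^ (k + 1) * (q ((k : ℤ) - 1) + r * q (k : ℤ)) ∧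
          n i + (-1) ^ (k + 1) * (q ((k : ℤ) - 1) + r * q (k : ℤ)) ≤ (N : ℤ) then
        (-1) ^ (k + 1) * (q ((k : ℤ) - 1) + r * q (k : ℤ))
      else (-1) ^ (k + 1) * (q ((k : ℤ) - 1) + (r - 1) * q (k : ℤ)))) :
    n (N + 1) = 0 ∧
      ∀ i j : ℕ, n i = n j ↔ (i : ℤ) % ((N : ℤ) + 1) = (j : ℤ) % ((N : ℤ) + 1) := by
  obtain ⟨hr1, -⟩ := hr
  obtain ⟨hs0, hs1⟩ := hs
  obtain ⟨hk1, -⟩ := hk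
  obtain ⟨hqk1, hqk2, hqk3⟩ := qfactsA α hirr a q β hβ0 hβ ha hqm hq0 hqrec k
  rw [show q ((k:ℤ) - 1) + (r - 1) * q (k:ℤ) = q ((k:ℤ) - 1) + r * q (k:ℤ) - q (k:ℤ)
    from by ring] at hrec
  set P := q (k:ℤ) with hP
  set Q := q ((k:ℤ) - 1) + r * P with hQ
  have hN0 : (0:ℤ) ≤ (N:ℤ) := by positivity
  have hQpos : 1 ≤ Q := by
    have hrP : 1 * 1 ≤ r * P := mul_le_mul hr1 hqk1 zero_le_one (le_trans zero_le_one hr1)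
    rw [hQ]; linarith [hqk2]
  have hcop2 : IsCoprime P Q := hqk3.add_mul_right_right r
  have hNQ : (N:ℤ) = Q + s := by rw [hQ]; linarith [hN]
  have hPN : P ≤ (N:ℤ) := by linarith [hk1, hqk2]
  have hmodNN : ((N + 1 : ℕ) : ℤ) % ((N:ℤ) + 1) = ((0 : ℕ) : ℤ) % ((N:ℤ) + 1) := by
    push_cast
    rw [Int.emod_self, Int.zero_emod]
  rcases Nat.even_or_odd k with hpar | hpar
  · -- k even
    have hpk : ((-1:ℤ))^k = 1 := hpar.neg_one_pow
    have hpk1 : ((-1:ℤ))^(k+1) = -1 := (hpar.add_one).neg_one_pow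
    simp only [hpk, hpk1, one_mul, neg_one_mul, ← sub_eq_add_neg, neg_sub] at hrec
    have Hiff := keyA P Q s (N:ℤ) hqk1 hQpos hcop2 hs0 hs1 hNQ hPN n
      ⟨by rw [hn0], by rw [hn0]; exact hN0⟩ hrec
    refine ⟨?_, Hiff⟩
    have h2 := (Hiff (N + 1) 0).mpr hmodNN
    rw [hn0] at h2
    exact h2
  · -- k odd
    have hpk : ((-1:ℤ))^k = -1 := hpar.neg_one_pow
    have hpk1 : ((-1:ℤ))^(k+1) = 1 := (hpar.add_one).neg_one_pow
    simp only [hpk, hpk1, one_mul, neg_one_mul, ← sub_eq_add_neg] at hrec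
    set m : ℕ → ℤ := fun i => (N:ℤ) - n i with hm
    have hmrec : ∀ i, m (i + 1) = m i + (if 0 ≤ m i + P ∧ m i + P ≤ (N:ℤ) then P
        else if 0 ≤ m i - Q ∧ m i - Q ≤ (N:ℤ) then -Q else P - Q) := by
      intro i
      simp only [hm]
      rw [hrec i]
      split_ifs <;> omega
    have Hiff := keyA P Q s (N:ℤ) hqk1 hQpos hcop2 hs0 hs1 hNQ hPN m
      ⟨by simp [hm, hn0], by simp [hm, hn0]⟩ hmrec
    refine ⟨?_, fun i j => ?_⟩
    · have h2 := (Hiff (N + 1) 0).mpr hmodNN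
      simp only [hm] at h2
      omega
    · rw [← Hiff i j]
      simp only [hm]
      constructor <;> intro <;> omega
end

section
/- Main theorem: Let N ∈ ℕ, α irrational with convergent denominators q_k, K the largest integer with q_K ≤ N, γ ∈ ℝ, and n' the unique integer in [0, N] minimizing {nα - γ} over 0 ≤ n ≤ N. Then the sum over 0 ≤ n ≤ N, n ≠ n', of 1/{nα - γ} is less than 4N(log q_K + 1) + 2 q_{K+1}(log(N/q_K) + 1). -/
lemma harm_aux (M : ℕ) : ∑ j ∈ Finset.range M, (1:ℝ)/(j+1) ≤ Real.log M + 1 := by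
  induction M with
  | zero => simp
  | succ M ih =>
    rcases Nat.eq_zero_or_pos M with h | hM
    · subst h; simp
    rw [Finset.sum_range_succ]
    have hM' : (0:ℝ) < M := by exact_mod_cast hM
    have hlog : Real.log M - Real.log (M+1) ≤ -(1/((M:ℝ)+1)) := by
      have hx : (0:ℝ) < (M:ℝ)/((M:ℝ)+1) := by positivity
      have h2 := Real.log_le_sub_one_of_pos hx
      rw [Real.log_div (by positivity) (by positivity)] at h2
      have h1 : (M:ℝ)/((M:ℝ)+1) - 1 = -(1/((M:ℝ)+1)) := by field_simp; ring
      linarith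
    push_cast
    linarith [ih]

lemma lemA_aux (g : ℕ → ℝ) (δ : ℝ) (hδ : 0 < δ) :
    ∀ (c : ℕ) (s : Finset ℕ), s.card ≤ c → ∀ n₀ ∈ s, 0 ≤ g n₀ →
    (∀ n ∈ s, g n₀ ≤ g n) → (∀ m ∈ s, ∀ n ∈ s, m ≠ n → δ ≤ |g m - g n|) →
    ∑ n ∈ s.erase n₀, 1/g n ≤ ∑ j ∈ Finset.range (s.card - 1), 1/(g n₀ + (j+1)*δ) := by
  intro c
  induction c with
  | zero =>
    intro s hs n₀ hn₀ _ _ _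
    have := Finset.card_eq_zero.mp (Nat.le_zero.mp hs)
    simp [this] at hn₀
  | succ c ih =>
    intro s hs n₀ hn₀ h0 hmin hsep
    rcases Finset.eq_empty_or_nonempty (s.erase n₀) with he | hne
    · rw [he]
      simp only [Finset.sum_empty]
      apply Finset.sum_nonneg
      intro j _
      have : 0 < g n₀ + ((j:ℝ)+1)*δ := by positivity
      positivity
    · obtain ⟨n₁, hn₁, hn₁min⟩ := Finset.exists_min_image (s.erase n₀) g hne
      have hn₁s : n₁ ∈ s := Finset.mem_of_mem_erase hn₁
      have hn₁ne : n₁ ≠ n₀ := Finset.ne_of_mem_erase hn₁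
      have hgap : g n₀ + δ ≤ g n₁ := by
        have h1 := hsep n₁ hn₁s n₀ hn₀ hn₁ne
        have h2 := hmin n₁ hn₁s
        rw [abs_of_nonneg (by linarith)] at h1
        linarith
      -- apply ih to s' := s.erase n₀ with min n₁
      set s' := s.erase n₀ with hs'
      have hcard' : s'.card = s.card - 1 := Finset.card_erase_of_mem hn₀
      have hcards : 1 ≤ s.card := Finset.card_pos.mpr ⟨n₀, hn₀⟩
      have hIH := ih s' (by omega) n₁ hn₁ (by linarith) hn₁min
        (fun m hm n hn hmn => hsep m (Finset.mem_of_mem_erase hm) n (Finset.mem_of_mem_erase hn) hmn)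
      -- sum over s.erase n₀ = 1/g n₁ + sum over s'.erase n₁
      have hsplit : ∑ n ∈ s'.erase n₁, 1/g n + 1/g n₁ = ∑ n ∈ s', 1/g n :=
        Finset.sum_erase_add s' _ hn₁
      have hterm : ∀ j ∈ Finset.range (s'.card - 1), 1/(g n₁ + (j+1)*δ) ≤ 1/(g n₀ + ((j+1)+1)*δ) := by
        intro j _
        apply one_div_le_one_div_of_le
        · positivity
        · push_cast; linarith
      have hbound : ∑ n ∈ s'.erase n₁, 1/g n ≤ ∑ j ∈ Finset.range (s'.card - 1), 1/(g n₀ + ((j+1)+1)*δ) :=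
        le_trans hIH (Finset.sum_le_sum hterm)
      have hfirst : 1/g n₁ ≤ 1/(g n₀ + (0+1)*δ) := by
        apply one_div_le_one_div_of_le
        · positivity
        · push_cast; linarith
      have hcard1 : 1 ≤ s'.card := Finset.card_pos.mpr ⟨n₁, hn₁⟩
      have hrange : s.card - 1 = (s'.card - 1) + 1 := by omega
      rw [← hsplit, hrange, Finset.sum_range_succ']
      push_cast
      push_cast at hbound hfirst
      apply add_le_add hbound
      convert hfirst using 2

set_option maxHeartbeats 2000000

/-- Main theorem: with K the largest integer such that q_K ≤ N and n' the minimizer of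
{nα - γ} over 0 ≤ n ≤ N, one has
∑_{0 ≤ n ≤ N, n ≠ n'} 1/{nα - γ} < 4N(log q_K + 1) + 2 q_{K+1}(log(N/q_K) + 1). -/
theorem stmt_14
    (α : ℝ) (hirr : Irrational α)
    (a p q : ℤ → ℤ) (β : ℕ → ℝ)
    (hβ0 : β 0 = α)
    (hβ : ∀ k : ℕ, β (k + 1) = 1 / (β k - ⌊β k⌋))
    (ha : ∀ k : ℕ, a (k : ℤ) = ⌊β k⌋)
    (hqm : q (-1) = 0) (hq0 : q 0 = 1)
    (hpm : p (-1) = 1) (hp0 : p 0 = a 0)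
    (hqrec : ∀ k : ℤ, 0 ≤ k → q (k + 1) = a (k + 1) * q k + q (k - 1))
    (hprec : ∀ k : ℤ, 0 ≤ k → p (k + 1) = a (k + 1) * p k + p (k - 1))
    (D : ℤ → ℝ) (hD : ∀ k : ℤ, D k = (q k : ℝ) * α - (p k : ℝ))
    (N : ℕ) (hN1 : 1 ≤ N) (K : ℕ)
    (hK : q (K : ℤ) ≤ (N : ℤ)) (hKmax : ∀ j : ℕ, q (j : ℤ) ≤ (N : ℤ) → j ≤ K)
    (γ : ℝ) (n' : ℕ) (hn'le : n' ≤ N)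
    (hmin : ∀ m : ℕ, m ≤ N → Int.fract ((n' : ℝ) * α - γ) ≤ Int.fract ((m : ℝ) * α - γ)) :
    ∑ n ∈ (Finset.range (N + 1)).erase n', 1 / Int.fract ((n : ℝ) * α - γ) <
      4 * (N : ℝ) * (Real.log (q (K : ℤ) : ℝ) + 1) +
        2 * (q ((K : ℤ) + 1) : ℝ) * (Real.log ((N : ℝ) / (q (K : ℤ) : ℝ)) + 1) := by
  -- irrationality of all β k
  have hβirr : ∀ k : ℕ, Irrational (β k) := by
    intro k
    induction k with
    | zero => rwa [hβ0]
    | succ k ih =>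
      rw [hβ k, one_div]
      exact (Irrational.sub_intCast ih ⌊β k⌋).inv
  -- fract (β k) positive
  have hfrpos : ∀ k : ℕ, 0 < β k - ⌊β k⌋ := by
    intro k
    have h1 : β k - (⌊β k⌋ : ℝ) ≠ 0 := by
      intro h
      exact (hβirr k).ne_int ⌊β k⌋ (by linarith)
    have h2 := Int.fract_nonneg (β k)
    rw [Int.fract] at h2
    exact lt_of_le_of_ne h2 (Ne.symm h1)
  have hβgt : ∀ k : ℕ, 1 < β (k + 1) := by
    intro k
    rw [hβ k]
    have h1 := hfrpos k
    have h2 : β k - ⌊β k⌋ < 1 := Int.fract_lt_one (β k)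
    rw [one_div]
    exact (one_lt_inv_iff₀).2 ⟨h1, h2⟩
  have hβpos : ∀ k : ℕ, 0 < β (k + 1) := fun k => lt_trans one_pos (hβgt k)
  have hβne : ∀ k : ℕ, β (k + 1) ≠ 0 := fun k => ne_of_gt (hβpos k)
  -- β k - a k = 1 / β (k+1)
  have hfr : ∀ k : ℕ, (β k - (a k : ℝ)) * β (k + 1) = 1 := by
    intro k
    have hne2 : β k - (⌊β k⌋ : ℝ) ≠ 0 := ne_of_gt (hfrpos k)
    rw [ha k, hβ k]
    field_simp
  -- a_{k+1} ≥ 1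
  have ha1 : ∀ k : ℕ, 1 ≤ a ((k : ℤ) + 1) := by
    intro k
    have h1 : ((k : ℤ) + 1) = ((k + 1 : ℕ) : ℤ) := by push_cast; ring
    rw [h1, ha (k + 1)]
    have := hβgt k
    exact Int.le_floor.2 (by push_cast; linarith)
  -- q facts
  have hqfacts : ∀ k : ℕ, 0 ≤ q ((k : ℤ) - 1) ∧ q ((k : ℤ) - 1) ≤ q (k : ℤ) ∧ 1 ≤ q (k : ℤ) := by
    intro k
    induction k with
    | zero => norm_num [hqm, hq0]
    | succ k ih =>
      obtain ⟨h1, h2, h3⟩ := ih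
      have hrec := hqrec (k : ℤ) (by positivity)
      have ha' := ha1 k
      have hcast : ((k + 1 : ℕ) : ℤ) = (k : ℤ) + 1 := by push_cast; ring
      have hs : (k : ℤ) + 1 - 1 = (k : ℤ) := by ring
      rw [hcast, hs]
      refine ⟨by linarith, by nlinarith, by nlinarith⟩
  have hqpos : ∀ k : ℕ, 1 ≤ q (k : ℤ) := fun k => (hqfacts k).2.2
  have hqmono : ∀ k : ℕ, q (k : ℤ) ≤ q ((k : ℤ) + 1) := by
    intro k
    have := (hqfacts (k + 1)).2.1
    have hcast : ((k + 1 : ℕ) : ℤ) = (k : ℤ) + 1 := by push_cast; ring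
    rw [hcast] at this
    simpa using this
  -- the key identity
  have hiden : ∀ k : ℕ, ((q (k : ℤ) : ℝ) * β (k + 1) + (q ((k : ℤ) - 1) : ℝ)) * α
      = (p (k : ℤ) : ℝ) * β (k + 1) + (p ((k : ℤ) - 1) : ℝ) := by
    intro k
    induction k with
    | zero =>
      have h0 := hfr 0
      rw [hβ0] at h0
      norm_num at h0
      norm_num [hqm, hq0, hpm, hp0]
      linear_combination h0
    | succ k ih =>
      have hfr' := hfr (k + 1)
      have hcast : ((k + 1 : ℕ) : ℤ) = (k : ℤ) + 1 := by push_cast; ring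
      have hq1 : ((q ((k : ℤ) + 1) : ℝ)) = (a ((k:ℤ)+1) : ℝ) * (q (k:ℤ) : ℝ) + (q ((k:ℤ)-1) : ℝ) := by
        exact_mod_cast congrArg (fun z : ℤ => (z : ℝ)) (hqrec (k : ℤ) (by positivity))
      have hp1 : ((p ((k : ℤ) + 1) : ℝ)) = (a ((k:ℤ)+1) : ℝ) * (p (k:ℤ) : ℝ) + (p ((k:ℤ)-1) : ℝ) := by
        exact_mod_cast congrArg (fun z : ℤ => (z : ℝ)) (hprec (k : ℤ) (by positivity))
      rw [hcast]
      have hsimp : (k : ℤ) + 1 - 1 = (k : ℤ) := by ring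
      rw [hsimp, hq1, hp1]
      rw [hcast] at hfr'
      linear_combination β (k+1+1) * ih - ((q (k:ℤ) : ℝ) * α - (p (k:ℤ) : ℝ)) * hfr'
  -- D recursion
  have hDrec : ∀ k : ℕ, D (k : ℤ) * β (k + 1) = - D ((k : ℤ) - 1) := by
    intro k
    rw [hD, hD]
    linear_combination hiden k
  -- determinant
  have hdet : ∀ k : ℕ, p (k : ℤ) * q ((k : ℤ) - 1) - p ((k : ℤ) - 1) * q (k : ℤ) = (-1) ^ (k + 1) := by
    intro k
    induction k with
    | zero => norm_num [hqm, hq0, hpm, hp0]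
    | succ k ih =>
      have hrecq := hqrec (k : ℤ) (by positivity)
      have hrecp := hprec (k : ℤ) (by positivity)
      have hcast : ((k + 1 : ℕ) : ℤ) = (k : ℤ) + 1 := by push_cast; ring
      have hs : (k : ℤ) + 1 - 1 = (k : ℤ) := by ring
      rw [hcast, hs, hrecq, hrecp, pow_succ]
      linear_combination (-1 : ℤ) * ih
  -- e k = (-1)^k D k > 0
  set e : ℕ → ℝ := fun k => (-1 : ℝ) ^ k * D (k : ℤ) with he
  have hDm : D (-1) = -1 := by rw [hD]; norm_num [hqm, hpm]
  have hepos : ∀ k : ℕ, 0 < e k := by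
    intro k
    induction k with
    | zero =>
      have h := hDrec 0
      norm_num [hDm] at h
      simp only [he]
      norm_num
      nlinarith [hβpos 0]
    | succ k ih =>
      have h := hDrec (k + 1)
      have hs' : ((k + 1 : ℕ) : ℤ) - 1 = (k : ℤ) := by push_cast; ring
      rw [hs'] at h
      have hkey : e (k+1) * β (k + 1 + 1) = e k := by
        simp only [he, pow_succ]
        linear_combination (-(-1 : ℝ) ^ k) * h
      nlinarith [hβpos (k + 1), ih]
  have hedec : ∀ k : ℕ, e (k + 1) < e k := by
    intro k
    have h := hDrec (k + 1)
    have hs' : ((k + 1 : ℕ) : ℤ) - 1 = (k : ℤ) := by push_cast; ring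
    rw [hs'] at h
    have hkey : e (k+1) * β (k + 1 + 1) = e k := by
      simp only [he, pow_succ]
      linear_combination (-(-1 : ℝ) ^ k) * h
    nlinarith [hβgt (k + 1), hepos (k + 1)]
  -- 1 = q_{k+1} e_k + q_k e_{k+1}
  have hone : ∀ k : ℕ, (q ((k : ℤ) + 1) : ℝ) * e k + (q (k : ℤ) : ℝ) * e (k + 1) = 1 := by
    intro k
    have hdet' := hdet (k + 1)
    have hcast : ((k + 1 : ℕ) : ℤ) = (k : ℤ) + 1 := by push_cast; ring
    have hs : (k : ℤ) + 1 - 1 = (k : ℤ) := by ring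
    rw [hcast, hs] at hdet'
    have hdetR : (p ((k:ℤ)+1) : ℝ) * (q (k:ℤ) : ℝ) - (p (k:ℤ) : ℝ) * (q ((k:ℤ)+1) : ℝ) = (-1 : ℝ) ^ (k + 1 + 1) := by
      exact_mod_cast congrArg (fun z : ℤ => (z : ℝ)) hdet'
    have hsq : (-1 : ℝ) ^ k * (-1 : ℝ) ^ k = 1 := by
      rw [← pow_add]
      exact Even.neg_one_pow ⟨k, rfl⟩
    simp only [he]
    rw [hD, hD]
    push_cast at hdetR ⊢
    linear_combination (-1 : ℝ) ^ k * hdetR + hsq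
  have hqposR : ∀ k : ℕ, (1 : ℝ) ≤ (q (k : ℤ) : ℝ) := by
    intro k; exact_mod_cast hqpos k
  have hqmonoR : ∀ k : ℕ, (q (k : ℤ) : ℝ) ≤ (q ((k : ℤ) + 1) : ℝ) := by
    intro k; exact_mod_cast hqmono k
  have hq1posR : ∀ k : ℕ, (1 : ℝ) ≤ (q ((k : ℤ) + 1) : ℝ) := by
    intro k; exact le_trans (hqposR k) (hqmonoR k)
  have helb : ∀ k : ℕ, 1 / (2 * (q ((k : ℤ) + 1) : ℝ)) < e k := by
    intro k
    have h1 := hone k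
    have h2 : (q (k : ℤ) : ℝ) * e (k + 1) < (q ((k : ℤ) + 1) : ℝ) * e k := by
      calc (q (k : ℤ) : ℝ) * e (k + 1) ≤ (q ((k : ℤ) + 1) : ℝ) * e (k + 1) := by
            apply mul_le_mul_of_nonneg_right (hqmonoR k) (le_of_lt (hepos (k+1)))
        _ < (q ((k : ℤ) + 1) : ℝ) * e k := by
            apply mul_lt_mul_of_pos_left (hedec k) (by linarith [hq1posR k])
    have h3 : 1 < 2 * ((q ((k : ℤ) + 1) : ℝ) * e k) := by linarith
    rw [div_lt_iff₀ (by linarith [hq1posR k])]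
    linarith
  -- best approximation
  have hBA : ∀ (k : ℕ) (m pp : ℤ), 1 ≤ m → m < q ((k : ℤ) + 1) → e k ≤ |(m : ℝ) * α - (pp : ℝ)| := by
    intro k m pp hm1 hm2
    have hdet' := hdet (k + 1)
    have hcast : ((k + 1 : ℕ) : ℤ) = (k : ℤ) + 1 := by push_cast; ring
    have hs : (k : ℤ) + 1 - 1 = (k : ℤ) := by ring
    rw [hcast, hs] at hdet'
    have hsqz : (-1 : ℤ) ^ k * (-1 : ℤ) ^ k = 1 := by
      rw [← pow_add]; exact Even.neg_one_pow ⟨k, rfl⟩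
    set x : ℤ := (-1) ^ k * (m * p ((k:ℤ)+1) - pp * q ((k:ℤ)+1)) with hx
    set y : ℤ := (-1) ^ k * (pp * q (k:ℤ) - m * p (k:ℤ)) with hy
    have hmeq : x * q (k:ℤ) + y * q ((k:ℤ)+1) = m := by
      rw [hx, hy]
      linear_combination ((-1:ℤ)^k * m) * hdet' + m * hsqz
    have hpeq : x * p (k:ℤ) + y * p ((k:ℤ)+1) = pp := by
      rw [hx, hy]
      linear_combination ((-1:ℤ)^k * pp) * hdet' + pp * hsqz
    have hmeqR : (x : ℝ) * (q (k:ℤ) : ℝ) + (y : ℝ) * (q ((k:ℤ)+1) : ℝ) = (m : ℝ) := by exact_mod_cast congrArg (fun z : ℤ => (z : ℝ)) hmeq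
    have hpeqR : (x : ℝ) * (p (k:ℤ) : ℝ) + (y : ℝ) * (p ((k:ℤ)+1) : ℝ) = (pp : ℝ) := by exact_mod_cast congrArg (fun z : ℤ => (z : ℝ)) hpeq
    have hD_e : ∀ j : ℕ, D (j : ℤ) = (-1:ℝ)^j * e j := by
      intro j
      simp only [he]
      rw [← mul_assoc, ← pow_add, Even.neg_one_pow ⟨j, rfl⟩, one_mul]
    have hDk := hD_e k
    have hDk1 : D ((k:ℤ) + 1) = (-1:ℝ)^(k+1) * e (k+1) := by
      rw [← hcast]; exact hD_e (k+1)
    have h1 := hD (k : ℤ)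
    have h2 := hD ((k : ℤ) + 1)
    rw [hDk] at h1
    rw [hDk1] at h2
    have hxy : (m : ℝ) * α - (pp : ℝ) = (-1:ℝ)^k * ((x:ℝ) * e k - (y:ℝ) * e (k+1)) := by
      linear_combination (-α) * hmeqR + hpeqR - (x:ℝ) * h1 - (y:ℝ) * h2
    have habs : |(m : ℝ) * α - (pp : ℝ)| = |(x:ℝ) * e k - (y:ℝ) * e (k+1)| := by
      rw [hxy, abs_mul, abs_pow, abs_neg, abs_one, one_pow, one_mul]
    rw [habs]
    have hek := hepos k
    have hek1 := hepos (k + 1)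
    have hq1 : 1 ≤ q ((k:ℤ)+1) := le_trans (hqpos k) (hqmono k)
    rcases lt_trichotomy y 0 with hy0 | hy0 | hy0
    · -- y ≤ -1, then x ≥ 1
      have hy1 : (y : ℝ) ≤ -1 := by
        have h' : y ≤ -1 := by omega
        exact_mod_cast h'
      have hx1 : 1 ≤ x := by
        by_contra hc
        push_neg at hc
        have hx0 : x ≤ 0 := by omega
        have hxq : x * q (k:ℤ) ≤ 0 := mul_nonpos_of_nonpos_of_nonneg hx0 (by linarith [hqpos k])
        have hyq : y * q ((k:ℤ)+1) ≤ -q ((k:ℤ)+1) := by nlinarith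
        linarith [hmeq, hm1]
      have hx1R : (1:ℝ) ≤ (x:ℝ) := by exact_mod_cast hx1
      have hle : e k ≤ (x:ℝ) * e k - (y:ℝ) * e (k+1) := by nlinarith
      exact le_trans hle (le_abs_self _)
    · -- y = 0 : x ≠ 0
      have hyR : (y : ℝ) = 0 := by exact_mod_cast hy0
      have hx0 : x ≠ 0 := by
        intro hc
        rw [hc, hy0] at hmeq
        simp at hmeq
        omega
      have hx1 : (1:ℝ) ≤ |(x:ℝ)| := by
        have h' : 1 ≤ |x| := Int.one_le_abs hx0
        exact_mod_cast h'
      have heq : |(x:ℝ) * e k - (y:ℝ) * e (k+1)| = |(x:ℝ)| * e k := by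
        rw [hyR, zero_mul, sub_zero, abs_mul, abs_of_pos hek]
      rw [heq]
      nlinarith
    · -- y ≥ 1, then x ≤ -1
      have hy1 : (1 : ℝ) ≤ (y : ℝ) := by exact_mod_cast hy0
      have hx1 : x ≤ -1 := by
        by_contra hc
        push_neg at hc
        have hx0 : 0 ≤ x := by omega
        have hxq : 0 ≤ x * q (k:ℤ) := mul_nonneg hx0 (by linarith [hqpos k])
        have hyq : q ((k:ℤ)+1) ≤ y * q ((k:ℤ)+1) := by nlinarith
        linarith [hmeq, hm2]
      have hx1R : (x:ℝ) ≤ -1 := by exact_mod_cast hx1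
      have hle : (x:ℝ) * e k - (y:ℝ) * e (k+1) ≤ -(e k) := by nlinarith
      calc e k ≤ -((x:ℝ) * e k - (y:ℝ) * e (k+1)) := by linarith
        _ ≤ |(x:ℝ) * e k - (y:ℝ) * e (k+1)| := neg_le_abs _

  -- ===== application layer =====
  have hNlt : (N : ℤ) < q ((K:ℤ) + 1) := by
    by_contra hc
    push_neg at hc
    have hcast : ((K + 1 : ℕ) : ℤ) = (K : ℤ) + 1 := by push_cast; ring
    have := hKmax (K + 1) (by rw [hcast]; exact hc)
    omega
  set f : ℕ → ℝ := fun n => Int.fract ((n : ℝ) * α - γ) with hfdef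
  have hf0 : ∀ n : ℕ, 0 ≤ f n := fun n => Int.fract_nonneg _
  have hkey : ∀ n m : ℕ, m < n → n ≤ N → e K ≤ |f n - f m| := by
    intro n m hmn hnN
    have hd1 : (1:ℤ) ≤ (n:ℤ) - m := by omega
    have hd2 : (n:ℤ) - m < q ((K:ℤ)+1) := by omega
    have hba := hBA K ((n:ℤ) - m) (⌊(n:ℝ)*α - γ⌋ - ⌊(m:ℝ)*α - γ⌋) hd1 hd2
    have heq2 : f n - f m = (((n:ℤ) - m : ℤ) : ℝ) * α - ((⌊(n:ℝ)*α - γ⌋ - ⌊(m:ℝ)*α - γ⌋ : ℤ) : ℝ) := by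
      simp only [hfdef, Int.fract]
      push_cast
      ring
    rw [heq2]
    exact hba
  have hsep1 : ∀ n, n ≤ N → ∀ m, m ≤ N → n ≠ m → e K ≤ |f n - f m| := by
    intro n hn m hm hnm
    rcases lt_trichotomy m n with h | h | h
    · exact hkey n m h hn
    · exact absurd h.symm hnm
    · rw [abs_sub_comm]; exact hkey m n h hm
  have finj : ∀ n m : ℕ, n ≤ N → m ≤ N → f n = f m → n = m := by
    intro n m hn hm hfe
    by_contra hc
    have := hsep1 n hn m hm hc
    rw [hfe] at this
    simp at this
    linarith [hepos K]
  set Q : ℕ := (q (K:ℤ)).toNat with hQdef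
  have hQcast : (Q:ℤ) = q (K:ℤ) := Int.toNat_of_nonneg (by linarith [hqpos K])
  have hQ1 : 1 ≤ Q := by have := hqpos K; omega
  have hQN : Q ≤ N := by
    have : (Q:ℤ) ≤ (N:ℤ) := by rw [hQcast]; exact hK
    exact_mod_cast this
  have hQpos : 0 < Q := hQ1
  set M : ℕ := N / Q with hMdef
  have hM1 : 1 ≤ M := (Nat.le_div_iff_mul_le hQpos).2 (by omega)
  have hMQ : M * Q ≤ N := Nat.div_mul_le_self N Q
  set B : ℕ → Finset ℕ := fun i => (Finset.range (N+1)).filter (fun n => n / Q = i) with hBdef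
  have hBmem : ∀ i n, n ∈ B i ↔ n ≤ N ∧ n / Q = i := by
    intro i n
    simp [hBdef, Finset.mem_filter, Finset.mem_range, Nat.lt_succ_iff]
  have hBne : ∀ i, i ≤ M → (B i).Nonempty := by
    intro i hi
    refine ⟨i * Q, (hBmem i _).2 ⟨?_, Nat.mul_div_cancel _ hQpos⟩⟩
    calc i * Q ≤ M * Q := Nat.mul_le_mul_right Q hi
      _ ≤ N := hMQ
  have hdivb : ∀ n i : ℕ, n / Q = i → i*Q ≤ n ∧ n < i*Q + Q := by
    intro n i h2
    subst h2
    refine ⟨Nat.div_mul_le_self n Q, ?_⟩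
    have hml : n % Q < Q := Nat.mod_lt n hQpos
    calc n = Q * (n/Q) + n % Q := (Nat.div_add_mod n Q).symm
      _ < Q * (n/Q) + Q := Nat.add_lt_add_left hml _
      _ = n/Q * Q + Q := by ring
  have hBcard : ∀ i, (B i).card ≤ Q := by
    intro i
    have hsub : B i ⊆ Finset.Ico (i*Q) (i*Q + Q) := by
      intro n hn
      rw [hBmem] at hn
      obtain ⟨h1, h2⟩ := hn
      rw [Finset.mem_Ico]
      exact hdivb n i h2
    calc (B i).card ≤ (Finset.Ico (i*Q) (i*Q+Q)).card := Finset.card_le_card hsub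
      _ = Q := by rw [Nat.card_Ico]; omega
  have hblocksep : ∀ i, ∀ n ∈ B i, ∀ m ∈ B i, n ≠ m → 1/(2*(Q:ℝ)) ≤ |f n - f m| := by
    have main : ∀ i, ∀ n ∈ B i, ∀ m ∈ B i, m < n → 1/(2*(Q:ℝ)) ≤ |f n - f m| := by
      intro i n hn m hm hmn
      rw [hBmem] at hn hm
      obtain ⟨hn1, hn2⟩ := hn
      obtain ⟨hm1, hm2⟩ := hm
      have hdQ : n - m < Q := by
        have h3 := hdivb n i hn2
        have h4 := hdivb m i hm2
        omega
      rcases Nat.eq_zero_or_pos K with hK0 | hKpos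
      · exfalso
        have hQeq : Q = 1 := by
          have h0 : ((K:ℕ):ℤ) = 0 := by rw [hK0]; simp
          have h1 : q ((K:ℕ):ℤ) = 1 := by rw [h0]; exact hq0
          omega
        omega
      obtain ⟨K', rfl⟩ := Nat.exists_eq_add_of_le hKpos
      have hcast : ((1 + K' : ℕ) : ℤ) = (K' : ℤ) + 1 := by push_cast; ring
      have hd1 : (1:ℤ) ≤ (n:ℤ) - m := by omega
      have hd2 : (n:ℤ) - m < q ((K':ℤ)+1) := by
        rw [← hcast, ← hQcast]
        have hx : n - m < Q := hdQ
        omega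
      have hba := hBA K' ((n:ℤ) - m) (⌊(n:ℝ)*α - γ⌋ - ⌊(m:ℝ)*α - γ⌋) hd1 hd2
      have hlb := helb K'
      have heq2 : f n - f m = (((n:ℤ) - m : ℤ) : ℝ) * α - ((⌊(n:ℝ)*α - γ⌋ - ⌊(m:ℝ)*α - γ⌋ : ℤ) : ℝ) := by
        simp only [hfdef, Int.fract]
        push_cast
        ring
      have hQq : (Q:ℝ) = (q ((K':ℤ)+1) : ℝ) := by
        rw [← hcast]
        exact_mod_cast congrArg (fun z : ℤ => (z:ℝ)) hQcast
      rw [heq2, hQq]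
      linarith [hba, hlb]
    intro i n hn m hm hnm
    rcases lt_trichotomy m n with h | h | h
    · exact main i n hn m hm h
    · exact absurd h.symm hnm
    · rw [abs_sub_comm]; exact main i m hm n hn h
  -- block minima
  have hμex : ∀ i : ℕ, ∃ n, (B i).Nonempty → (n ∈ B i ∧ ∀ m ∈ B i, f n ≤ f m) := by
    intro i
    by_cases h : (B i).Nonempty
    · obtain ⟨n, hn, hm⟩ := Finset.exists_min_image (B i) f h
      exact ⟨n, fun _ => ⟨hn, hm⟩⟩
    · exact ⟨0, fun hc => absurd hc h⟩
  choose μ hμ using hμex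
  have hμB : ∀ i, i ≤ M → μ i ∈ B i := fun i hi => (hμ i (hBne i hi)).1
  have hμmin : ∀ i, i ≤ M → ∀ m ∈ B i, f (μ i) ≤ f m := fun i hi => (hμ i (hBne i hi)).2
  have hμle : ∀ i, i ≤ M → μ i ≤ N := fun i hi => ((hBmem i _).1 (hμB i hi)).1
  have hμinj : ∀ i ∈ Finset.range (M+1), ∀ j ∈ Finset.range (M+1), μ i = μ j → i = j := by
    intro i hi j hj hij
    rw [Finset.mem_range, Nat.lt_succ_iff] at hi hj
    have h1 := ((hBmem i _).1 (hμB i hi)).2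
    have h2 := ((hBmem j _).1 (hμB j hj)).2
    rw [hij] at h1
    omega
  set T : Finset ℕ := (Finset.range (M+1)).image μ with hTdef
  have hTsub : ∀ n ∈ T, n ≤ N := by
    intro n hn
    rw [hTdef, Finset.mem_image] at hn
    obtain ⟨i, hi, rfl⟩ := hn
    rw [Finset.mem_range, Nat.lt_succ_iff] at hi
    exact hμle i hi
  have hTcard : T.card = M + 1 := by
    rw [hTdef, Finset.card_image_of_injOn, Finset.card_range]
    intro i hi j hj
    exact hμinj i hi j hj
  have hi₀ : n' / Q ≤ M := Nat.div_le_div_right hn'le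
  have hn'μ : μ (n' / Q) = n' := by
    apply finj _ _ (hμle _ hi₀) hn'le
    have hn'B : n' ∈ B (n' / Q) := (hBmem _ _).2 ⟨hn'le, rfl⟩
    exact le_antisymm (hμmin _ hi₀ n' hn'B) (hmin _ (hμle _ hi₀))
  have hn'T : n' ∈ T := by
    rw [hTdef, Finset.mem_image]
    exact ⟨n' / Q, Finset.mem_range.2 (by omega), hn'μ⟩
  -- sum decomposition
  have hfib : ∑ i ∈ Finset.range (M+1), ∑ n ∈ B i, 1 / f n = ∑ n ∈ Finset.range (N+1), 1 / f n := by
    rw [hBdef]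
    apply Finset.sum_fiberwise_of_maps_to
    intro n hn
    rw [Finset.mem_range, Nat.lt_succ_iff] at hn ⊢
    exact Nat.div_le_div_right hn
  have hsplit : ∀ i ∈ Finset.range (M+1), ∑ n ∈ B i, 1 / f n
      = ∑ n ∈ (B i).erase (μ i), 1 / f n + 1 / f (μ i) := by
    intro i hi
    rw [Finset.mem_range, Nat.lt_succ_iff] at hi
    exact (Finset.sum_erase_add _ _ (hμB i hi)).symm
  have himg : ∑ i ∈ Finset.range (M+1), 1 / f (μ i) = ∑ n ∈ T, 1 / f n := by
    rw [hTdef]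
    exact (Finset.sum_image (f := fun n => 1 / f n) hμinj).symm
  have htot : ∑ n ∈ (Finset.range (N+1)).erase n', 1 / f n + 1 / f n'
      = ∑ n ∈ Finset.range (N+1), 1 / f n :=
    Finset.sum_erase_add _ _ (Finset.mem_range.2 (by omega))
  have hT : ∑ n ∈ T.erase n', 1 / f n + 1 / f n' = ∑ n ∈ T, 1 / f n :=
    Finset.sum_erase_add _ _ hn'T
  have hdecomp : ∑ n ∈ (Finset.range (N+1)).erase n', 1 / f n
      = (∑ i ∈ Finset.range (M+1), ∑ n ∈ (B i).erase (μ i), 1 / f n) + ∑ n ∈ T.erase n', 1 / f n := by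
    have h1 : ∑ i ∈ Finset.range (M+1), ∑ n ∈ B i, 1 / f n
        = (∑ i ∈ Finset.range (M+1), ∑ n ∈ (B i).erase (μ i), 1 / f n)
          + ∑ i ∈ Finset.range (M+1), 1 / f (μ i) := by
      rw [← Finset.sum_add_distrib]
      exact Finset.sum_congr rfl hsplit
    rw [himg] at h1
    rw [hfib] at h1
    linarith
  -- bound the within-block sums
  have hlogQ : (0:ℝ) ≤ Real.log Q := Real.log_nonneg (by exact_mod_cast hQ1)
  have hharmQ : ∑ j ∈ Finset.range (Q-1), (1:ℝ)/(j+1) ≤ Real.log Q + 1 := by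
    have h5 := harm_aux (Q-1)
    have h6 : Real.log ((Q-1 : ℕ) : ℝ) ≤ Real.log Q := by
      rcases Nat.eq_or_lt_of_le hQ1 with h | h
      · rw [← h]; norm_num
      · have hc : ((Q-1:ℕ):ℝ) ≤ (Q:ℝ) := by
          have h' : Q - 1 ≤ Q := by omega
          exact_mod_cast h'
        have hp : (0:ℝ) < ((Q-1:ℕ):ℝ) := by
          have h' : 1 ≤ Q - 1 := by omega
          exact_mod_cast lt_of_lt_of_le zero_lt_one (by exact_mod_cast h')
        exact Real.log_le_log hp hc
    linarith
  have hAbound : ∀ i ∈ Finset.range (M+1), ∑ n ∈ (B i).erase (μ i), 1 / f n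
      ≤ 2*(Q:ℝ)*(Real.log Q + 1) := by
    intro i hi
    rw [Finset.mem_range, Nat.lt_succ_iff] at hi
    have hδ : (0:ℝ) < 1/(2*(Q:ℝ)) := by positivity
    have h1 := lemA_aux f (1/(2*(Q:ℝ))) hδ (B i).card (B i) le_rfl (μ i) (hμB i hi)
      (hf0 _) (hμmin i hi) (fun m hm n hn hmn => hblocksep i m hm n hn hmn)
    have h2 : ∑ j ∈ Finset.range ((B i).card - 1), 1/(f (μ i) + (j+1)*(1/(2*(Q:ℝ))))
        ≤ ∑ j ∈ Finset.range (Q-1), 1/((j+1)*(1/(2*(Q:ℝ)))) := by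
      apply le_trans (Finset.sum_le_sum (g := fun j : ℕ => 1/(((j:ℝ)+1)*(1/(2*(Q:ℝ))))) ?_)
      · apply Finset.sum_le_sum_of_subset_of_nonneg
        · apply Finset.range_subset_range.2
          have := hBcard i
          omega
        · intro j _ _
          positivity
      · intro j _
        apply one_div_le_one_div_of_le
        · positivity
        · have := hf0 (μ i)
          linarith
    have h3 : ∑ j ∈ Finset.range (Q-1), 1/(((j:ℝ)+1)*(1/(2*(Q:ℝ))))
        = 2*(Q:ℝ) * ∑ j ∈ Finset.range (Q-1), (1:ℝ)/(j+1) := by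
      rw [Finset.mul_sum]
      apply Finset.sum_congr rfl
      intro j _
      have hj : (0:ℝ) < (j:ℝ)+1 := by positivity
      field_simp
    have hQR : (0:ℝ) < (Q:ℝ) := by exact_mod_cast hQpos
    calc ∑ n ∈ (B i).erase (μ i), 1 / f n
        ≤ ∑ j ∈ Finset.range ((B i).card - 1), 1/(f (μ i) + (j+1)*(1/(2*(Q:ℝ)))) := h1
      _ ≤ ∑ j ∈ Finset.range (Q-1), 1/(((j:ℝ)+1)*(1/(2*(Q:ℝ)))) := h2
      _ = 2*(Q:ℝ) * ∑ j ∈ Finset.range (Q-1), (1:ℝ)/(j+1) := h3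
      _ ≤ 2*(Q:ℝ)*(Real.log Q + 1) := by nlinarith [hharmQ]
  have hApart : ∑ i ∈ Finset.range (M+1), ∑ n ∈ (B i).erase (μ i), 1 / f n
      ≤ 4 * (N:ℝ) * (Real.log (q (K:ℤ) : ℝ) + 1) := by
    have h1 := Finset.sum_le_sum hAbound
    rw [Finset.sum_const, Finset.card_range] at h1
    have hcard2 : ((M+1) * Q : ℕ) ≤ 2 * N := by nlinarith [hMQ, hQN]
    have hcard2R : ((M:ℝ)+1) * (Q:ℝ) ≤ 2 * (N:ℝ) := by exact_mod_cast hcard2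
    have hQlog : Real.log (q (K:ℤ) : ℝ) = Real.log Q := by
      congr 1
      exact_mod_cast hQcast.symm
    rw [hQlog]
    have hL : (0:ℝ) ≤ Real.log Q + 1 := by linarith
    calc ∑ i ∈ Finset.range (M+1), ∑ n ∈ (B i).erase (μ i), 1 / f n
        ≤ (M+1) • (2*(Q:ℝ)*(Real.log Q + 1)) := h1
      _ = ((M:ℝ)+1) * (2*(Q:ℝ)*(Real.log Q + 1)) := by
          rw [nsmul_eq_mul]
          push_cast
          ring
      _ ≤ 4 * (N:ℝ) * (Real.log Q + 1) := by nlinarith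
  -- bound the minima sum
  have hq'pos : (0:ℝ) < (q ((K:ℤ)+1) : ℝ) := by
    have := le_trans (hqpos K) (hqmono K)
    exact_mod_cast lt_of_lt_of_le zero_lt_one (by exact_mod_cast this)
  have hBpart : ∑ n ∈ T.erase n', 1 / f n
      < 2 * (q ((K:ℤ)+1) : ℝ) * (Real.log ((N:ℝ)/(q (K:ℤ) : ℝ)) + 1) := by
    have h1 := lemA_aux f (e K) (hepos K) T.card T le_rfl n' hn'T (hf0 n')
      (fun n hn => hmin n (hTsub n hn))
      (fun m hm n hn hmn => hsep1 m (hTsub m hm) n (hTsub n hn) hmn)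
    rw [hTcard] at h1
    simp only [Nat.add_sub_cancel] at h1
    have h2 : ∑ j ∈ Finset.range M, 1/(f n' + ((j:ℝ)+1)*(e K))
        ≤ ∑ j ∈ Finset.range M, 1/(((j:ℝ)+1)*(e K)) := by
      apply Finset.sum_le_sum
      intro j _
      apply one_div_le_one_div_of_le
      · exact mul_pos (by positivity) (hepos K)
      · linarith [hf0 n']
    have h3 : ∑ j ∈ Finset.range M, 1/(((j:ℝ)+1)*(e K))
        < ∑ j ∈ Finset.range M, 2 * (q ((K:ℤ)+1) : ℝ) * (1/((j:ℝ)+1)) := by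
      apply Finset.sum_lt_sum_of_nonempty ⟨0, Finset.mem_range.2 (by omega)⟩
      intro j _
      have hjp : (0:ℝ) < (j:ℝ)+1 := by positivity
      have hlb := helb K
      have h2q : (0:ℝ) < 2 * (q ((K:ℤ)+1) : ℝ) := by linarith
      rw [div_lt_iff₀ h2q] at hlb
      rw [div_lt_iff₀ (mul_pos hjp (hepos K))]
      have heq3 : 2 * (q ((K:ℤ)+1):ℝ) * (1/((j:ℝ)+1)) * (((j:ℝ)+1)*(e K))
          = e K * (2*(q ((K:ℤ)+1):ℝ)) := by field_simp
      rw [heq3]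
      exact hlb
    have h4 : ∑ j ∈ Finset.range M, 2*(q ((K:ℤ)+1):ℝ)*(1/((j:ℝ)+1))
        = 2*(q ((K:ℤ)+1):ℝ) * ∑ j ∈ Finset.range M, (1:ℝ)/(j+1) := by
      rw [Finset.mul_sum]
    have h5 := harm_aux M
    have hqKpos : (0:ℝ) < (q (K:ℤ):ℝ) := by
      exact_mod_cast lt_of_lt_of_le zero_lt_one (by exact_mod_cast hqpos K)
    have hlogM : Real.log M ≤ Real.log ((N:ℝ)/(q (K:ℤ):ℝ)) := by
      have hMpos : (0:ℝ) < (M:ℝ) := by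
        exact_mod_cast lt_of_lt_of_le zero_lt_one (by exact_mod_cast hM1)
      have hMle : (M:ℝ) ≤ (N:ℝ)/(q (K:ℤ):ℝ) := by
        rw [le_div_iff₀ hqKpos]
        have hc : (M:ℝ) * (Q:ℝ) ≤ (N:ℝ) := by exact_mod_cast hMQ
        have hQr : ((Q:ℕ):ℝ) = (q (K:ℤ):ℝ) := by exact_mod_cast hQcast
        rw [← hQr]
        exact hc
      exact Real.log_le_log hMpos hMle
    calc ∑ n ∈ T.erase n', 1 / f n
        ≤ ∑ j ∈ Finset.range M, 1/(f n' + ((j:ℝ)+1)*(e K)) := h1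
      _ ≤ ∑ j ∈ Finset.range M, 1/(((j:ℝ)+1)*(e K)) := h2
      _ < ∑ j ∈ Finset.range M, 2 * (q ((K:ℤ)+1) : ℝ) * (1/((j:ℝ)+1)) := h3
      _ = 2*(q ((K:ℤ)+1):ℝ) * ∑ j ∈ Finset.range M, (1:ℝ)/(j+1) := h4
      _ ≤ 2*(q ((K:ℤ)+1):ℝ) * (Real.log M + 1) := by nlinarith [hq'pos]
      _ ≤ 2 * (q ((K:ℤ)+1) : ℝ) * (Real.log ((N:ℝ)/(q (K:ℤ) : ℝ)) + 1) := by nlinarith [hq'pos]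
  show ∑ n ∈ (Finset.range (N + 1)).erase n', 1 / f n < _
  calc ∑ n ∈ (Finset.range (N + 1)).erase n', 1 / f n
      = (∑ i ∈ Finset.range (M+1), ∑ n ∈ (B i).erase (μ i), 1 / f n) + ∑ n ∈ T.erase n', 1 / f n := hdecomp
    _ < 4 * (N : ℝ) * (Real.log (q (K : ℤ) : ℝ) + 1) +
        2 * (q ((K : ℤ) + 1) : ℝ) * (Real.log ((N : ℝ) / (q (K : ℤ) : ℝ)) + 1) :=
      add_lt_add_of_le_of_lt hApart hBpart
end

section
/- Corollary (nearest integer distance): Let N ∈ ℕ, α irrational, K the largest integer with q_K ≤ N, γ ∈ ℝ, and n* the integer in [0, N] minimizing ||nα - γ||. Then the sum over 0 ≤ n ≤ N, n ≠ n*, of 1/||nα - γ|| is at most 8N(log q_K + 1) + 4 q_{K+1}(log(N/q_K) + 2). -/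
open Finset

private lemma aux_abs_le_abs_add (u v : ℝ) (h : 0 ≤ u * v) : |u| ≤ |u + v| := by
  rcases le_or_gt 0 u with hu | hu
  · rcases le_or_gt 0 v with hv | hv
    · rw [abs_of_nonneg hu, abs_of_nonneg (by linarith)]; linarith
    · have hu0 : u = 0 := by nlinarith
      simp [hu0]
  · rcases le_or_gt 0 v with hv | hv
    · have hv0 : v = 0 := by nlinarith
      simp [hv0]
    · rw [abs_of_neg hu, abs_of_neg (by linarith)]; linarith

private lemma aux_floor_close {u v δ : ℝ} (hδ : 0 < δ) (h : ⌊u/δ⌋ = ⌊v/δ⌋) : |u - v| < δ := by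
  have h1 := Int.sub_one_lt_floor (u/δ)
  have h2 := Int.floor_le (u/δ)
  have h3 := Int.sub_one_lt_floor (v/δ)
  have h4 := Int.floor_le (v/δ)
  rw [h] at h1 h2
  rw [abs_lt]
  have e1 : u / δ * δ = u := div_mul_cancel₀ u hδ.ne'
  have e2 : v / δ * δ = v := div_mul_cancel₀ v hδ.ne'
  constructor <;> nlinarith [h1, h2, h3, h4]

/-- δ-separated points with |g i| ≤ t: at most 2t/δ + 1 of them. -/
private lemma aux_card_sep (T : Finset ℕ) (g : ℕ → ℝ) (δ t : ℝ) (hδ : 0 < δ) (ht : 0 ≤ t)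
    (hmem : ∀ i ∈ T, |g i| ≤ t)
    (hsep : ∀ i ∈ T, ∀ j ∈ T, i ≠ j → δ ≤ |g i - g j|) :
    (T.card : ℝ) ≤ 2 * t / δ + 1 := by
  have hinj : ∀ i ∈ T, ∀ j ∈ T, ⌊(g i + t)/δ⌋ = ⌊(g j + t)/δ⌋ → i = j := by
    intro i hi j hj hij
    by_contra hne
    have h1 : |(g i + t) - (g j + t)| < δ := aux_floor_close hδ hij
    simp only [add_sub_add_right_eq_sub] at h1
    linarith [hsep i hi j hj hne]
  have hmap : ∀ i ∈ T, ⌊(g i + t)/δ⌋ ∈ Finset.Icc (0:ℤ) ⌊2*t/δ⌋ := by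
    intro i hi
    have h1 := abs_le.mp (hmem i hi)
    refine Finset.mem_Icc.mpr ⟨Int.floor_nonneg.mpr (div_nonneg (by linarith [h1.1]) hδ.le), ?_⟩
    exact Int.floor_le_floor (by gcongr; linarith [h1.2])
  have hcard := Finset.card_le_card_of_injOn _ hmap hinj
  have hIcc : (Finset.Icc (0:ℤ) ⌊2*t/δ⌋).card = (⌊2*t/δ⌋ + 1).toNat := by
    rw [Int.card_Icc]; ring_nf
  have hfl : (0:ℤ) ≤ ⌊2*t/δ⌋ := Int.floor_nonneg.mpr (by positivity)
  have h2 : (T.card : ℝ) ≤ ((⌊2*t/δ⌋ + 1).toNat : ℝ) := by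
    exact_mod_cast le_trans hcard (le_of_eq hIcc)
  have h3 : (((⌊2*t/δ⌋ + 1).toNat : ℤ) : ℝ) = ((⌊2*t/δ⌋ : ℝ) + 1) := by
    rw [Int.toNat_of_nonneg (by omega)]; push_cast; ring
  have h4 : ((⌊2*t/δ⌋:ℝ)) ≤ 2*t/δ := Int.floor_le _
  calc (T.card : ℝ) ≤ _ := h2
    _ = (⌊2*t/δ⌋ : ℝ) + 1 := by exact_mod_cast h3
    _ ≤ 2*t/δ + 1 := by linarith

private lemma aux_harmonic (m : ℕ) : ∑ j ∈ Finset.Icc 1 m, (1/(j:ℝ)) ≤ Real.log m + 1 := by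
  induction m with
  | zero => simp
  | succ m ih =>
    rcases Nat.eq_zero_or_pos m with hm | hm
    · subst hm; simp
    · rw [Finset.sum_Icc_succ_top (by omega)]
      have hlog : Real.log m + 1/(m+1:ℝ) ≤ Real.log (m+1) := by
        have h1 : Real.log ((m:ℝ)/(m+1)) ≤ (m:ℝ)/(m+1) - 1 :=
          Real.log_le_sub_one_of_pos (by positivity)
        have h2 : Real.log ((m:ℝ)/(m+1)) = Real.log m - Real.log (m+1) := by
          rw [Real.log_div (by positivity) (by positivity)]
        have h3 : (m:ℝ)/(m+1) - 1 = -(1/(m+1)) := by field_simp; ring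
        rw [h2, h3] at h1; linarith
      have : ((m:ℝ)+1) = ((m+1 : ℕ) : ℝ) := by push_cast; ring
      rw [← this] at *
      push_cast
      linarith [ih]

private lemma aux_sum_comp_le (T J : Finset ℕ) (rk : ℕ → ℕ) (f : ℕ → ℝ)
    (hf : ∀ j ∈ J, 0 ≤ f j)
    (hinj : ∀ m ∈ T, ∀ n ∈ T, rk m = rk n → m = n)
    (hb : ∀ n ∈ T, rk n ∈ J) :
    ∑ n ∈ T, f (rk n) ≤ ∑ j ∈ J, f j := by
  have he : ∑ j ∈ T.image rk, f j = ∑ n ∈ T, f (rk n) :=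
    Finset.sum_image (fun x hx y hy => hinj x hx y hy)
  rw [← he]
  exact Finset.sum_le_sum_of_subset_of_nonneg
    (fun j hj => by
      obtain ⟨n, hn, rfl⟩ := Finset.mem_image.mp hj
      exact hb n hn)
    (fun j hj _ => hf j hj)

open scoped Classical in
private lemma aux_rank_lt_of_L (x : ℕ → ℝ) (T : Finset ℕ) {m n : ℕ} (hm : m ∈ T)
    (hL : x m < x n ∨ (x m = x n ∧ m < n)) :
    (T.filter fun j => x j < x m ∨ (x j = x m ∧ j < m)).card <
      (T.filter fun j => x j < x n ∨ (x j = x n ∧ j < n)).card := by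
  apply Finset.card_lt_card
  have hsub : (T.filter fun j => x j < x m ∨ (x j = x m ∧ j < m)) ⊆
      (T.filter fun j => x j < x n ∨ (x j = x n ∧ j < n)) := by
    intro j hj
    rw [Finset.mem_filter] at hj ⊢
    refine ⟨hj.1, ?_⟩
    rcases hj.2 with h1 | ⟨h1, h2⟩ <;> rcases hL with h3 | ⟨h3, h4⟩
    · exact Or.inl (h1.trans h3)
    · exact Or.inl (h3 ▸ h1)
    · exact Or.inl (h1 ▸ h3)
    · exact Or.inr ⟨h1.trans h3, h2.trans h4⟩
  refine (Finset.ssubset_iff_of_subset hsub).mpr ⟨m, ?_, ?_⟩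
  · rw [Finset.mem_filter]; exact ⟨hm, hL⟩
  · rw [Finset.mem_filter]
    rintro ⟨-, h | ⟨-, h⟩⟩ <;> exact absurd h (by simp)

open scoped Classical in
private lemma aux_rank_inj (x : ℕ → ℝ) (T : Finset ℕ) {m n : ℕ} (hm : m ∈ T) (hn : n ∈ T)
    (h : (T.filter fun j => x j < x m ∨ (x j = x m ∧ j < m)).card =
      (T.filter fun j => x j < x n ∨ (x j = x n ∧ j < n)).card) : m = n := by
  by_contra hne
  have htot : (x m < x n ∨ (x m = x n ∧ m < n)) ∨ (x n < x m ∨ (x n = x m ∧ n < m)) := by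
    rcases lt_trichotomy (x m) (x n) with h1 | h1 | h1
    · exact Or.inl (Or.inl h1)
    · rcases lt_or_gt_of_ne hne with h2 | h2
      · exact Or.inl (Or.inr ⟨h1, h2⟩)
      · exact Or.inr (Or.inr ⟨h1.symm, h2⟩)
    · exact Or.inr (Or.inl h1)
  rcases htot with hL | hL
  · exact absurd h (Nat.ne_of_lt (aux_rank_lt_of_L x T hm hL))
  · exact absurd h.symm (Nat.ne_of_lt (aux_rank_lt_of_L x T hn hL))

open scoped Classical in
private lemma aux_rank_le (T : Finset ℕ) (y : ℕ → ℝ) (δ : ℝ) (hδ : 0 < δ)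
    (hsep : ∀ i ∈ T, ∀ j ∈ T, i ≠ j → δ ≤ |y i - y j|) {n : ℕ} (hn : n ∈ T) :
    ((T.filter fun j => |y j| < |y n| ∨ (|y j| = |y n| ∧ j < n)).card : ℝ) ≤ 2 * |y n| / δ := by
  set F := T.filter fun j => |y j| < |y n| ∨ (|y j| = |y n| ∧ j < n) with hF
  have hnF : n ∉ F := by
    rw [hF, Finset.mem_filter]
    rintro ⟨-, h | ⟨-, h⟩⟩ <;> exact absurd h (by simp)
  have hcard : (insert n F).card = F.card + 1 := Finset.card_insert_of_notMem hnF
  have hsubT : insert n F ⊆ T := by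
    intro i hi
    rcases Finset.mem_insert.mp hi with rfl | hi
    · exact hn
    · exact Finset.mem_of_mem_filter i hi
  have := aux_card_sep (insert n F) y δ |y n| hδ (abs_nonneg _)
    (by
      intro i hi
      rcases Finset.mem_insert.mp hi with rfl | hi
      · exact le_refl _
      · rcases (Finset.mem_filter.mp hi).2 with h | ⟨h, -⟩
        · exact h.le
        · exact h.le)
    (fun i hi j hj hij => hsep i (hsubT hi) j (hsubT hj) hij)
  rw [hcard] at this
  push_cast at this
  linarith

section NT
variable (α : ℝ) (a p q : ℤ → ℤ) (β : ℕ → ℝ) (D : ℤ → ℝ)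

private lemma aux_beta_irr (hirr : Irrational α) (hβ0 : β 0 = α)
    (hβ : ∀ k : ℕ, β (k + 1) = 1 / (β k - ⌊β k⌋)) : ∀ k, Irrational (β k) := by
  intro k
  induction k with
  | zero => rwa [hβ0]
  | succ k ih =>
    rw [hβ k, one_div]
    exact (ih.sub_intCast ⌊β k⌋).inv

private lemma aux_fract (hirr : Irrational α) (hβ0 : β 0 = α)
    (hβ : ∀ k : ℕ, β (k + 1) = 1 / (β k - ⌊β k⌋)) :
    ∀ k : ℕ, 0 < β k - ⌊β k⌋ ∧ β k - ⌊β k⌋ < 1 := by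
  intro k
  have hb := aux_beta_irr α β hirr hβ0 hβ k
  constructor
  · have := Int.fract_pos.mpr (fun h => hb.ne_int ⌊β k⌋ h)
    rwa [Int.fract] at this
  · have := Int.fract_lt_one (β k)
    rwa [Int.fract] at this

private lemma aux_beta_gt1 (hirr : Irrational α) (hβ0 : β 0 = α)
    (hβ : ∀ k : ℕ, β (k + 1) = 1 / (β k - ⌊β k⌋)) :
    ∀ k : ℕ, 1 < β (k + 1) := by
  intro k
  rw [hβ k]
  obtain ⟨h1, h2⟩ := aux_fract α β hirr hβ0 hβ k
  rw [lt_div_iff₀ h1]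
  linarith

private lemma aux_a_ge1 (hirr : Irrational α) (hβ0 : β 0 = α)
    (hβ : ∀ k : ℕ, β (k + 1) = 1 / (β k - ⌊β k⌋)) (ha : ∀ k : ℕ, a (k : ℤ) = ⌊β k⌋) :
    ∀ k : ℕ, 1 ≤ a ((k : ℤ) + 1) := by
  intro k
  have h := aux_beta_gt1 α β hirr hβ0 hβ k
  have h2 : ((k:ℤ)+1) = ((k+1 : ℕ) : ℤ) := by push_cast; ring
  rw [h2, ha (k+1)]
  exact Int.le_floor.mpr (by exact_mod_cast h.le)

private lemma aux_q_pos (hirr : Irrational α) (hβ0 : β 0 = α)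
    (hβ : ∀ k : ℕ, β (k + 1) = 1 / (β k - ⌊β k⌋)) (ha : ∀ k : ℕ, a (k : ℤ) = ⌊β k⌋)
    (hqm : q (-1) = 0) (hq0 : q 0 = 1)
    (hqrec : ∀ k : ℤ, 0 ≤ k → q (k + 1) = a (k + 1) * q k + q (k - 1)) :
    ∀ k : ℕ, 1 ≤ q (k : ℤ) ∧ 0 ≤ q ((k : ℤ) - 1) := by
  intro k
  induction k with
  | zero => norm_num [hq0, hqm]
  | succ k ih =>
    have ha1 := aux_a_ge1 α a β hirr hβ0 hβ ha k
    have hrec := hqrec k (Int.ofNat_nonneg k)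
    have h2 : ((k+1 : ℕ) : ℤ) = (k:ℤ)+1 := by push_cast; ring
    constructor
    · rw [h2, hrec]; nlinarith [ih.1, ih.2]
    · rw [h2]; simp only [add_sub_cancel_right]; linarith [ih.1]

private lemma aux_q_mono (hirr : Irrational α) (hβ0 : β 0 = α)
    (hβ : ∀ k : ℕ, β (k + 1) = 1 / (β k - ⌊β k⌋)) (ha : ∀ k : ℕ, a (k : ℤ) = ⌊β k⌋)
    (hqm : q (-1) = 0) (hq0 : q 0 = 1)
    (hqrec : ∀ k : ℤ, 0 ≤ k → q (k + 1) = a (k + 1) * q k + q (k - 1)) :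
    ∀ j k : ℕ, j ≤ k → q (j : ℤ) ≤ q (k : ℤ) := by
  have hstep : ∀ k : ℕ, q (k : ℤ) ≤ q ((k:ℤ) + 1) := by
    intro k
    have ha1 := aux_a_ge1 α a β hirr hβ0 hβ ha k
    have hrec := hqrec k (Int.ofNat_nonneg k)
    obtain ⟨h1, h2⟩ := aux_q_pos α a q β hirr hβ0 hβ ha hqm hq0 hqrec k
    rw [hrec]; nlinarith
  intro j k hjk
  induction k with
  | zero => interval_cases j; exact le_refl _
  | succ k ih =>
    rcases Nat.lt_succ_iff_lt_or_eq.mp (Nat.lt_succ_of_le hjk) with h | rfl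
    · have h1 := ih (Nat.lt_succ_iff.mp h)
      have h2 := hstep k
      have h3 : ((k+1 : ℕ) : ℤ) = (k:ℤ)+1 := by push_cast; ring
      rw [h3]; exact h1.trans h2
    · exact le_refl _
end NT

section NT2
variable (α : ℝ) (a p q : ℤ → ℤ) (β : ℕ → ℝ) (D : ℤ → ℝ)

private lemma aux_key (hirr : Irrational α) (hβ0 : β 0 = α)
    (hβ : ∀ k : ℕ, β (k + 1) = 1 / (β k - ⌊β k⌋)) (ha : ∀ k : ℕ, a (k : ℤ) = ⌊β k⌋)
    (hqm : q (-1) = 0) (hq0 : q 0 = 1) (hpm : p (-1) = 1) (hp0 : p 0 = a 0)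
    (hqrec : ∀ k : ℤ, 0 ≤ k → q (k + 1) = a (k + 1) * q k + q (k - 1))
    (hprec : ∀ k : ℤ, 0 ≤ k → p (k + 1) = a (k + 1) * p k + p (k - 1))
    (hD : ∀ k : ℤ, D k = (q k : ℝ) * α - (p k : ℝ))
    (hfract : ∀ k : ℕ, 0 < β k - ⌊β k⌋ ∧ β k - ⌊β k⌋ < 1)
    (hgt1 : ∀ k : ℕ, 1 < β (k + 1)) :
    ∀ k : ℕ, 0 < (-1:ℝ)^k * D (k:ℤ) ∧ β (k+1) * D (k:ℤ) = - D ((k:ℤ)-1) ∧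
      |D (k:ℤ)| < |D ((k:ℤ)-1)| := by
  have hDm : D (-1) = -1 := by rw [hD, hqm, hpm]; norm_num
  have hD0 : D 0 = β 0 - ⌊β 0⌋ := by
    rw [hD, hq0, hp0]
    have h0 : ((0:ℕ):ℤ) = (0:ℤ) := rfl
    rw [← h0, ha 0, hβ0]; push_cast; ring
  have hDrec : ∀ k : ℕ, D ((k:ℤ)+1) = (a ((k:ℤ)+1) : ℝ) * D (k:ℤ) + D ((k:ℤ)-1) := by
    intro k
    rw [hD, hD, hD, hqrec k (Int.ofNat_nonneg k), hprec k (Int.ofNat_nonneg k)]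
    push_cast; ring
  intro k
  induction k with
  | zero =>
    obtain ⟨h1, h2⟩ := hfract 0
    have hm1 : ((0:ℕ):ℤ) - 1 = -1 := rfl
    have hz : ((0:ℕ):ℤ) = (0:ℤ) := rfl
    rw [hm1, hDm, hz, hD0]
    refine ⟨by simpa using h1, ?_, ?_⟩
    · rw [hβ 0, one_div, inv_mul_cancel₀ (ne_of_gt h1)]; norm_num
    · rw [abs_of_pos h1, abs_neg, abs_one]; exact h2
  | succ k ih =>
    obtain ⟨hsign, hprod, habs⟩ := ih
    have hcast : ((k+1:ℕ):ℤ) = (k:ℤ)+1 := by push_cast; ring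
    have hcast2 : ((k+1:ℕ):ℤ) - 1 = (k:ℤ) := by push_cast; ring
    have hDk_ne : D (k:ℤ) ≠ 0 := by
      intro h; rw [h, mul_zero] at hsign; exact lt_irrefl 0 hsign
    have hak : (a ((k:ℤ)+1) : ℝ) = (⌊β (k+1)⌋ : ℝ) := by
      rw [← hcast, ha (k+1)]
    have hfr := hfract (k+1)
    have hβ2 : β (k+2) * (β (k+1) - ⌊β (k+1)⌋) = 1 := by
      rw [hβ (k+1), one_div, inv_mul_cancel₀ (ne_of_gt hfr.1)]
    have hkey1 : (β (k+1) - (a ((k:ℤ)+1) : ℝ)) * D (k:ℤ) = - D ((k:ℤ)+1) := by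
      rw [hDrec k, hak]
      linear_combination hprod
    have hprod2 : β (k+2) * D ((k:ℤ)+1) = - D (k:ℤ) := by
      have h3 : β (k+2) * ((β (k+1) - ((⌊β (k+1)⌋:ℤ):ℝ)) * D (k:ℤ)) = D (k:ℤ) := by
        rw [← mul_assoc, hβ2, one_mul]
      rw [← hak, hkey1] at h3
      linear_combination -h3
    have hb2 : 1 < β (k+2) := hgt1 (k+1)
    have hsign2 : 0 < (-1:ℝ)^(k+1) * D ((k:ℤ)+1) := by
      have hu : ((-1:ℝ)^(k+1) * D ((k:ℤ)+1)) * β (k+2) = (-1:ℝ)^k * D (k:ℤ) := by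
        rw [pow_succ]
        calc (-1:ℝ)^k * -1 * D ((k:ℤ)+1) * β (k+2)
            = (-1:ℝ)^k * -(β (k+2) * D ((k:ℤ)+1)) := by ring
          _ = (-1:ℝ)^k * D (k:ℤ) := by rw [hprod2]; ring
      nlinarith [hsign, hb2, hu]
    have hD1_ne : D ((k:ℤ)+1) ≠ 0 := by
      intro h; rw [h, mul_zero] at hsign2; exact lt_irrefl 0 hsign2
    have habs2 : |D ((k:ℤ)+1)| < |D (k:ℤ)| := by
      have h5 : β (k+2) * |D ((k:ℤ)+1)| = |D (k:ℤ)| := by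
        have := congrArg abs hprod2
        rwa [abs_mul, abs_neg, abs_of_pos (by linarith : (0:ℝ) < β (k+2))] at this
      have h6 : 0 < |D ((k:ℤ)+1)| := abs_pos.mpr hD1_ne
      nlinarith
    rw [hcast]
    simp only [add_sub_cancel_right]
    exact ⟨hsign2, hprod2, habs2⟩
end NT2

private lemma aux_det (a p q : ℤ → ℤ)
    (hqm : q (-1) = 0) (hq0 : q 0 = 1) (hpm : p (-1) = 1) (hp0 : p 0 = a 0)
    (hqrec : ∀ k : ℤ, 0 ≤ k → q (k + 1) = a (k + 1) * q k + q (k - 1))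
    (hprec : ∀ k : ℤ, 0 ≤ k → p (k + 1) = a (k + 1) * p k + p (k - 1)) :
    ∀ k : ℕ, p (k:ℤ) * q ((k:ℤ)+1) - p ((k:ℤ)+1) * q (k:ℤ) = (-1:ℤ)^(k+1) := by
  intro k
  induction k with
  | zero =>
    have h1 := hqrec 0 le_rfl
    have h2 := hprec 0 le_rfl
    norm_num at h1 h2 ⊢
    rw [h1, h2, hq0, hp0, hqm, hpm]; ring
  | succ k ih =>
    have h1 := hqrec ((k:ℤ)+1) (by positivity)
    have h2 := hprec ((k:ℤ)+1) (by positivity)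
    simp only [add_sub_cancel_right] at h1 h2
    push_cast
    rw [h1, h2, pow_succ (-1:ℤ) (k+1)]
    push_cast at ih
    linear_combination (-1:ℤ) * ih

private lemma aux_Dlb (α : ℝ) (p q : ℤ → ℤ) (D : ℤ → ℝ)
    (hD : ∀ k : ℤ, D k = (q k : ℝ) * α - (p k : ℝ))
    (hqpos : ∀ k : ℕ, 1 ≤ q (k:ℤ))
    (habs : ∀ k : ℕ, |D ((k:ℤ)+1)| ≤ |D (k:ℤ)|)
    (hdet : ∀ k : ℕ, p (k:ℤ) * q ((k:ℤ)+1) - p ((k:ℤ)+1) * q (k:ℤ) = (-1:ℤ)^(k+1)) :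
    ∀ k : ℕ, 1 ≤ |D (k:ℤ)| * ((q (k:ℤ) : ℝ) + (q ((k:ℤ)+1) : ℝ)) := by
  intro k
  have hid : D (k:ℤ) * (q ((k:ℤ)+1) : ℝ) - D ((k:ℤ)+1) * (q (k:ℤ) : ℝ) = (-1:ℝ)^k := by
    have := hdet k
    have hc : ((p (k:ℤ) * q ((k:ℤ)+1) - p ((k:ℤ)+1) * q (k:ℤ) : ℤ) : ℝ) = ((-1:ℝ))^(k+1) := by
      rw [this]; push_cast; ring
    rw [hD, hD]
    push_cast at hc
    rw [pow_succ] at hc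
    linear_combination -hc
  have h1 : |D (k:ℤ) * (q ((k:ℤ)+1) : ℝ) - D ((k:ℤ)+1) * (q (k:ℤ) : ℝ)| = 1 := by
    rw [hid, abs_pow, abs_neg, abs_one, one_pow]
  have h2 : |D (k:ℤ) * (q ((k:ℤ)+1) : ℝ) - D ((k:ℤ)+1) * (q (k:ℤ) : ℝ)| ≤
      |D (k:ℤ)| * (q ((k:ℤ)+1) : ℝ) + |D ((k:ℤ)+1)| * (q (k:ℤ) : ℝ) := by
    calc |D (k:ℤ) * (q ((k:ℤ)+1) : ℝ) - D ((k:ℤ)+1) * (q (k:ℤ) : ℝ)|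
        ≤ |D (k:ℤ) * (q ((k:ℤ)+1) : ℝ)| + |D ((k:ℤ)+1) * (q (k:ℤ) : ℝ)| := abs_sub _ _
      _ = |D (k:ℤ)| * |(q ((k:ℤ)+1) : ℝ)| + |D ((k:ℤ)+1)| * |(q (k:ℤ) : ℝ)| := by
          rw [abs_mul, abs_mul]
      _ = |D (k:ℤ)| * (q ((k:ℤ)+1) : ℝ) + |D ((k:ℤ)+1)| * (q (k:ℤ) : ℝ) := by
          have e1 : (1:ℝ) ≤ (q (k:ℤ) : ℝ) := by exact_mod_cast hqpos k
          have e2 : (1:ℝ) ≤ (q ((k:ℤ)+1) : ℝ) := by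
            have := hqpos (k+1); push_cast at this ⊢; exact_mod_cast this
          rw [abs_of_nonneg (show (0:ℝ) ≤ (q ((k:ℤ)+1) : ℝ) by linarith),
            abs_of_nonneg (show (0:ℝ) ≤ (q (k:ℤ) : ℝ) by linarith)]
  have e1 : (1:ℝ) ≤ (q (k:ℤ) : ℝ) := by exact_mod_cast hqpos k
  have e2 : (1:ℝ) ≤ (q ((k:ℤ)+1) : ℝ) := by
    have := hqpos (k+1); push_cast at this ⊢; exact_mod_cast this
  have h3 := habs k
  nlinarith [abs_nonneg (D (k:ℤ)), abs_nonneg (D ((k:ℤ)+1))]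

private lemma aux_abs_le_abs_addB (u v : ℝ) (h : 0 ≤ u * v) : |u| ≤ |u + v| := by
  rcases le_or_gt 0 u with hu | hu
  · rcases le_or_gt 0 v with hv | hv
    · rw [abs_of_nonneg hu, abs_of_nonneg (by linarith)]; linarith
    · have hu0 : u = 0 := by nlinarith
      simp [hu0]
  · rcases le_or_gt 0 v with hv | hv
    · have hv0 : v = 0 := by nlinarith
      simp [hv0]
    · rw [abs_of_neg hu, abs_of_neg (by linarith)]; linarith

private lemma aux_best (α : ℝ) (p q : ℤ → ℤ) (D : ℤ → ℝ)
    (hD : ∀ k : ℤ, D k = (q k : ℝ) * α - (p k : ℝ))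
    (hqpos : ∀ k : ℕ, 1 ≤ q (k:ℤ))
    (hsign : ∀ k : ℕ, 0 < (-1:ℝ)^k * D (k:ℤ))
    (hdet : ∀ k : ℕ, p (k:ℤ) * q ((k:ℤ)+1) - p ((k:ℤ)+1) * q (k:ℤ) = (-1:ℤ)^(k+1)) :
    ∀ k : ℕ, ∀ r s : ℤ, 0 < r → r < q ((k:ℤ)+1) → |D (k:ℤ)| ≤ |(r:ℝ)*α - (s:ℝ)| := by
  intro k r s hr hrq
  set e : ℤ := (-1)^(k+1) with he_def
  have he : p (k:ℤ) * q ((k:ℤ)+1) - p ((k:ℤ)+1) * q (k:ℤ) = e := hdet k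
  have hee : e * e = 1 := by
    rw [he_def, ← pow_add]
    exact Even.neg_one_pow ⟨k+1, by ring⟩
  set x : ℤ := e*(s * q ((k:ℤ)+1) - r * p ((k:ℤ)+1)) with hx_def
  set y : ℤ := e*(r * p (k:ℤ) - s * q (k:ℤ)) with hy_def
  have h1 : x * q (k:ℤ) + y * q ((k:ℤ)+1) = r := by
    rw [hx_def, hy_def]; linear_combination (e*r) * he + r * hee
  have h2 : x * p (k:ℤ) + y * p ((k:ℤ)+1) = s := by
    rw [hx_def, hy_def]; linear_combination (e*s) * he + s * hee
  have hq1 : 1 ≤ q (k:ℤ) := hqpos k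
  have hq2 : 1 ≤ q ((k:ℤ)+1) := by
    have := hqpos (k+1); push_cast at this; exact_mod_cast this
  have hxy : (r:ℝ)*α - (s:ℝ) = (x:ℝ) * D (k:ℤ) + (y:ℝ) * D ((k:ℤ)+1) := by
    have c1 : ((r:ℤ):ℝ) = (x:ℝ)*((q (k:ℤ)):ℝ) + (y:ℝ)*((q ((k:ℤ)+1)):ℝ) := by
      exact_mod_cast congrArg (fun z : ℤ => (z:ℝ)) h1.symm
    have c2 : ((s:ℤ):ℝ) = (x:ℝ)*((p (k:ℤ)):ℝ) + (y:ℝ)*((p ((k:ℤ)+1)):ℝ) := by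
      exact_mod_cast congrArg (fun z : ℤ => (z:ℝ)) h2.symm
    rw [hD, hD, c1, c2]; ring
  rcases eq_or_ne y 0 with hy0 | hy0
  · rw [hy0] at h1
    simp only [zero_mul, add_zero] at h1
    have hx1 : 1 ≤ x := by nlinarith
    rw [hxy, hy0]
    push_cast
    rw [zero_mul, add_zero, abs_mul]
    have : (1:ℝ) ≤ |(x:ℝ)| := by
      rw [abs_of_pos (by exact_mod_cast hx1 : (0:ℝ) < (x:ℝ))]
      exact_mod_cast hx1
    nlinarith [abs_nonneg (D (k:ℤ))]
  · have hx0 : x ≠ 0 := by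
      intro h
      rw [h] at h1
      simp only [zero_mul, zero_add] at h1
      have hy1 : 1 ≤ y := by nlinarith
      nlinarith
    have hxysign : x * y < 0 := by
      rcases lt_trichotomy y 0 with hy | hy | hy
      · have : 0 < x := by nlinarith
        nlinarith
      · exact absurd hy hy0
      · have : x < 0 := by nlinarith
        nlinarith
    have hDD : D (k:ℤ) * D ((k:ℤ)+1) < 0 := by
      have s1 := hsign k
      have s2 := hsign (k+1)
      push_cast at s2
      have hpow : (-1:ℝ)^k * (-1:ℝ)^(k+1) = -1 := by
        rw [← pow_add]
        exact Odd.neg_one_pow ⟨k, by ring⟩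
      nlinarith
    have hprodpos : 0 ≤ ((x:ℝ) * D (k:ℤ)) * ((y:ℝ) * D ((k:ℤ)+1)) := by
      have hxyR : ((x:ℝ)) * (y:ℝ) < 0 := by exact_mod_cast hxysign
      nlinarith
    have habs1 : |(x:ℝ) * D (k:ℤ)| ≤ |(r:ℝ)*α - (s:ℝ)| := by
      rw [hxy]
      exact aux_abs_le_abs_addB _ _ hprodpos
    have hx1 : (1:ℝ) ≤ |(x:ℝ)| := by
      have := Int.one_le_abs hx0
      calc (1:ℝ) ≤ ((|x| : ℤ) : ℝ) := by exact_mod_cast this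
        _ = |(x:ℝ)| := by push_cast; ring
    rw [abs_mul] at habs1
    nlinarith [abs_nonneg (D (k:ℤ))]

private lemma aux_best' (α : ℝ) (p q : ℤ → ℤ) (D : ℤ → ℝ)
    (hD : ∀ k : ℤ, D k = (q k : ℝ) * α - (p k : ℝ))
    (hqpos : ∀ k : ℕ, 1 ≤ q (k:ℤ))
    (hqmono : ∀ k : ℕ, q (k:ℤ) ≤ q ((k:ℤ)+1))
    (hsign : ∀ k : ℕ, 0 < (-1:ℝ)^k * D (k:ℤ))
    (hDlb : ∀ k : ℕ, 1 ≤ |D (k:ℤ)| * ((q (k:ℤ) : ℝ) + (q ((k:ℤ)+1) : ℝ)))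
    (hdet : ∀ k : ℕ, p (k:ℤ) * q ((k:ℤ)+1) - p ((k:ℤ)+1) * q (k:ℤ) = (-1:ℤ)^(k+1)) :
    ∀ k : ℕ, ∀ r s : ℤ, r ≠ 0 → |r| < q ((k:ℤ)+1) →
      1/(2*((q ((k:ℤ)+1)):ℝ)) ≤ |(r:ℝ)*α - (s:ℝ)| := by
  intro k r s hr hrq
  have hq1 : (1:ℝ) ≤ (q (k:ℤ) : ℝ) := by exact_mod_cast hqpos k
  have hq2 : (1:ℝ) ≤ (q ((k:ℤ)+1) : ℝ) := by
    have := hqpos (k+1); push_cast at this; exact_mod_cast this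
  have hmono : (q (k:ℤ) : ℝ) ≤ (q ((k:ℤ)+1) : ℝ) := by exact_mod_cast hqmono k
  have hDk : 1/(2*((q ((k:ℤ)+1)):ℝ)) ≤ |D (k:ℤ)| := by
    rw [div_le_iff₀ (by linarith)]
    have := hDlb k
    nlinarith [abs_nonneg (D (k:ℤ))]
  have hbest := aux_best α p q D hD hqpos hsign hdet k
  rcases lt_trichotomy r 0 with hr' | hr' | hr'
  · have h1 := hbest (-r) (-s) (by omega) (by rw [abs_of_neg hr'] at hrq; omega)
    have h2 : |((-r:ℤ):ℝ)*α - ((-s:ℤ):ℝ)| = |(r:ℝ)*α - (s:ℝ)| := by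
      push_cast
      rw [show (-(r:ℝ))*α - (-(s:ℝ)) = -((r:ℝ)*α - (s:ℝ)) by ring, abs_neg]
    rw [h2] at h1
    linarith
  · exact absurd hr' hr
  · have h1 := hbest r s hr' (by rwa [abs_of_pos hr'] at hrq)
    linarith
/-- Corollary (nearest integer distance): with n* minimizing ‖nα - γ‖ over 0 ≤ n ≤ N,
∑_{0 ≤ n ≤ N, n ≠ n*} 1/‖nα - γ‖ ≤ 8N(log q_K + 1) + 4 q_{K+1}(log(N/q_K) + 2),
where ‖x‖ = |x - round x| is the distance to the nearest integer. -/
theorem stmt_16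
    (α : ℝ) (hirr : Irrational α)
    (a p q : ℤ → ℤ) (β : ℕ → ℝ)
    (hβ0 : β 0 = α)
    (hβ : ∀ k : ℕ, β (k + 1) = 1 / (β k - ⌊β k⌋))
    (ha : ∀ k : ℕ, a (k : ℤ) = ⌊β k⌋)
    (hqm : q (-1) = 0) (hq0 : q 0 = 1)
    (hpm : p (-1) = 1) (hp0 : p 0 = a 0)
    (hqrec : ∀ k : ℤ, 0 ≤ k → q (k + 1) = a (k + 1) * q k + q (k - 1))
    (hprec : ∀ k : ℤ, 0 ≤ k → p (k + 1) = a (k + 1) * p k + p (k - 1))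
    (D : ℤ → ℝ) (hD : ∀ k : ℤ, D k = (q k : ℝ) * α - (p k : ℝ))
    (N : ℕ) (hN1 : 1 ≤ N) (K : ℕ)
    (hK : q (K : ℤ) ≤ (N : ℤ)) (hKmax : ∀ j : ℕ, q (j : ℤ) ≤ (N : ℤ) → j ≤ K)
    (γ : ℝ) (nstar : ℕ) (hnstar : nstar ≤ N)
    (hmin : ∀ m : ℕ, m ≤ N →
      |(nstar : ℝ) * α - γ - round ((nstar : ℝ) * α - γ)| ≤
        |(m : ℝ) * α - γ - round ((m : ℝ) * α - γ)|) :
    ∑ n ∈ (Finset.range (N + 1)).erase nstar,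
        1 / |(n : ℝ) * α - γ - round ((n : ℝ) * α - γ)| ≤
      8 * (N : ℝ) * (Real.log (q (K : ℤ) : ℝ) + 1) +
        4 * (q ((K : ℤ) + 1) : ℝ) * (Real.log ((N : ℝ) / (q (K : ℤ) : ℝ)) + 2) := by
  classical
  -- number-theoretic facts
  have hfract := aux_fract α β hirr hβ0 hβ
  have hgt1 := aux_beta_gt1 α β hirr hβ0 hβ
  have hqpos : ∀ k : ℕ, 1 ≤ q (k:ℤ) :=
    fun k => (aux_q_pos α a q β hirr hβ0 hβ ha hqm hq0 hqrec k).1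
  have hqmono := aux_q_mono α a q β hirr hβ0 hβ ha hqm hq0 hqrec
  have hqmono' : ∀ k : ℕ, q (k:ℤ) ≤ q ((k:ℤ)+1) := by
    intro k
    have := hqmono k (k+1) (Nat.le_succ k)
    push_cast at this; exact this
  have hkey := aux_key α a p q β D hirr hβ0 hβ ha hqm hq0 hpm hp0 hqrec hprec hD hfract hgt1
  have hsign : ∀ k : ℕ, 0 < (-1:ℝ)^k * D (k:ℤ) := fun k => (hkey k).1
  have habsmono : ∀ k : ℕ, |D ((k:ℤ)+1)| ≤ |D (k:ℤ)| := by
    intro k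
    have := (hkey (k+1)).2.2
    push_cast at this
    simp only [add_sub_cancel_right] at this
    exact this.le
  have hdet := aux_det a p q hqm hq0 hpm hp0 hqrec hprec
  have hDlb := aux_Dlb α p q D hD hqpos habsmono hdet
  have hbest := aux_best' α p q D hD hqpos hqmono' hsign hDlb hdet
  have hQK1 : (N:ℤ) < q ((K:ℤ)+1) := by
    by_contra h
    push_neg at h
    have := hKmax (K+1) (by push_cast; exact h)
    omega
  -- point configuration
  obtain ⟨y, hy_def⟩ : ∃ f : ℕ → ℝ,
      f = fun n : ℕ => (n:ℝ)*α - γ - (round ((n:ℝ)*α - γ) : ℝ) := ⟨_, rfl⟩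
  have hyn : ∀ n : ℕ, y n = (n:ℝ)*α - γ - (round ((n:ℝ)*α - γ) : ℝ) := fun n => by
    rw [hy_def]
  obtain ⟨S, hS_def⟩ : ∃ s : Finset ℕ, s = Finset.range (N+1) := ⟨_, rfl⟩
  suffices hSuf : ∑ n ∈ S.erase nstar, 1/|y n| ≤
      8 * (N : ℝ) * (Real.log ((q (K : ℤ)):ℝ) + 1) +
        4 * ((q ((K : ℤ)+1)):ℝ) * (Real.log ((N : ℝ) / ((q (K : ℤ)):ℝ)) + 2) by
    have := hSuf
    simp only [hyn, hS_def] at this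
    exact this
  have hmemS : ∀ n, n ∈ S ↔ n ≤ N := by
    intro n; rw [hS_def, Finset.mem_range]; omega
  have hsepN : ∀ m ∈ S, ∀ n ∈ S, m ≠ n →
      1/(2*((q ((K:ℤ)+1)):ℝ)) ≤ |y m - y n| := by
    intro m hm n hn hmn
    have hmN := (hmemS m).mp hm
    have hnN := (hmemS n).mp hn
    have hrepr : y m - y n = (((m:ℤ) - (n:ℤ) : ℤ):ℝ)*α -
        ((round ((m:ℝ)*α - γ) - round ((n:ℝ)*α - γ) : ℤ):ℝ) := by
      rw [hyn, hyn]; push_cast; ring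
    rw [hrepr]
    exact hbest K _ _ (by omega) (by rw [abs_lt]; omega)
  have hsepQ : ∀ m ∈ S, ∀ n ∈ S, m ≠ n → |(m:ℤ) - (n:ℤ)| < q (K:ℤ) →
      1/(2*((q (K:ℤ)):ℝ)) ≤ |y m - y n| := by
    intro m hm n hn hmn habs
    match K with
    | 0 =>
      have h0 : ((0:ℕ):ℤ) = (0:ℤ) := rfl
      rw [h0, hq0] at habs
      have h1 : ((m:ℤ) - (n:ℤ)) ≠ 0 := by
        intro h; apply hmn; omega
      have h2 := Int.one_le_abs h1
      omega
    | (K'+1) =>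
      have hrepr : y m - y n = (((m:ℤ) - (n:ℤ) : ℤ):ℝ)*α -
          ((round ((m:ℝ)*α - γ) - round ((n:ℝ)*α - γ) : ℤ):ℝ) := by
        rw [hyn, hyn]; push_cast; ring
      rw [hrepr]
      have hc : ((K'+1:ℕ):ℤ) = (K':ℤ)+1 := by push_cast; ring
      rw [hc] at habs ⊢
      exact hbest K' _ _ (by omega) habs
  -- sizes
  obtain ⟨Q, hQ_def⟩ : ∃ m : ℕ, m = (q (K:ℤ)).toNat := ⟨_, rfl⟩
  have hQeq : (Q:ℤ) = q (K:ℤ) := by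
    rw [hQ_def]; exact Int.toNat_of_nonneg (by linarith [hqpos K])
  have hQ1 : 1 ≤ Q := by
    have h1 := hqpos K
    omega
  have hQN : Q ≤ N := by
    have h1 := hK
    omega
  have hQR : (Q:ℝ) = ((q (K:ℤ)):ℝ) := by exact_mod_cast congrArg (fun z : ℤ => (z:ℝ)) hQeq
  obtain ⟨B, hB_def⟩ : ∃ m : ℕ, m = N / Q + 1 := ⟨_, rfl⟩
  have hblkmem : ∀ n ≤ N, n / Q < B := by
    intro n hn
    have := Nat.div_le_div_right (c := Q) hn
    omega
  obtain ⟨δs, hδs_def⟩ : ∃ x : ℝ, x = 1/(2*((q (K:ℤ)):ℝ)) := ⟨_, rfl⟩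
  obtain ⟨δb, hδb_def⟩ : ∃ x : ℝ, x = 1/(2*((q ((K:ℤ)+1)):ℝ)) := ⟨_, rfl⟩
  have hqKR : (1:ℝ) ≤ ((q (K:ℤ)):ℝ) := by exact_mod_cast hqpos K
  have hqK1R : (1:ℝ) ≤ ((q ((K:ℤ)+1)):ℝ) := by
    have := hqpos (K+1); push_cast at this; exact_mod_cast this
  have hδs : 0 < δs := by
    rw [hδs_def]; exact div_pos one_pos (by linarith)
  have hδb : 0 < δb := by
    rw [hδb_def]; exact div_pos one_pos (by linarith)
  -- ranks
  obtain ⟨rk, hrk_def⟩ : ∃ f : ℕ → ℕ, f = fun n => ((S.filter (fun j => j / Q = n / Q)).filter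
      (fun j => |y j| < |y n| ∨ (|y j| = |y n| ∧ j < n))).card := ⟨_, rfl⟩
  obtain ⟨M, hM_def⟩ : ∃ s : Finset ℕ, s = S.filter (fun n => rk n = 0) := ⟨_, rfl⟩
  obtain ⟨Rk, hRk_def⟩ : ∃ f : ℕ → ℕ,
      f = fun n => (M.filter (fun j => |y j| < |y n| ∨ (|y j| = |y n| ∧ j < n))).card := ⟨_, rfl⟩
  have hMsubS : M ⊆ S := by rw [hM_def]; exact Finset.filter_subset _ _
  have hmemM : ∀ n, n ∈ M ↔ (n ∈ S ∧ rk n = 0) := by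
    intro n; rw [hM_def, Finset.mem_filter]
  have hblk_close : ∀ n : ℕ, ∀ i ∈ S.filter (fun j => j / Q = n / Q),
      ∀ j ∈ S.filter (fun j => j / Q = n / Q), i ≠ j → |(i:ℤ) - (j:ℤ)| < q (K:ℤ) := by
    intro n i hi j hj hij
    have h1 : i / Q = n / Q := (Finset.mem_filter.mp hi).2
    have h2 : j / Q = n / Q := (Finset.mem_filter.mp hj).2
    have hA : i / Q = j / Q := h1.trans h2.symm
    have e1 : Q * (i / Q) + i % Q = i := Nat.div_add_mod i Q
    have e2 : Q * (j / Q) + j % Q = j := Nat.div_add_mod j Q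
    have e3 : i % Q < Q := Nat.mod_lt _ (by omega)
    have e4 : j % Q < Q := Nat.mod_lt _ (by omega)
    rw [hA] at e1
    set t := Q * (j / Q) with ht
    rw [← hQeq, abs_lt]
    omega
  have hblk_sep : ∀ n : ℕ, ∀ i ∈ S.filter (fun j => j / Q = n / Q),
      ∀ j ∈ S.filter (fun j => j / Q = n / Q), i ≠ j → δs ≤ |y i - y j| := by
    intro n i hi j hj hij
    rw [hδs_def]
    exact hsepQ i (Finset.mem_of_mem_filter i hi) j (Finset.mem_of_mem_filter j hj)
      hij (hblk_close n i hi j hj hij)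
  have hrkle : ∀ n ∈ S, (rk n : ℝ) ≤ 2 * |y n| / δs := by
    intro n hn
    simp only [hrk_def]
    exact aux_rank_le _ y δs hδs (hblk_sep n)
      (Finset.mem_filter.mpr ⟨hn, rfl⟩)
  have hrkpos : ∀ n ∈ S, n ∉ M → 1 ≤ rk n := by
    intro n hn hnM
    rw [hmemM] at hnM
    push_neg at hnM
    have := hnM hn
    omega
  have hRkle : ∀ n ∈ M, (Rk n : ℝ) ≤ 2 * |y n| / δb := by
    intro n hn
    simp only [hRk_def]
    exact aux_rank_le M y δb hδb
      (fun i hi j hj hij => by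
        rw [hδb_def]; exact hsepN i (hMsubS hi) j (hMsubS hj) hij) hn
  have hymin : ∀ n ∈ S, n ≠ nstar → δb ≤ 2 * |y n| := by
    intro n hn hne
    have h1 := hsepN n hn nstar ((hmemS nstar).mpr hnstar) hne
    have h2 : |y nstar| ≤ |y n| := by
      rw [hyn, hyn]; exact hmin n ((hmemS n).mp hn)
    have h3 : |y n - y nstar| ≤ |y n| + |y nstar| := abs_sub _ _
    rw [hδb_def]
    linarith
  have hfnonneg : ∀ n : ℕ, 0 ≤ 1/|y n| := fun n => by positivity
  have hsplit : ∑ n ∈ S.erase nstar, 1/|y n| ≤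
      ∑ n ∈ S \ M, 1/|y n| + ∑ n ∈ M.erase nstar, 1/|y n| := by
    have hsub : S.erase nstar ⊆ (S \ M) ∪ (M.erase nstar) := by
      intro n hn
      obtain ⟨hne, hnS⟩ := Finset.mem_erase.mp hn
      by_cases hnM : n ∈ M
      · exact Finset.mem_union_right _ (Finset.mem_erase.mpr ⟨hne, hnM⟩)
      · exact Finset.mem_union_left _ (Finset.mem_sdiff.mpr ⟨hnS, hnM⟩)
    have hdisj : Disjoint (S \ M) (M.erase nstar) := by
      rw [Finset.disjoint_left]
      intro n hn hn'
      exact (Finset.mem_sdiff.mp hn).2 (Finset.mem_of_mem_erase hn')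
    calc ∑ n ∈ S.erase nstar, 1/|y n|
        ≤ ∑ n ∈ (S \ M) ∪ (M.erase nstar), 1/|y n| :=
          Finset.sum_le_sum_of_subset_of_nonneg hsub (fun n _ _ => hfnonneg n)
      _ = _ := Finset.sum_union hdisj
  have hblkcard : ∀ n : ℕ, (S.filter (fun j => j / Q = n / Q)).card ≤ Q := by
    intro n
    have hsub : S.filter (fun j => j / Q = n / Q) ⊆ Finset.Ico (Q*(n/Q)) (Q*(n/Q) + Q) := by
      intro j hj
      have h2 : j / Q = n / Q := (Finset.mem_filter.mp hj).2
      have e2 : Q * (j / Q) + j % Q = j := Nat.div_add_mod j Q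
      have e4 : j % Q < Q := Nat.mod_lt _ (by omega)
      rw [h2] at e2
      rw [Finset.mem_Ico]
      set t := Q * (n / Q) with ht
      omega
    calc (S.filter (fun j => j / Q = n / Q)).card
        ≤ (Finset.Ico (Q*(n/Q)) (Q*(n/Q) + Q)).card := Finset.card_le_card hsub
      _ = Q := by rw [Nat.card_Ico]; omega
  have hrkQ : ∀ n ∈ S, rk n ≤ Q - 1 := by
    intro n hn
    have hsub : (S.filter (fun j => j / Q = n / Q)).filter
        (fun j => |y j| < |y n| ∨ (|y j| = |y n| ∧ j < n)) ⊆
        (S.filter (fun j => j / Q = n / Q)).erase n := by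
      intro j hj
      rw [Finset.mem_filter] at hj
      refine Finset.mem_erase.mpr ⟨?_, hj.1⟩
      rintro rfl
      rcases hj.2 with h | ⟨-, h⟩ <;> exact absurd h (by simp)
    have h1 : n ∈ S.filter (fun j => j / Q = n / Q) := Finset.mem_filter.mpr ⟨hn, rfl⟩
    have h2 := Finset.card_le_card hsub
    rw [Finset.card_erase_of_mem h1] at h2
    have h3 := hblkcard n
    simp only [hrk_def]
    omega
  have hbound1 : ∑ n ∈ S \ M, 1/|y n| ≤
      8 * (N : ℝ) * (Real.log ((q (K : ℤ)):ℝ) + 1) := by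
    have hterm : ∀ n ∈ S \ M, 1/|y n| ≤ (2/δs) * (1/(rk n : ℝ)) := by
      intro n hn
      obtain ⟨hnS, hnM⟩ := Finset.mem_sdiff.mp hn
      have h1 := hrkpos n hnS hnM
      have h2 := hrkle n hnS
      have h5 : (rk n:ℝ) * δs ≤ 2 * |y n| := by
        rw [← le_div_iff₀ hδs]; exact h2
      have h6 : (1:ℝ) ≤ (rk n : ℝ) := by exact_mod_cast h1
      have h8 : δs * (rk n:ℝ) / 2 ≤ |y n| := by linarith
      have hrp : (0:ℝ) < (rk n:ℝ) := by linarith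
      have h9 : (0:ℝ) < δs * (rk n:ℝ) / 2 := by
        have := mul_pos hδs hrp
        linarith
      calc 1/|y n| ≤ 1/(δs * (rk n:ℝ) / 2) := one_div_le_one_div_of_le h9 h8
        _ = (2/δs) * (1/(rk n:ℝ)) := by
            have hδ0 : δs ≠ 0 := ne_of_gt hδs
            have hr0 : (rk n:ℝ) ≠ 0 := ne_of_gt hrp
            field_simp
    have hfib : ∑ n ∈ S \ M, (1/(rk n:ℝ)) =
        ∑ b ∈ Finset.range B, ∑ n ∈ (S \ M).filter (fun n => n / Q = b), (1/(rk n:ℝ)) := by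
      refine (Finset.sum_fiberwise_of_maps_to ?_ _).symm
      intro n hn
      exact Finset.mem_range.mpr (hblkmem n ((hmemS n).mp (Finset.mem_sdiff.mp hn).1))
    have hfibb : ∀ b : ℕ, ∑ n ∈ (S \ M).filter (fun n => n / Q = b), (1/(rk n:ℝ)) ≤
        Real.log (Q:ℝ) + 1 := by
      intro b
      have hstep : ∑ n ∈ (S \ M).filter (fun n => n / Q = b), (1/(rk n:ℝ)) ≤
          ∑ j ∈ Finset.Icc 1 (Q-1), (1/(j:ℝ)) := by
        apply aux_sum_comp_le ((S \ M).filter (fun n => n / Q = b)) (Finset.Icc 1 (Q-1))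
          rk (fun j => 1/(j:ℝ)) (fun j _ => by positivity)
        · intro m hm n hn hmn
          obtain ⟨hmSM, hm2⟩ := Finset.mem_filter.mp hm
          obtain ⟨hnSM, hn2⟩ := Finset.mem_filter.mp hn
          have hmS := (Finset.mem_sdiff.mp hmSM).1
          have hnS := (Finset.mem_sdiff.mp hnSM).1
          have hrm : rk m = ((S.filter (fun j => j / Q = b)).filter
              (fun j => |y j| < |y m| ∨ (|y j| = |y m| ∧ j < m))).card := by
            simp only [hrk_def, hm2]
          have hrn : rk n = ((S.filter (fun j => j / Q = b)).filter
              (fun j => |y j| < |y n| ∨ (|y j| = |y n| ∧ j < n))).card := by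
            simp only [hrk_def, hn2]
          refine aux_rank_inj (fun i => |y i|) (S.filter (fun j => j / Q = b))
            (Finset.mem_filter.mpr ⟨hmS, hm2⟩) (Finset.mem_filter.mpr ⟨hnS, hn2⟩) ?_
          rw [← hrm, ← hrn]
          exact hmn
        · intro n hn
          obtain ⟨hnSM, hn2⟩ := Finset.mem_filter.mp hn
          obtain ⟨hnS, hnM⟩ := Finset.mem_sdiff.mp hnSM
          exact Finset.mem_Icc.mpr ⟨hrkpos n hnS hnM, hrkQ n hnS⟩
      refine hstep.trans ?_
      refine (aux_harmonic (Q-1)).trans ?_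
      have hlog : Real.log ((Q-1 : ℕ):ℝ) ≤ Real.log (Q:ℝ) := by
        rcases Nat.lt_or_ge Q 2 with h | h
        · have hQ1' : Q = 1 := by omega
          rw [hQ1']
          norm_num
        · apply Real.log_le_log
          · have : (1:ℝ) ≤ ((Q-1 : ℕ):ℝ) := by exact_mod_cast (by omega : 1 ≤ Q - 1)
            linarith
          · exact_mod_cast Nat.sub_le Q 1
      linarith
    have hQB : (Q:ℝ) * (B:ℝ) ≤ 2 * (N:ℝ) := by
      have h1 : Q * B ≤ 2 * N := by
        have h2 : Q * (N / Q) ≤ N := Nat.mul_div_le N Q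
        have h3 : Q * B = Q * (N/Q) + Q := by rw [hB_def]; ring
        omega
      exact_mod_cast h1
    have hlogQ : 0 ≤ Real.log (Q:ℝ) := Real.log_nonneg (by exact_mod_cast hQ1)
    calc ∑ n ∈ S \ M, 1/|y n|
        ≤ ∑ n ∈ S \ M, (2/δs) * (1/(rk n : ℝ)) := Finset.sum_le_sum hterm
      _ = (2/δs) * ∑ n ∈ S \ M, (1/(rk n : ℝ)) := by rw [Finset.mul_sum]
      _ ≤ (2/δs) * ((B:ℝ) * (Real.log (Q:ℝ) + 1)) := by
          apply mul_le_mul_of_nonneg_left _ (le_of_lt (div_pos two_pos hδs))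
          rw [hfib]
          calc ∑ b ∈ Finset.range B, ∑ n ∈ (S \ M).filter (fun n => n / Q = b), (1/(rk n:ℝ))
              ≤ ∑ b ∈ Finset.range B, (Real.log (Q:ℝ) + 1) :=
                Finset.sum_le_sum (fun b _ => hfibb b)
            _ = (B:ℝ) * (Real.log (Q:ℝ) + 1) := by
                rw [Finset.sum_const, Finset.card_range, nsmul_eq_mul]
      _ = 4 * ((Q:ℝ) * (B:ℝ)) * (Real.log (Q:ℝ) + 1) := by
          rw [hδs_def, ← hQR]
          have hQne : (Q:ℝ) ≠ 0 := Nat.cast_ne_zero.mpr (by omega)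
          field_simp
          ring
      _ ≤ 8 * (N : ℝ) * (Real.log ((q (K : ℤ)):ℝ) + 1) := by
          rw [← hQR]
          nlinarith [hQB, hlogQ]
  have hbound2 : ∑ n ∈ M.erase nstar, 1/|y n| ≤
      4 * ((q ((K : ℤ)+1)):ℝ) * (Real.log ((N : ℝ) / ((q (K : ℤ)):ℝ)) + 2) := by
    have hB1 : 1 ≤ N / Q := (Nat.one_le_div_iff (by omega)).mpr hQN
    have hterm2 : ∀ n ∈ M.erase nstar, 1/|y n| ≤ (2/δb) * (1/((max 1 (Rk n) : ℕ):ℝ)) := by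
      intro n hn
      obtain ⟨hne, hnM⟩ := Finset.mem_erase.mp hn
      have hnS := hMsubS hnM
      have h2 := hRkle n hnM
      have h2' : (Rk n:ℝ) * δb ≤ 2 * |y n| := by rw [← le_div_iff₀ hδb]; exact h2
      have h4 := hymin n hnS hne
      have hmax : ((max 1 (Rk n) : ℕ):ℝ) * δb ≤ 2 * |y n| := by
        rcases Nat.eq_zero_or_pos (Rk n) with h | h
        · rw [h]
          norm_num
          linarith
        · rw [max_eq_right h]
          exact h2'
      have hmp : (0:ℝ) < ((max 1 (Rk n) : ℕ):ℝ) := by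
        have h5 : 1 ≤ max 1 (Rk n) := le_max_left 1 _
        have h6 : (1:ℝ) ≤ ((max 1 (Rk n) : ℕ):ℝ) := by exact_mod_cast h5
        linarith
      have h8 : ((max 1 (Rk n) : ℕ):ℝ) * δb / 2 ≤ |y n| := by linarith
      have h9 : (0:ℝ) < ((max 1 (Rk n) : ℕ):ℝ) * δb / 2 := by
        have := mul_pos hmp hδb
        linarith
      calc 1/|y n| ≤ 1/(((max 1 (Rk n) : ℕ):ℝ) * δb / 2) := one_div_le_one_div_of_le h9 h8
        _ = (2/δb) * (1/((max 1 (Rk n) : ℕ):ℝ)) := by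
            have hδ0 : δb ≠ 0 := ne_of_gt hδb
            have hm0 : ((max 1 (Rk n) : ℕ):ℝ) ≠ 0 := ne_of_gt hmp
            field_simp
    have htot : ∀ m n : ℕ, m ≠ n →
        ((|y m| < |y n| ∨ (|y m| = |y n| ∧ m < n)) ∨
          (|y n| < |y m| ∨ (|y n| = |y m| ∧ n < m))) := by
      intro m n hmn
      rcases lt_trichotomy (|y m|) (|y n|) with h | h | h
      · exact Or.inl (Or.inl h)
      · rcases lt_or_gt_of_ne hmn with h2 | h2
        · exact Or.inl (Or.inr ⟨h, h2⟩)
        · exact Or.inr (Or.inr ⟨h.symm, h2⟩)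
      · exact Or.inr (Or.inl h)
    have hrkpos0 : ∀ m ∈ S, ∀ n ∈ S, m / Q = n / Q →
        (|y m| < |y n| ∨ (|y m| = |y n| ∧ m < n)) → 0 < rk n := by
      intro m hm n hn heq hL
      have hmem : m ∈ (S.filter (fun j => j / Q = n / Q)).filter
          (fun j => |y j| < |y n| ∨ (|y j| = |y n| ∧ j < n)) :=
        Finset.mem_filter.mpr ⟨Finset.mem_filter.mpr ⟨hm, heq⟩, hL⟩
      simp only [hrk_def]
      exact Finset.card_pos.mpr ⟨m, hmem⟩
    have hrk0 : ∀ m ∈ M, ∀ n ∈ M, m ≠ n → ¬ (m / Q = n / Q) := by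
      intro m hm n hn hmn heq
      have hmS := hMsubS hm
      have hnS := hMsubS hn
      have hm0 : rk m = 0 := ((hmemM m).mp hm).2
      have hn0 : rk n = 0 := ((hmemM n).mp hn).2
      rcases htot m n hmn with hL | hL
      · have := hrkpos0 m hmS n hnS heq hL
        omega
      · have := hrkpos0 n hnS m hmS heq.symm hL
        omega
    have hMcard : M.card ≤ B := by
      have hmaps : ∀ n ∈ M, n / Q ∈ Finset.range B := fun n hn =>
        Finset.mem_range.mpr (hblkmem n ((hmemS n).mp (hMsubS hn)))
      have hinj : ∀ m ∈ M, ∀ n ∈ M, m / Q = n / Q → m = n := by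
        intro m hm n hn heq
        by_contra hmn
        exact hrk0 m hm n hn hmn heq
      calc M.card ≤ (Finset.range B).card := Finset.card_le_card_of_injOn _ hmaps hinj
        _ = B := Finset.card_range B
    have hRkB : ∀ n ∈ M, Rk n < B := by
      intro n hn
      have hsub : M.filter (fun j => |y j| < |y n| ∨ (|y j| = |y n| ∧ j < n)) ⊆
          M.erase n := by
        intro j hj
        rw [Finset.mem_filter] at hj
        refine Finset.mem_erase.mpr ⟨?_, hj.1⟩
        rintro rfl
        rcases hj.2 with h | ⟨-, h⟩ <;> exact absurd h (by simp)
      have h2 := Finset.card_le_card hsub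
      rw [Finset.card_erase_of_mem hn] at h2
      have h3 : 0 < M.card := Finset.card_pos.mpr ⟨n, hn⟩
      simp only [hRk_def]
      omega
    have hstep2 : ∑ n ∈ M.erase nstar, (1/((max 1 (Rk n) : ℕ):ℝ)) ≤
        ∑ j ∈ Finset.range B, (1/((max 1 j : ℕ):ℝ)) := by
      apply aux_sum_comp_le (M.erase nstar) (Finset.range B) Rk
        (fun j => 1/((max 1 j : ℕ):ℝ)) (fun j _ => by positivity)
      · intro m hm n hn hmn
        have hmM := Finset.mem_of_mem_erase hm
        have hnM := Finset.mem_of_mem_erase hn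
        have hrm : Rk m = (M.filter
            (fun j => |y j| < |y m| ∨ (|y j| = |y m| ∧ j < m))).card := by
          simp only [hRk_def]
        have hrn : Rk n = (M.filter
            (fun j => |y j| < |y n| ∨ (|y j| = |y n| ∧ j < n))).card := by
          simp only [hRk_def]
        refine aux_rank_inj (fun i => |y i|) M hmM hnM ?_
        rw [← hrm, ← hrn]
        exact hmn
      · intro n hn
        exact Finset.mem_range.mpr (hRkB n (Finset.mem_of_mem_erase hn))
    have hsumB : ∑ j ∈ Finset.range B, (1/((max 1 j : ℕ):ℝ)) ≤
        Real.log ((N:ℝ)/((q (K:ℤ)):ℝ)) + 2 := by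
      have hBsplit : Finset.range B = insert 0 (Finset.Icc 1 (B-1)) := by
        ext j
        simp only [Finset.mem_range, Finset.mem_insert, Finset.mem_Icc]
        omega
      rw [hBsplit, Finset.sum_insert (by simp)]
      have he : ∑ j ∈ Finset.Icc 1 (B-1), (1/((max 1 j : ℕ):ℝ)) =
          ∑ j ∈ Finset.Icc 1 (B-1), (1/(j:ℝ)) := by
        apply Finset.sum_congr rfl
        intro j hj
        rw [max_eq_right (Finset.mem_Icc.mp hj).1]
      rw [he]
      have hh := aux_harmonic (B-1)
      have hBN : B - 1 = N / Q := by rw [hB_def]; omega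
      have hB1' : 1 ≤ B - 1 := by omega
      have hlog2 : Real.log ((B-1:ℕ):ℝ) ≤ Real.log ((N:ℝ)/((q (K:ℤ)):ℝ)) := by
        apply Real.log_le_log
        · have h5 : (1:ℝ) ≤ ((B-1:ℕ):ℝ) := by exact_mod_cast hB1'
          linarith
        · rw [hBN, ← hQR]
          exact Nat.cast_div_le
      have h0 : (1:ℝ)/((max 1 0 : ℕ):ℝ) = 1 := by norm_num
      rw [h0]
      linarith
    have hqK1pos : (0:ℝ) < ((q ((K:ℤ)+1)):ℝ) := by linarith
    have hc2 : 2/δb = 4 * ((q ((K:ℤ)+1)):ℝ) := by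
      rw [hδb_def]
      have hc : ((q ((K:ℤ)+1)):ℝ) ≠ 0 := ne_of_gt hqK1pos
      field_simp
      ring
    calc ∑ n ∈ M.erase nstar, 1/|y n|
        ≤ ∑ n ∈ M.erase nstar, (2/δb) * (1/((max 1 (Rk n) : ℕ):ℝ)) :=
          Finset.sum_le_sum hterm2
      _ = (2/δb) * ∑ n ∈ M.erase nstar, (1/((max 1 (Rk n) : ℕ):ℝ)) := by
          rw [Finset.mul_sum]
      _ ≤ (2/δb) * (Real.log ((N:ℝ)/((q (K:ℤ)):ℝ)) + 2) := by
          apply mul_le_mul_of_nonneg_left _ (le_of_lt (div_pos two_pos hδb))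
          exact hstep2.trans hsumB
      _ = 4 * ((q ((K:ℤ)+1)):ℝ) * (Real.log ((N:ℝ)/((q (K:ℤ)):ℝ)) + 2) := by
          rw [hc2]
  calc ∑ n ∈ S.erase nstar, 1/|y n|
      ≤ ∑ n ∈ S \ M, 1/|y n| + ∑ n ∈ M.erase nstar, 1/|y n| := hsplit
    _ ≤ _ := add_le_add hbound1 hbound2
end

section
/- Generalized sum with exponent b > 1: Under the setup of the main theorem, the sum over 0 ≤ n ≤ N, n ≠ n', of 1/{nα - γ}^b is at most 2^{1+b} ζ(b) N^b + 2^b ζ(b) q_{K+1}^b, where ζ is the Riemann zeta function. -/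
lemma rank_mul_le {S : Finset ℕ} {f : ℕ → ℝ} {δ : ℝ} (hδ : 0 < δ)
    (hsep : ∀ n ∈ S, ∀ m ∈ S, n ≠ m → δ ≤ |f n - f m|)
    (hnn : ∀ n ∈ S, 0 ≤ f n) :
    ∀ n ∈ S, ((S.filter (fun m => f m < f n)).card : ℝ) * δ ≤ f n := by
  have key : ∀ c : ℕ, ∀ n ∈ S, (S.filter (fun m => f m < f n)).card ≤ c →
      ((S.filter (fun m => f m < f n)).card : ℝ) * δ ≤ f n := by
    intro c
    induction c with
    | zero =>
      intro n hn hc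
      rw [Nat.le_zero.mp hc]
      simpa using hnn n hn
    | succ c ih =>
      intro n hn hc
      by_cases h0 : (S.filter (fun m => f m < f n)).card = 0
      · rw [h0]; simpa using hnn n hn
      · obtain ⟨m, hmB, hmax⟩ := Finset.exists_max_image
          (S.filter (fun m => f m < f n)) f
          (Finset.card_ne_zero.mp h0)
        obtain ⟨hmS, hmlt⟩ := Finset.mem_filter.mp hmB
        have hinj : ∀ l ∈ S, l ≠ m → f l ≠ f m := by
          intro l hl hlm heq
          have := hsep l hl m hmS hlm
          rw [heq] at this; simp at this; linarith
        have hset : S.filter (fun l => f l < f m)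
            = (S.filter (fun l => f l < f n)).erase m := by
          ext l
          simp only [Finset.mem_erase, Finset.mem_filter]
          constructor
          · rintro ⟨hl, hlf⟩
            refine ⟨?_, hl, lt_trans hlf hmlt⟩
            rintro rfl; exact absurd hlf (lt_irrefl _)
          · rintro ⟨hlm, hl, hlf⟩
            refine ⟨hl, lt_of_le_of_ne ?_ (hinj l hl hlm)⟩
            exact hmax l (Finset.mem_filter.mpr ⟨hl, hlf⟩)
        have hcard : (S.filter (fun l => f l < f m)).card
            = (S.filter (fun l => f l < f n)).card - 1 := by
          rw [hset, Finset.card_erase_of_mem hmB]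
        have hc1 : 1 ≤ (S.filter (fun l => f l < f n)).card := Nat.one_le_iff_ne_zero.mpr h0
        have hle : (S.filter (fun l => f l < f m)).card ≤ c := by omega
        have hIH := ih m hmS hle
        have hsepnm : δ ≤ f n - f m := by
          have := hsep n hn m hmS (by rintro rfl; exact absurd hmlt (lt_irrefl _))
          rw [abs_of_pos (by linarith)] at this; exact this
        have : ((S.filter (fun l => f l < f m)).card : ℝ)
            = ((S.filter (fun l => f l < f n)).card : ℝ) - 1 := by
          rw [hcard, Nat.cast_sub hc1]; push_cast; ring
        rw [this] at hIH
        nlinarith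
  intro n hn
  exact key _ n hn le_rfl


set_option maxHeartbeats 2000000 in



/-- Generalized sum with exponent b > 1:
∑_{0 ≤ n ≤ N, n ≠ n'} 1/{nα - γ}^b ≤ 2^{1+b} ζ(b) N^b + 2^b ζ(b) q_{K+1}^b,
where ζ(b) = ∑_{j ≥ 1} j^{-b}. -/
theorem stmt_18
    (α : ℝ) (hirr : Irrational α)
    (a p q : ℤ → ℤ) (β : ℕ → ℝ)
    (hβ0 : β 0 = α)
    (hβ : ∀ k : ℕ, β (k + 1) = 1 / (β k - ⌊β k⌋))
    (ha : ∀ k : ℕ, a (k : ℤ) = ⌊β k⌋)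
    (hqm : q (-1) = 0) (hq0 : q 0 = 1)
    (hpm : p (-1) = 1) (hp0 : p 0 = a 0)
    (hqrec : ∀ k : ℤ, 0 ≤ k → q (k + 1) = a (k + 1) * q k + q (k - 1))
    (hprec : ∀ k : ℤ, 0 ≤ k → p (k + 1) = a (k + 1) * p k + p (k - 1))
    (D : ℤ → ℝ) (hD : ∀ k : ℤ, D k = (q k : ℝ) * α - (p k : ℝ))
    (N : ℕ) (hN1 : 1 ≤ N) (K : ℕ)
    (hK : q (K : ℤ) ≤ (N : ℤ)) (hKmax : ∀ j : ℕ, q (j : ℤ) ≤ (N : ℤ) → j ≤ K)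
    (γ : ℝ) (n' : ℕ) (hn'le : n' ≤ N)
    (hmin : ∀ m : ℕ, m ≤ N → Int.fract ((n' : ℝ) * α - γ) ≤ Int.fract ((m : ℝ) * α - γ))
    (b : ℝ) (hb : 1 < b) :
    ∑ n ∈ (Finset.range (N + 1)).erase n', 1 / Int.fract ((n : ℝ) * α - γ) ^ b ≤
      2 ^ (1 + b) * (∑' j : ℕ, 1 / ((j : ℝ) + 1) ^ b) * (N : ℝ) ^ b +
        2 ^ b * (∑' j : ℕ, 1 / ((j : ℝ) + 1) ^ b) * (q ((K : ℤ) + 1) : ℝ) ^ b := by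
  have hirrβ : ∀ k : ℕ, Irrational (β k) := by
    intro k; induction k with
    | zero => rwa [hβ0]
    | succ k ih => rw [hβ k, one_div]; exact (Irrational.sub_intCast ih _).inv
  have hfr : ∀ k : ℕ, 0 < β k - ⌊β k⌋ ∧ β k - ⌊β k⌋ < 1 := by
    intro k
    constructor
    · have h := Int.fract_pos.2 (fun h => (hirrβ k).ne_int ⌊β k⌋ h)
      rwa [Int.fract] at h
    · have := Int.fract_lt_one (β k); rwa [Int.fract] at this
  have hβgt : ∀ k : ℕ, 1 < β (k + 1) := by
    intro k
    rw [hβ k, one_div]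
    exact (one_lt_inv_iff₀).2 ⟨(hfr k).1, (hfr k).2⟩
  have hDrec : ∀ j : ℤ, 0 ≤ j → D (j + 1) = (a (j + 1) : ℝ) * D j + D (j - 1) := by
    intro j hj
    rw [hD, hD, hD, hqrec j hj, hprec j hj]; push_cast; ring
  have hDm : D (-1) = -1 := by rw [hD, hqm, hpm]; push_cast; ring
  have hD0 : D 0 = α - (⌊α⌋ : ℝ) := by
    have h0 : p 0 = ⌊α⌋ := by
      rw [hp0]
      have h := ha 0; rw [hβ0] at h; exact_mod_cast h
    rw [hD, hq0, h0]; push_cast; ring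
  have haR : ∀ k : ℕ, (a ((k : ℤ) + 1) : ℝ) = (⌊β (k + 1)⌋ : ℝ) := by
    intro k
    have hc : ((k : ℤ) + 1) = ((k + 1 : ℕ) : ℤ) := by push_cast; ring
    rw [hc, ha]
  have hDβ : ∀ k : ℕ, β (k + 1) * D (k : ℤ) = - D ((k : ℤ) - 1) := by
    intro k; induction k with
    | zero =>
      simp only [Nat.cast_zero, zero_add, zero_sub]
      rw [hβ 0, hβ0, hD0, hDm]
      have hne : α - (⌊α⌋ : ℝ) ≠ 0 := sub_ne_zero.2 (hirr.ne_int _)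
      field_simp
    | succ k ih =>
      have hc : ((k + 1 : ℕ) : ℤ) = (k : ℤ) + 1 := by push_cast; ring
      rw [hc, add_sub_cancel_right, hDrec k (Int.natCast_nonneg k), hβ (k + 1), haR k]
      have hne : Int.fract (β (k + 1)) ≠ 0 := by
        rw [← Int.self_sub_floor]; exact ne_of_gt (hfr (k + 1)).1
      have hne' : β (k + 1) - ⌊β (k + 1)⌋ ≠ 0 := ne_of_gt (hfr (k + 1)).1
      rw [div_mul_eq_mul_div, one_mul, div_eq_iff hne']
      linear_combination ih
  have hDsign : ∀ k : ℕ, D ((k : ℤ) - 1) * D (k : ℤ) < 0 := by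
    intro k; induction k with
    | zero =>
      simp only [Nat.cast_zero, zero_sub]
      rw [hDm, hD0]
      have h := (hfr 0).1; rw [hβ0] at h
      nlinarith
    | succ k ih =>
      have hc : ((k + 1 : ℕ) : ℤ) = (k : ℤ) + 1 := by push_cast; ring
      rw [hc, add_sub_cancel_right]
      have heq := hDβ (k + 1)
      rw [hc, add_sub_cancel_right] at heq
      have hb2 := hβgt (k + 1)
      have hk0 : D (k : ℤ) ≠ 0 := by
        intro h; rw [h, mul_zero] at ih; exact lt_irrefl _ ih
      have hkey : β (k + 1 + 1) * (D (k : ℤ) * D ((k : ℤ) + 1)) = - (D (k : ℤ)) ^ 2 := by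
        linear_combination (D (k : ℤ)) * heq
      have hsq : 0 < (D (k : ℤ)) ^ 2 := pow_two_pos_of_ne_zero hk0
      nlinarith
  have hDabs : |D ((K : ℤ) + 1)| ≤ |D (K : ℤ)| := by
    have heq := hDβ (K + 1)
    have hc : ((K + 1 : ℕ) : ℤ) = (K : ℤ) + 1 := by push_cast; ring
    rw [hc, add_sub_cancel_right] at heq
    have h := congrArg abs heq
    rw [abs_mul, abs_neg, abs_of_pos (by linarith [hβgt (K + 1)])] at h
    nlinarith [abs_nonneg (D ((K : ℤ) + 1)), hβgt (K + 1)]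

  have ha1 : ∀ k : ℕ, 1 ≤ a ((k : ℤ) + 1) := by
    intro k
    have hc : ((k : ℤ) + 1) = ((k + 1 : ℕ) : ℤ) := by push_cast; ring
    rw [hc, ha]
    exact Int.le_floor.2 (by exact_mod_cast (hβgt k).le)
  have hqpos : ∀ k : ℕ, 0 ≤ q ((k : ℤ) - 1) ∧ 1 ≤ q (k : ℤ) := by
    intro k; induction k with
    | zero => simp [hqm, hq0]
    | succ k ih =>
      have hc : ((k + 1 : ℕ) : ℤ) = (k : ℤ) + 1 := by push_cast; ring
      constructor
      · rw [hc]; simpa using le_trans zero_le_one ih.2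
      · rw [hc, hqrec k (Int.natCast_nonneg k)]
        have := ha1 k
        nlinarith [ih.1, ih.2]
  have hdet : ∀ k : ℕ, p ((k : ℤ) - 1) * q (k : ℤ) - p (k : ℤ) * q ((k : ℤ) - 1) = (-1 : ℤ) ^ k := by
    intro k; induction k with
    | zero => simp [hqm, hq0, hpm]
    | succ k ih =>
      have hc : ((k + 1 : ℕ) : ℤ) = (k : ℤ) + 1 := by push_cast; ring
      rw [hc]
      have h1 := hqrec k (Int.natCast_nonneg k)
      have h2 := hprec k (Int.natCast_nonneg k)
      have hc2 : (k : ℤ) + 1 - 1 = (k : ℤ) := by ring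
      rw [hc2, h1, h2, pow_succ]
      linarith [ih, mul_comm (p ((k : ℤ) - 1)) (q (k : ℤ))]
  have hcK : ((K + 1 : ℕ) : ℤ) = (K : ℤ) + 1 := by push_cast; ring
  have hdetK : p (K : ℤ) * q ((K : ℤ) + 1) - p ((K : ℤ) + 1) * q (K : ℤ) = (-1 : ℤ) ^ (K + 1) := by
    have h := hdet (K + 1)
    rwa [hcK, add_sub_cancel_right] at h
  have hqK1pos : 1 ≤ q ((K : ℤ) + 1) := by have := (hqpos (K + 1)).2; rwa [hcK] at this
  have hqKpos : 1 ≤ q (K : ℤ) := (hqpos K).2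
  have hqK0 : 0 ≤ q ((K : ℤ) - 1) := (hqpos K).1
  have hqK1 : q (K : ℤ) ≤ q ((K : ℤ) + 1) := by
    rw [hqrec K (Int.natCast_nonneg K)]
    nlinarith [ha1 K]
  have hNltq : (N : ℤ) < q ((K : ℤ) + 1) := by
    by_contra h
    push_neg at h
    have := hKmax (K + 1) (by rwa [hcK])
    omega
  have hDD : D (K : ℤ) * D ((K : ℤ) + 1) < 0 := by
    have := hDsign (K + 1); rwa [hcK, add_sub_cancel_right] at this
  have hDKne : D (K : ℤ) ≠ 0 := by
    intro h; rw [h] at hDD; simp at hDD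
  have hbest : ∀ j m : ℤ, 1 ≤ j → j < q ((K : ℤ) + 1) → |D (K : ℤ)| ≤ |(j : ℝ) * α - (m : ℝ)| := by
    intro j m hj1 hjq
    set e : ℤ := (-1) ^ (K + 1) with he
    have he2 : e * e = 1 := by rw [he, ← mul_pow]; norm_num
    set x : ℤ := e * (m * q ((K : ℤ) + 1) - j * p ((K : ℤ) + 1)) with hxdef
    set y : ℤ := e * (j * p (K : ℤ) - m * q (K : ℤ)) with hydef
    have hxq : x * q (K : ℤ) + y * q ((K : ℤ) + 1) = j := by
      rw [hxdef, hydef]; linear_combination (e * j) * hdetK + j * he2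
    have hxp : x * p (K : ℤ) + y * p ((K : ℤ) + 1) = m := by
      rw [hxdef, hydef]; linear_combination (e * m) * hdetK + m * he2
    have h1R : (x : ℝ) * (q (K : ℤ) : ℝ) + (y : ℝ) * (q ((K : ℤ) + 1) : ℝ) = (j : ℝ) := by
      exact_mod_cast congrArg (fun z : ℤ => (z : ℝ)) hxq
    have h2R : (x : ℝ) * (p (K : ℤ) : ℝ) + (y : ℝ) * (p ((K : ℤ) + 1) : ℝ) = (m : ℝ) := by
      exact_mod_cast congrArg (fun z : ℤ => (z : ℝ)) hxp
    have hrepr : (j : ℝ) * α - (m : ℝ) = (x : ℝ) * D (K : ℤ) + (y : ℝ) * D ((K : ℤ) + 1) := by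
      rw [hD, hD]
      linear_combination (-α) * h1R + h2R
    have hx0 : x ≠ 0 := by
      intro h
      rw [h, zero_mul, zero_add] at hxq
      rcases le_or_gt y 0 with hy0 | hy0
      · have := mul_nonpos_of_nonpos_of_nonneg hy0 (by linarith : (0:ℤ) ≤ q ((K : ℤ) + 1))
        linarith
      · have : 0 ≤ (y - 1) * q ((K : ℤ) + 1) :=
          mul_nonneg (by linarith) (by linarith)
        nlinarith
    have h1x : (1 : ℝ) ≤ |(x : ℝ)| := by exact_mod_cast Int.one_le_abs hx0
    rcases eq_or_ne y 0 with hy0 | hy0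
    · rw [hy0] at hrepr
      push_cast at hrepr
      rw [hrepr]
      simp only [zero_mul, add_zero]
      rw [abs_mul]
      nlinarith [abs_nonneg (D (K : ℤ))]
    · have hxy : x * y < 0 := by
        rcases lt_trichotomy x 0 with hxn | hxz | hxp2
        · rcases lt_trichotomy y 0 with hyn | hyz | hyp
          · exfalso
            have h1 : (x + 1) * q (K : ℤ) ≤ 0 :=
              mul_nonpos_of_nonpos_of_nonneg (by linarith) (by linarith)
            have h2 : (y + 1) * q ((K : ℤ) + 1) ≤ 0 :=
              mul_nonpos_of_nonpos_of_nonneg (by linarith) (by linarith)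
            nlinarith
          · exact absurd hyz hy0
          · exact mul_neg_of_neg_of_pos hxn hyp
        · exact absurd hxz hx0
        · rcases lt_trichotomy y 0 with hyn | hyz | hyp
          · exact mul_neg_of_pos_of_neg hxp2 hyn
          · exact absurd hyz hy0
          · exfalso
            have h1 : 0 ≤ (x - 1) * q (K : ℤ) :=
              mul_nonneg (by linarith) (by linarith)
            have h2 : 0 ≤ (y - 1) * q ((K : ℤ) + 1) :=
              mul_nonneg (by linarith) (by linarith)
            nlinarith
      have hxyR : (x : ℝ) * (y : ℝ) < 0 := by exact_mod_cast hxy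
      have hsame : 0 ≤ ((x : ℝ) * D (K : ℤ)) * ((y : ℝ) * D ((K : ℤ) + 1)) := by
        have h := mul_pos_of_neg_of_neg hxyR hDD
        nlinarith [h]
      rw [hrepr]
      set u := (x : ℝ) * D (K : ℤ) with hu
      set w := (y : ℝ) * D ((K : ℤ) + 1) with hw
      have habs2 : |u| ≤ |u + w| := by
        have hsq : Real.sqrt (u ^ 2) ≤ Real.sqrt ((u + w) ^ 2) :=
          Real.sqrt_le_sqrt (by nlinarith)
        rwa [Real.sqrt_sq_eq_abs, Real.sqrt_sq_eq_abs] at hsq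
      have hDu : |D (K : ℤ)| ≤ |u| := by
        rw [hu, abs_mul]
        nlinarith [abs_nonneg (D (K : ℤ))]
      linarith

  set vv : ℕ → ℝ := fun n => Int.fract ((n : ℝ) * α - γ) with hv
  set δ := |D (K : ℤ)| with hδdef
  have hδpos : 0 < δ := abs_pos.2 hDKne
  have hsepkey : ∀ n m : ℕ, m < n → n ≤ N → δ ≤ |vv n - vv m| := by
    intro n m hmn hnN
    have hveq : vv n - vv m = ((((n : ℤ) - m) : ℤ) : ℝ) * α -
        (((⌊(n : ℝ) * α - γ⌋ - ⌊(m : ℝ) * α - γ⌋) : ℤ) : ℝ) := by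
      simp only [hv, Int.fract]
      push_cast
      ring
    rw [hveq]
    apply hbest
    · omega
    · have h1 : (n : ℤ) ≤ (N : ℤ) := by exact_mod_cast hnN
      omega
  have hsep : ∀ n ∈ Finset.range (N + 1), ∀ m ∈ Finset.range (N + 1),
      n ≠ m → δ ≤ |vv n - vv m| := by
    intro n hn m hm hne
    rw [Finset.mem_range] at hn hm
    rcases lt_or_gt_of_ne hne with h | h
    · rw [abs_sub_comm]; exact hsepkey m n h (by omega)
    · exact hsepkey n m h (by omega)
  have hnn : ∀ n ∈ Finset.range (N + 1), 0 ≤ vv n := fun n _ => Int.fract_nonneg _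
  have hrank := rank_mul_le hδpos hsep hnn
  have hvinj : ∀ n ∈ Finset.range (N + 1), ∀ m ∈ Finset.range (N + 1),
      n ≠ m → vv n ≠ vv m := by
    intro n hn m hm hne heq
    have := hsep n hn m hm hne
    rw [heq, sub_self, abs_zero] at this
    linarith
  set r : ℕ → ℕ := fun n => ((Finset.range (N + 1)).filter (fun m => vv m < vv n)).card
    with hrdef
  have hrinj : ∀ n ∈ Finset.range (N + 1), ∀ m ∈ Finset.range (N + 1),
      vv n < vv m → r n < r m := by
    intro n hn m hm hlt
    apply Finset.card_lt_card
    rw [Finset.ssubset_def]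
    constructor
    · intro l hl
      obtain ⟨hl1, hl2⟩ := Finset.mem_filter.mp hl
      exact Finset.mem_filter.2 ⟨hl1, lt_trans hl2 hlt⟩
    · intro hsub
      have hmem : n ∈ (Finset.range (N + 1)).filter (fun l => vv l < vv n) :=
        hsub (Finset.mem_filter.2 ⟨hn, hlt⟩)
      exact absurd (Finset.mem_filter.mp hmem).2 (lt_irrefl _)

  have hn'mem : n' ∈ Finset.range (N + 1) := Finset.mem_range.2 (by omega)
  have hrpos : ∀ n ∈ (Finset.range (N + 1)).erase n', 1 ≤ r n := by
    intro n hnE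
    obtain ⟨hne, hn⟩ := Finset.mem_erase.mp hnE
    have hlt : vv n' < vv n :=
      lt_of_le_of_ne (hmin n (by have := Finset.mem_range.mp hn; omega)) (hvinj n' hn'mem n hn (Ne.symm hne))
    exact Finset.card_pos.2 ⟨n', Finset.mem_filter.2 ⟨hn'mem, hlt⟩⟩
  have hrle : ∀ n ∈ Finset.range (N + 1), r n ≤ N := by
    intro n hn
    have hsub : (Finset.range (N + 1)).filter (fun m => vv m < vv n)
        ⊆ (Finset.range (N + 1)).erase n := by
      intro l hl
      obtain ⟨hl1, hl2⟩ := Finset.mem_filter.mp hl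
      rw [Finset.mem_erase]
      refine ⟨?_, hl1⟩
      rintro rfl; exact absurd hl2 (lt_irrefl _)
    have hcard := Finset.card_le_card hsub
    rwa [Finset.card_erase_of_mem hn, Finset.card_range] at hcard
  have hb0 : (0 : ℝ) ≤ b := by linarith
  have hζ : Summable (fun j : ℕ => 1 / ((j : ℝ) + 1) ^ b) := by
    have h2 := (Real.summable_one_div_nat_rpow (p := b)).2 hb
    exact_mod_cast (summable_nat_add_iff 1).2 h2
  have hζnn : 0 ≤ ∑' j : ℕ, 1 / ((j : ℝ) + 1) ^ b := tsum_nonneg (fun j => by positivity)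
  have hQ : (1 : ℝ) ≤ (q ((K : ℤ) + 1) : ℝ) := by exact_mod_cast hqK1pos
  have hdetR : (q ((K : ℤ) + 1) : ℝ) * D (K : ℤ) - (q (K : ℤ) : ℝ) * D ((K : ℤ) + 1)
      = (-1 : ℝ) ^ K := by
    rw [hD, hD]
    have hcast : ((p (K : ℤ) : ℝ) * (q ((K : ℤ) + 1) : ℝ)
        - (p ((K : ℤ) + 1) : ℝ) * (q (K : ℤ) : ℝ)) = ((-1 : ℝ)) ^ (K + 1) := by
      exact_mod_cast congrArg (fun z : ℤ => (z : ℝ)) hdetK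
    linear_combination -hcast
  have hδle : 1 ≤ 2 * (q ((K : ℤ) + 1) : ℝ) * δ := by
    have h1 : |(-1 : ℝ) ^ K| = 1 := by rw [abs_pow, abs_neg, abs_one, one_pow]
    have hqK1R0 : (0:ℝ) ≤ (q ((K : ℤ) + 1) : ℝ) := by linarith
    have hqKR1 : (1:ℝ) ≤ (q (K : ℤ) : ℝ) := by exact_mod_cast hqKpos
    have hqKR0 : (0:ℝ) ≤ (q (K : ℤ) : ℝ) := by linarith
    have h2 : |(q ((K : ℤ) + 1) : ℝ) * D (K : ℤ) - (q (K : ℤ) : ℝ) * D ((K : ℤ) + 1)|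
        ≤ (q ((K : ℤ) + 1) : ℝ) * δ + (q (K : ℤ) : ℝ) * |D ((K : ℤ) + 1)| := by
      calc |(q ((K : ℤ) + 1) : ℝ) * D (K : ℤ) - (q (K : ℤ) : ℝ) * D ((K : ℤ) + 1)|
          ≤ |(q ((K : ℤ) + 1) : ℝ) * D (K : ℤ)| + |(q (K : ℤ) : ℝ) * D ((K : ℤ) + 1)| :=
            abs_sub _ _
        _ = (q ((K : ℤ) + 1) : ℝ) * δ + (q (K : ℤ) : ℝ) * |D ((K : ℤ) + 1)| := by
            rw [abs_mul, abs_mul, abs_of_nonneg hqK1R0, abs_of_nonneg hqKR0]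
    have hqR : (q (K : ℤ) : ℝ) ≤ (q ((K : ℤ) + 1) : ℝ) := by exact_mod_cast hqK1
    have hqRpos : (0 : ℝ) ≤ (q (K : ℤ) : ℝ) := by
      have : (1 : ℝ) ≤ (q (K : ℤ) : ℝ) := by exact_mod_cast hqKpos
      linarith
    have h3 : (q (K : ℤ) : ℝ) * |D ((K : ℤ) + 1)| ≤ (q ((K : ℤ) + 1) : ℝ) * δ :=
      mul_le_mul hqR hDabs (abs_nonneg _) (by linarith)
    rw [hdetR, h1] at h2
    linarith
  -- final chain
  have hmain : ∑ n ∈ (Finset.range (N + 1)).erase n', 1 / vv n ^ b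
      ≤ 2 ^ b * (∑' j : ℕ, 1 / ((j : ℝ) + 1) ^ b) * (q ((K : ℤ) + 1) : ℝ) ^ b := by
    have hstep1 : ∀ n ∈ (Finset.range (N + 1)).erase n',
        1 / vv n ^ b ≤ 1 / ((r n : ℝ) * δ) ^ b := by
      intro n hnE
      have h1 : (1 : ℝ) ≤ (r n : ℝ) := by exact_mod_cast hrpos n hnE
      have hmem := Finset.mem_of_mem_erase hnE
      have h2 : (r n : ℝ) * δ ≤ vv n := hrank n hmem
      have hpos : 0 < (r n : ℝ) * δ := by nlinarith
      apply one_div_le_one_div_of_le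
      · exact Real.rpow_pos_of_pos hpos b
      · exact Real.rpow_le_rpow hpos.le h2 hb0
    have hinjOn : ∀ n ∈ (Finset.range (N + 1)).erase n', ∀ m ∈ (Finset.range (N + 1)).erase n',
        r n = r m → n = m := by
      intro n hn m hm heq
      by_contra hne
      have hn2 := Finset.mem_of_mem_erase hn
      have hm2 := Finset.mem_of_mem_erase hm
      rcases lt_or_gt_of_ne (hvinj n hn2 m hm2 hne) with h | h
      · exact absurd heq (Nat.ne_of_lt (hrinj n hn2 m hm2 h))
      · exact absurd heq.symm (Nat.ne_of_lt (hrinj m hm2 n hn2 h))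
    have himg : ∑ n ∈ (Finset.range (N + 1)).erase n', 1 / ((r n : ℝ) * δ) ^ b
        = ∑ i ∈ ((Finset.range (N + 1)).erase n').image r, 1 / ((i : ℝ) * δ) ^ b := by
      rw [Finset.sum_image hinjOn]
    have hsub2 : ((Finset.range (N + 1)).erase n').image r ⊆ Finset.Icc 1 N := by
      intro i hi
      obtain ⟨n, hnE, rfl⟩ := Finset.mem_image.mp hi
      exact Finset.mem_Icc.2 ⟨hrpos n hnE, hrle n (Finset.mem_of_mem_erase hnE)⟩
    have hchain2 : ∑ i ∈ ((Finset.range (N + 1)).erase n').image r, 1 / ((i : ℝ) * δ) ^ b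
        ≤ ∑ i ∈ Finset.Icc 1 N, 1 / ((i : ℝ) * δ) ^ b :=
      Finset.sum_le_sum_of_subset_of_nonneg hsub2 (fun i _ _ => by positivity)
    have hIcc : ∑ i ∈ Finset.Icc 1 N, 1 / ((i : ℝ) * δ) ^ b
        = ∑ i ∈ Finset.range N, 1 / (((i : ℝ) + 1) * δ) ^ b := by
      rw [← Finset.Ico_add_one_right_eq_Icc, Finset.sum_Ico_eq_sum_range]
      apply Finset.sum_congr (by norm_num)
      intro i _
      push_cast
      ring_nf
    have hterm : ∀ i : ℕ, 1 / (((i : ℝ) + 1) * δ) ^ b = (1 / δ ^ b) * (1 / ((i : ℝ) + 1) ^ b) := by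
      intro i
      rw [Real.mul_rpow (by positivity) hδpos.le]
      field_simp
    have hsum3 : ∑ i ∈ Finset.range N, 1 / (((i : ℝ) + 1) * δ) ^ b
        = (1 / δ ^ b) * ∑ i ∈ Finset.range N, 1 / ((i : ℝ) + 1) ^ b := by
      rw [Finset.mul_sum]
      exact Finset.sum_congr rfl (fun i _ => hterm i)
    have hfin : ∑ i ∈ Finset.range N, 1 / ((i : ℝ) + 1) ^ b ≤ ∑' j : ℕ, 1 / ((j : ℝ) + 1) ^ b :=
      Summable.sum_le_tsum _ (fun i _ => by positivity) hζ
    have hδinv : 1 / δ ^ b ≤ 2 ^ b * (q ((K : ℤ) + 1) : ℝ) ^ b := by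
      have hd1 : 1 / δ ≤ 2 * (q ((K : ℤ) + 1) : ℝ) := by
        rw [div_le_iff₀ hδpos]
        linarith
      have : (1 / δ) ^ b ≤ (2 * (q ((K : ℤ) + 1) : ℝ)) ^ b :=
        Real.rpow_le_rpow (by positivity) hd1 hb0
      rwa [Real.mul_rpow (by norm_num) (by linarith), one_div, Real.inv_rpow hδpos.le, ← one_div] at this
    have hpos1 : (0:ℝ) ≤ 1 / δ ^ b := by positivity
    calc ∑ n ∈ (Finset.range (N + 1)).erase n', 1 / vv n ^ b
        ≤ ∑ n ∈ (Finset.range (N + 1)).erase n', 1 / ((r n : ℝ) * δ) ^ b :=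
          Finset.sum_le_sum hstep1
      _ = ∑ i ∈ ((Finset.range (N + 1)).erase n').image r, 1 / ((i : ℝ) * δ) ^ b := himg
      _ ≤ ∑ i ∈ Finset.Icc 1 N, 1 / ((i : ℝ) * δ) ^ b := hchain2
      _ = (1 / δ ^ b) * ∑ i ∈ Finset.range N, 1 / ((i : ℝ) + 1) ^ b := by rw [hIcc, hsum3]
      _ ≤ (1 / δ ^ b) * (∑' j : ℕ, 1 / ((j : ℝ) + 1) ^ b) :=
          mul_le_mul_of_nonneg_left hfin hpos1
      _ ≤ (2 ^ b * (q ((K : ℤ) + 1) : ℝ) ^ b) * (∑' j : ℕ, 1 / ((j : ℝ) + 1) ^ b) :=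
          mul_le_mul_of_nonneg_right hδinv hζnn
      _ = 2 ^ b * (∑' j : ℕ, 1 / ((j : ℝ) + 1) ^ b) * (q ((K : ℤ) + 1) : ℝ) ^ b := by ring
  have hfirst : (0:ℝ) ≤ 2 ^ (1 + b) * (∑' j : ℕ, 1 / ((j : ℝ) + 1) ^ b) * (N : ℝ) ^ b := by
    have h2 : (0:ℝ) ≤ (2:ℝ) ^ (1 + b) := Real.rpow_nonneg (by norm_num) _
    have h3 : (0:ℝ) ≤ (N : ℝ) ^ b := Real.rpow_nonneg (Nat.cast_nonneg N) _
    exact mul_nonneg (mul_nonneg h2 hζnn) h3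
  calc ∑ n ∈ (Finset.range (N + 1)).erase n', 1 / vv n ^ b
      ≤ 2 ^ b * (∑' j : ℕ, 1 / ((j : ℝ) + 1) ^ b) * (q ((K : ℤ) + 1) : ℝ) ^ b := hmain
    _ ≤ 2 ^ (1 + b) * (∑' j : ℕ, 1 / ((j : ℝ) + 1) ^ b) * (N : ℝ) ^ b +
        2 ^ b * (∑' j : ℕ, 1 / ((j : ℝ) + 1) ^ b) * (q ((K : ℤ) + 1) : ℝ) ^ b := by linarith
end
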